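/- arXiv:2205.13245 — 10 statements merged into one kernel-verified Lean document; each statement's English description precedes it below -/
import Mathlib

section
/- Let m ≤ n and let A_1, …, A_L be real symmetric m×m matrices. The family {A_1,…,A_L} is T_{m,n}-SDO if and only if it is SDO. -/
open Matrix Filter Topology

private lemma sdo_aux_detfix (m L : ℕ) (A : Fin L → Matrix (Fin m) (Fin m) ℝ)
    (Q : Matrix (Fin m) (Fin m) ℝ) (hQ : Qᵀ * Q = 1) (hD : ∀ i, (Qᵀ * A i * Q).IsDiag) :
    ∃ P : Matrix (Fin m) (Fin m) ℝ, Pᵀ * P = 1 ∧ P.det = 1 ∧ ∀ i, (Pᵀ * A i * P).IsDiag := by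
  classical
  have hdet2 : Q.det * Q.det = 1 := by
    have := congrArg Matrix.det hQ
    rwa [Matrix.det_mul, Matrix.det_transpose, Matrix.det_one] at this
  rcases mul_self_eq_one_iff.mp hdet2 with h1 | h1
  · exact ⟨Q, hQ, h1, hD⟩
  · have hm : m ≠ 0 := by
      intro hm
      subst hm
      have : Q.det = 1 := Matrix.det_fin_zero
      rw [this] at h1
      norm_num at h1
    set i0 : Fin m := ⟨0, Nat.pos_of_ne_zero hm⟩ with hi0
    set d : Fin m → ℝ := fun j => if j = i0 then -1 else 1 with hd
    set D : Matrix (Fin m) (Fin m) ℝ := Matrix.diagonal d with hDdef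
    have hDT : Dᵀ = D := Matrix.diagonal_transpose d
    have hDD : D * D = 1 := by
      rw [hDdef, Matrix.diagonal_mul_diagonal]
      have : (fun j => d j * d j) = fun _ => (1 : ℝ) := by
        funext j
        rw [hd]
        by_cases h : j = i0 <;> simp [h]
      rw [this, Matrix.diagonal_one]
    have hdetD : D.det = -1 := by
      rw [hDdef, Matrix.det_diagonal, hd]
      rw [Finset.prod_ite_eq' Finset.univ i0 (fun _ => (-1 : ℝ))]
      simp
    refine ⟨Q * D, ?_, ?_, ?_⟩
    · rw [Matrix.transpose_mul, hDT, mul_assoc, ← mul_assoc Qᵀ, hQ, one_mul, hDD]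
    · rw [Matrix.det_mul, h1, hdetD]; norm_num
    · intro i
      have key : (Q * D)ᵀ * A i * (Q * D) = D * (Qᵀ * A i * Q) * D := by
        rw [Matrix.transpose_mul, hDT]
        simp only [mul_assoc]
      rw [key]
      intro a c hac
      have e1 : (D * (Qᵀ * A i * Q) * D) a c = d a * (Qᵀ * A i * Q) a c * d c := by
        rw [hDdef, Matrix.mul_diagonal, Matrix.diagonal_mul]
      rw [e1, hD i hac, mul_zero, zero_mul]

private lemma sdo_aux_fwd (m L : ℕ) (A : Fin L → Matrix (Fin m) (Fin m) ℝ)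
    (hA : ∀ i, (A i).IsSymm) (hcomm : ∀ i j, A i * A j = A j * A i) :
    ∃ Q : Matrix (Fin m) (Fin m) ℝ, Qᵀ * Q = 1 ∧ ∀ i, (Qᵀ * A i * Q).IsDiag := by
  classical
  set T : Fin L → (EuclideanSpace ℝ (Fin m) →ₗ[ℝ] EuclideanSpace ℝ (Fin m)) :=
    fun i => Matrix.toEuclideanLin (A i) with hT
  have hHerm : ∀ i, (A i).IsHermitian := by
    intro i
    ext a b
    simp only [conjTranspose_apply, star_trivial]
    exact (hA i).apply a b
  have hTsymm : ∀ i, (T i).IsSymmetric := fun i =>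
    Matrix.isHermitian_iff_isSymmetric.mp (hHerm i)
  have hmul : ∀ (M N : Matrix (Fin m) (Fin m) ℝ),
      Matrix.toEuclideanLin (M * N) = (Matrix.toEuclideanLin M) * (Matrix.toEuclideanLin N) := by
    intro M N
    ext x
    simp [Matrix.toEuclideanLin_apply, Matrix.mulVec_mulVec, Module.End.mul_apply]
  have hTcomm : Pairwise (Function.onFun Commute T) := by
    intro i j _
    show T i * T j = T j * T i
    rw [hT]
    simp only
    rw [← hmul, ← hmul, hcomm]
  set V : (Fin L → ℝ) → Submodule ℝ (EuclideanSpace ℝ (Fin m)) :=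
    fun χ => ⨅ j, Module.End.eigenspace (T j) (χ j) with hV
  have hint : DirectSum.IsInternal V :=
    LinearMap.IsSymmetric.LinearMap.IsSymmetric.directSum_isInternal_of_pairwise_commute
      hTsymm hTcomm
  have hofam := LinearMap.IsSymmetric.orthogonalFamily_iInf_eigenspaces hTsymm
  have hindep := hint.submodule_iSupIndep
  have hfin : {χ | V χ ≠ ⊥}.Finite := Submodule.finite_ne_bot_of_iSupIndep hindep
  have : Fintype {χ // V χ ≠ ⊥} := hfin.fintype
  have hint' : DirectSum.IsInternal (fun i : {χ // V χ ≠ ⊥} => V i.1) := by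
    rw [DirectSum.isInternal_submodule_iff_iSupIndep_and_iSup_eq_top]
    constructor
    · exact hindep.comp Subtype.val_injective
    · have h1 : ⨆ i : {χ // V χ ≠ ⊥}, V i.1 = ⨆ χ, V χ := by
        apply le_antisymm
        · exact iSup_le fun i => le_iSup V i.1
        · refine iSup_le fun χ => ?_
          by_cases h : V χ = ⊥
          · simp [h]
          · exact le_iSup (fun i : {χ // V χ ≠ ⊥} => V i.1) ⟨χ, h⟩
      rw [h1]
      exact hint.submodule_iSup_eq_top
  have hofam' : OrthogonalFamily ℝ (fun i : {χ // V χ ≠ ⊥} => V i.1)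
      (fun i => (V i.1).subtypeₗᵢ) := fun i j hij => hofam fun h => hij (Subtype.ext h)
  have hrank : Module.finrank ℝ (EuclideanSpace ℝ (Fin m)) = m := by
    simp [finrank_euclideanSpace]
  set b := hint'.subordinateOrthonormalBasis hrank hofam' with hb
  set α : Fin m → (Fin L → ℝ) :=
    fun a => (hint'.subordinateOrthonormalBasisIndex hrank a hofam').1 with hα
  have hmem : ∀ a, b a ∈ V (α a) :=
    fun a => hint'.subordinateOrthonormalBasis_subordinate hrank a hofam'
  have heig : ∀ a j, (T j) (b a) = α a j • b a := by
    intro a j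
    have h1 := (Submodule.mem_iInf _).mp (hmem a) j
    exact Module.End.mem_eigenspace_iff.mp h1
  have hcoord : ∀ j a k, (∑ l, A j k l * b a l) = α a j * b a k := by
    intro j a k
    have h2 := congrFun (congrArg (WithLp.equiv 2 (Fin m → ℝ)) (heig a j)) k
    simpa [hT, Matrix.toEuclideanLin_apply, Matrix.mulVec, dotProduct] using h2
  have hsum : ∀ a c, (∑ k, b a k * b c k) = if a = c then 1 else 0 := by
    intro a c
    have h3 := orthonormal_iff_ite.mp b.orthonormal a c
    simpa [PiLp.inner_apply, RCLike.inner_apply, mul_comm] using h3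
  refine ⟨Matrix.of fun i a => b a i, ?_, ?_⟩
  · ext a c
    simp only [mul_apply, transpose_apply, Matrix.of_apply, Matrix.one_apply]
    rw [hsum a c]
  · intro j a c hac
    have expand : (Matrix.of fun i a => b a i)ᵀ * A j * (Matrix.of fun i a => b a i) =
        (Matrix.of fun i a => b a i)ᵀ * (A j * Matrix.of fun i a => b a i) := by
      rw [Matrix.mul_assoc]
    rw [expand]
    simp only [mul_apply, transpose_apply, Matrix.of_apply]
    have hc : ∀ k, (∑ l, A j k l * b c l) = α c j * b c k := hcoord j c
    calc ∑ k, b a k * ∑ l, A j k l * b c l = ∑ k, b a k * (α c j * b c k) := by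
          apply Finset.sum_congr rfl; intro k _; rw [hc k]
    _ = α c j * ∑ k, b a k * b c k := by
          rw [Finset.mul_sum]; apply Finset.sum_congr rfl; intro k _; ring
    _ = 0 := by rw [hsum a c]; simp [hac]

theorem stmt_0 (m n L : ℕ) (hmn : m ≤ n)
    (A : Fin L → Matrix (Fin m) (Fin m) ℝ) (hA : ∀ i, (A i).IsSymm) :
    (∃ P : Matrix (Fin n) (Fin m) ℝ, Pᵀ * P = 1 ∧ ∀ i, (P * A i * Pᵀ).IsDiag) ↔
    (∃ P : Matrix (Fin m) (Fin m) ℝ, Pᵀ * P = 1 ∧ P.det = 1 ∧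
      ∀ i, (Pᵀ * A i * P).IsDiag) := by
  classical
  constructor
  · rintro ⟨P, hP, hDiag⟩
    -- the A i pairwise commute
    have hback : ∀ i, A i = Pᵀ * (P * A i * Pᵀ) * P := by
      intro i
      calc A i = (Pᵀ * P) * A i * (Pᵀ * P) := by rw [hP, Matrix.one_mul, Matrix.mul_one]
      _ = Pᵀ * (P * A i * Pᵀ) * P := by simp only [Matrix.mul_assoc]
    have habsorb : ∀ i, (P * A i * Pᵀ) * (P * Pᵀ) = P * A i * Pᵀ := by
      intro i
      calc (P * A i * Pᵀ) * (P * Pᵀ) = P * A i * ((Pᵀ * P) * Pᵀ) := by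
            simp only [Matrix.mul_assoc]
      _ = P * A i * Pᵀ := by rw [hP, Matrix.one_mul]
    have hdcomm : ∀ (k : ℕ) (X Y : Matrix (Fin k) (Fin k) ℝ), X.IsDiag → Y.IsDiag →
        X * Y = Y * X := by
      intro k X Y hX hY
      ext a b
      simp only [mul_apply]
      apply Finset.sum_congr rfl
      intro c _
      by_cases hac : a = c
      · by_cases hcb : c = b
        · subst hac; subst hcb; ring
        · rw [hY hcb, hX hcb, mul_zero, mul_zero]
      · rw [hX hac, hY hac, zero_mul, zero_mul]
    have hcomm : ∀ i j, A i * A j = A j * A i := by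
      intro i j
      have e : ∀ i j, A i * A j = Pᵀ * ((P * A i * Pᵀ) * (P * A j * Pᵀ)) * P := by
        intro i j
        conv_lhs => rw [hback i, hback j]
        calc Pᵀ * (P * A i * Pᵀ) * P * (Pᵀ * (P * A j * Pᵀ) * P)
            = Pᵀ * ((P * A i * Pᵀ) * (P * Pᵀ) * (P * A j * Pᵀ)) * P := by
              simp only [Matrix.mul_assoc]
        _ = Pᵀ * ((P * A i * Pᵀ) * (P * A j * Pᵀ)) * P := by rw [habsorb]
      rw [e i j, e j i, hdcomm n _ _ (hDiag i) (hDiag j)]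
    obtain ⟨Q, hQ, hQD⟩ := sdo_aux_fwd m L A hA hcomm
    exact sdo_aux_detfix m L A Q hQ hQD
  · rintro ⟨Q, hQ, _, hD⟩
    set E : Matrix (Fin n) (Fin m) ℝ :=
      Matrix.of fun i j => if (i : ℕ) = (j : ℕ) then 1 else 0 with hE
    have hQQ : Q * Qᵀ = 1 := mul_eq_one_comm.mp hQ
    have hEE : Eᵀ * E = 1 := by
      ext j k
      simp only [mul_apply, transpose_apply, hE, Matrix.of_apply]
      rw [Finset.sum_eq_single (Fin.castLE hmn j)]
      · simp only [Fin.coe_castLE]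
        by_cases h : j = k
        · subst h; simp
        · simp [Matrix.one_apply, h, show ¬(j:ℕ)=(k:ℕ) from fun hh => h (Fin.ext hh)]
      · intro i _ hi
        have : ¬ (i : ℕ) = (j : ℕ) := fun hij => hi (Fin.ext (by simp [hij]))
        simp [this]
      · simp
    refine ⟨E * Qᵀ, ?_, ?_⟩
    · rw [transpose_mul, transpose_transpose, Matrix.mul_assoc Q Eᵀ, ← Matrix.mul_assoc Eᵀ E,
        hEE, Matrix.one_mul, hQQ]
    · intro i
      have hDi := hD i
      set D := Qᵀ * A i * Q with hDdef
      have key : E * Qᵀ * A i * (E * Qᵀ)ᵀ = E * D * Eᵀ := by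
        rw [transpose_mul, transpose_transpose, hDdef]
        simp only [Matrix.mul_assoc]
      rw [key]
      intro a b hab
      simp only [mul_apply, hE, Matrix.of_apply, transpose_apply]
      apply Finset.sum_eq_zero
      intro k _
      rw [Finset.sum_mul]
      apply Finset.sum_eq_zero
      intro j _
      by_cases h1 : (a : ℕ) = (j : ℕ)
      · by_cases h2 : (b : ℕ) = (k : ℕ)
        · have hjk : j ≠ k := fun h => hab (Fin.ext (by rw [h1, h, ← h2]))
          rw [hDi hjk]
          simp
        · simp [h2]
      · simp [h1]
end

section
/- Let m ≤ n and let A_1, …, A_L be real symmetric m×m matrices. The family {A_1,…,A_L} is T_{m,n}-SD if and only if it is SD. -/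
open Matrix Filter Topology

theorem stmt_1 (m n L : ℕ) (hmn : m ≤ n)
    (A : Fin L → Matrix (Fin m) (Fin m) ℝ) (hA : ∀ i, (A i).IsSymm) :
    (∃ P : Matrix (Fin n) (Fin m) ℝ, (Pᵀ * P).det = 1 ∧ ∀ i, (P * A i * Pᵀ).IsDiag) ↔
    (∃ P : Matrix (Fin m) (Fin m) ℝ, P.det = 1 ∧ ∀ i, (Pᵀ * A i * P).IsDiag) := by
  constructor
  · rintro ⟨Q, hQdet, hQdiag⟩
    rcases Nat.eq_zero_or_pos m with hm | hm
    · subst hm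
      exact ⟨1, by simp [Matrix.det_fin_zero], fun i => by intro j k _; exact j.elim0⟩
    haveI : NeZero m := ⟨hm.ne'⟩
    -- rows of Q span everything
    set v : Fin n → (Fin m → ℝ) := fun a => Q a with hv
    have hspan : Submodule.span ℝ (Set.range v) = ⊤ := by
      rw [show v = Q.row from rfl, ← range_vecMulLinear, LinearMap.range_eq_top]
      intro y
      refine ⟨((y ᵥ* (Qᵀ * Q)⁻¹) ᵥ* Qᵀ), ?_⟩
      have h1 : ((y ᵥ* (Qᵀ * Q)⁻¹) ᵥ* Qᵀ) ᵥ* Q = y ᵥ* ((Qᵀ * Q)⁻¹ * (Qᵀ * Q)) := by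
        rw [Matrix.vecMul_vecMul, Matrix.vecMul_vecMul]
      show ((y ᵥ* (Qᵀ * Q)⁻¹) ᵥ* Qᵀ) ᵥ* Q = y
      rw [h1, Matrix.nonsing_inv_mul _ (by rw [hQdet]; exact isUnit_one), Matrix.vecMul_one]
    obtain ⟨b, hbsub, hbspan, hbli⟩ := exists_linearIndependent ℝ (Set.range v)
    rw [hspan] at hbspan
    have hbfin : b.Finite := (Set.finite_range v).subset hbsub
    haveI : Fintype b := hbfin.fintype
    have B : Module.Basis b ℝ (Fin m → ℝ) := Module.Basis.mk hbli (by rw [Subtype.range_coe]; exact hbspan.ge)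
    have hcard : Fintype.card b = m := by
      have := Module.finrank_eq_card_basis B
      rw [Module.finrank_fin_fun] at this; exact this.symm
    let e : Fin m ≃ b := (Fintype.equivFinOfCardEq hcard).symm
    have hg : ∀ x : b, ∃ a : Fin n, v a = (x : Fin m → ℝ) := fun x => hbsub x.2
    choose g hgv using hg
    let f : Fin m → Fin n := fun j => g (e j)
    have hfval : ∀ j, v (f j) = (e j : Fin m → ℝ) := fun j => hgv (e j)
    have hfinj : Function.Injective f := by
      intro j k h
      have : (e j : Fin m → ℝ) = (e k : Fin m → ℝ) := by
        rw [← hfval j, ← hfval k, h]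
      exact e.injective (Subtype.ext this)
    set M : Matrix (Fin m) (Fin m) ℝ := Q.submatrix f id with hM
    have hMrows : LinearIndependent ℝ (fun j => M j) := by
      have h2 : (fun j => M j) = (fun x : b => (x : Fin m → ℝ)) ∘ e := by
        funext j
        show v (f j) = _
        rw [hfval]; rfl
      rw [h2]
      exact hbli.comp e e.injective
    have hMdet : M.det ≠ 0 := by
      have := Matrix.linearIndependent_rows_iff_isUnit.mp hMrows
      rw [Matrix.isUnit_iff_isUnit_det, isUnit_iff_ne_zero] at this
      exact this
    set c : ℝ := M.det with hc
    set d : Matrix (Fin m) (Fin m) ℝ := Matrix.diagonal (fun j => if j = 0 then c⁻¹ else 1)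
      with hd
    refine ⟨Mᵀ * d, ?_, ?_⟩
    · rw [Matrix.det_mul, Matrix.det_transpose, Matrix.det_diagonal]
      rw [Finset.prod_ite_eq' Finset.univ (0 : Fin m) (fun _ => c⁻¹)]
      simp [mul_inv_cancel₀ hMdet]
      exact mul_inv_cancel₀ hMdet
    · intro i
      have key : M * A i * Mᵀ = (Q * A i * Qᵀ).submatrix f f := by
        ext j k
        rfl
      have hPt : (Mᵀ * d)ᵀ = d * M := by
        rw [Matrix.transpose_mul, Matrix.transpose_transpose, Matrix.diagonal_transpose]
      rw [hPt]
      have heq : d * M * A i * (Mᵀ * d) = d * (M * A i * Mᵀ) * d := by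
        noncomm_ring
      rw [heq, key]
      intro j k hjk
      have h0 : (Q * A i * Qᵀ) (f j) (f k) = 0 := hQdiag i (fun h => hjk (hfinj h))
      simp [hd, Matrix.mul_diagonal, Matrix.diagonal_mul, Matrix.submatrix_apply, h0]
  · rintro ⟨P, hPdet, hPdiag⟩
    set Q : Matrix (Fin n) (Fin m) ℝ :=
      Matrix.of (fun a j => if h : (a : ℕ) < m then P j ⟨a, h⟩ else 0) with hQ
    have hsum : ∀ (F : Fin n → ℝ), (∀ a : Fin n, ¬ ((a : ℕ) < m) → F a = 0) →
        ∑ a : Fin n, F a = ∑ i : Fin m, F (Fin.castLE hmn i) := by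
      intro F hF
      have hsm := Finset.sum_map Finset.univ (Fin.castLEEmb hmn) F
      simp only [Fin.castLEEmb_apply] at hsm
      rw [← hsm]
      refine (Finset.sum_subset (Finset.subset_univ _) ?_).symm
      intro a _ ha
      refine hF a fun hlt => ha ?_
      simp only [Finset.mem_map, Finset.mem_univ, Fin.castLEEmb_apply]
      exact ⟨⟨a, hlt⟩, trivial, by ext; rfl⟩
    refine ⟨Q, ?_, ?_⟩
    · have hQQ : Qᵀ * Q = P * Pᵀ := by
        ext j k
        rw [Matrix.mul_apply, Matrix.mul_apply]
        rw [hsum (fun a => Qᵀ j a * Q a k) (by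
          intro a ha
          simp [hQ, ha])]
        apply Finset.sum_congr rfl
        intro i _
        simp [hQ, Fin.castLE]
      rw [hQQ, Matrix.det_mul, Matrix.det_transpose, hPdet, mul_one]
    · intro i a b hab
      by_cases hb : (b : ℕ) < m
      · by_cases ha : (a : ℕ) < m
        · have hne : (⟨a, ha⟩ : Fin m) ≠ ⟨b, hb⟩ := by
            intro h
            have hval := congrArg Fin.val h
            exact hab (Fin.ext hval)
          have h0 : (Pᵀ * A i * P) ⟨a, ha⟩ ⟨b, hb⟩ = 0 := hPdiag i hne
          rw [Matrix.mul_apply] at h0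
          rw [Matrix.mul_apply, ← h0]
          apply Finset.sum_congr rfl
          intro k _
          rw [Matrix.mul_apply, Matrix.mul_apply]
          congr 1
          · apply Finset.sum_congr rfl
            intro l _
            simp [hQ, ha]
          · simp [hQ, hb]
        · rw [Matrix.mul_apply]
          apply Finset.sum_eq_zero
          intro k _
          rw [Matrix.mul_apply]
          have hz : ∀ x : Fin m, Q a x = 0 := by intro x; simp [hQ, ha]
          simp [hz]
      · rw [Matrix.mul_apply]
        apply Finset.sum_eq_zero
        intro k _
        simp [hQ, hb]
end

section
/- Let A and B be real symmetric m×m matrices such that the pair {A, B} is singular, i.e., det(αA + βB) = 0 for all real numbers α, β. Then the pair {A, B} is TWSD-B. -/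
open Matrix Filter Topology RealInnerProductSpace

def TWSDB {ι : Type*} {m : ℕ} (A : ι → Matrix (Fin m) (Fin m) ℝ) : Prop :=
  ∃ P : ℕ → Matrix (Fin m) (Fin m) ℝ,
    (∀ k, (P k).det = 1) ∧
    ∃ D : ι → Matrix (Fin m) (Fin m) ℝ, (∀ i, (D i).IsDiag) ∧
      ∀ i, Tendsto (fun k => (P k)ᵀ * A i * P k) atTop (𝓝 (D i))

/-- From singularity of the pencil, extract a polynomial kernel vector's coefficients. -/
lemma exists_kernel_family {m : ℕ} (A B : Matrix (Fin m) (Fin m) ℝ)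
    (hsing : ∀ α β : ℝ, (α • A + β • B).det = 0) :
    ∃ v : ℕ → (Fin m → ℝ), (∃ j, v j ≠ 0) ∧ A *ᵥ v 0 = 0 ∧
      ∀ j, A *ᵥ v (j + 1) + B *ᵥ v j = 0 := by
  classical
  set Mp : Matrix (Fin m) (Fin m) (Polynomial ℝ) :=
    Matrix.of fun i j => Polynomial.C (A i j) + Polynomial.X * Polynomial.C (B i j) with hMpdef
  have hdet : Mp.det = 0 := by
    apply Polynomial.funext
    intro α
    rw [Polynomial.eval_zero]
    have hmap : Mp.map (Polynomial.evalRingHom α) = (1:ℝ) • A + α • B := by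
      ext i j
      simp [Mp]
      ring
    have h1 : Polynomial.eval α Mp.det = ((1:ℝ) • A + α • B).det := by
      rw [show Polynomial.eval α Mp.det = (Polynomial.evalRingHom α) Mp.det from rfl,
        RingHom.map_det, RingHom.mapMatrix_apply, hmap]
    rw [h1, hsing 1 α]
  obtain ⟨p, hp0, hp⟩ := Matrix.exists_mulVec_eq_zero_iff.mpr hdet
  have key : ∀ (i : Fin m) (n : ℕ),
      (∑ k, A i k * (p k).coeff n) + (∑ k, B i k * (if n = 0 then 0 else (p k).coeff (n-1))) = 0 := by
    intro i n
    have h2 : (∑ k, Mp i k * p k) = 0 := by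
      have := congrFun hp i
      simpa [Matrix.mulVec, dotProduct, Mp] using this
    have h3 : (∑ k, Mp i k * p k).coeff n = 0 := by rw [h2, Polynomial.coeff_zero]
    rw [Polynomial.finset_sum_coeff] at h3
    rw [← Finset.sum_add_distrib]
    refine Eq.trans (Finset.sum_congr rfl fun k _ => ?_) h3
    simp only [Mp, Matrix.of_apply, add_mul, Polynomial.coeff_add, Polynomial.coeff_C_mul]
    cases n with
    | zero =>
      rw [Polynomial.mul_coeff_zero]
      simp
    | succ n =>
      rw [mul_assoc, Polynomial.coeff_X_mul, Polynomial.coeff_C_mul]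
      simp
  refine ⟨fun j i => (p i).coeff j, ?_, ?_, ?_⟩
  · obtain ⟨i, hi⟩ : ∃ i, p i ≠ 0 := by
      by_contra h
      push_neg at h
      exact hp0 (funext h)
    exact ⟨(p i).natDegree, fun h => hi (Polynomial.leadingCoeff_eq_zero.mp (congrFun h i))⟩
  · funext i
    have := key i 0
    simpa [Matrix.mulVec, dotProduct] using this
  · intro j
    funext i
    have := key i (j+1)
    simpa [Matrix.mulVec, dotProduct] using this

/-- Symmetric matrices allow swapping in the quadratic form. -/
lemma symdot {m : ℕ} (M : Matrix (Fin m) (Fin m) ℝ) (hM : M.IsSymm) (x y : Fin m → ℝ) :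
    x ⬝ᵥ (M *ᵥ y) = y ⬝ᵥ (M *ᵥ x) := by
  rw [Matrix.dotProduct_mulVec, ← Matrix.mulVec_transpose, hM.eq, dotProduct_comm]

/-- The coefficient family is isotropic for both forms. -/
lemma isotropy {m : ℕ} (A B : Matrix (Fin m) (Fin m) ℝ) (hA : A.IsSymm) (hB : B.IsSymm)
    (v : ℕ → (Fin m → ℝ)) (h0 : A *ᵥ v 0 = 0)
    (hrec : ∀ j, A *ᵥ v (j + 1) + B *ᵥ v j = 0) :
    (∀ j k, v j ⬝ᵥ (A *ᵥ v k) = 0) ∧ (∀ j k, v j ⬝ᵥ (B *ᵥ v k) = 0) := by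
  have hBneg : ∀ j, B *ᵥ v j = -(A *ᵥ v (j+1)) := fun j =>
    eq_neg_of_add_eq_zero_right (hrec j)
  have bshift : ∀ i j, v (i+1) ⬝ᵥ (B *ᵥ v j) = v i ⬝ᵥ (B *ᵥ v (j+1)) := by
    intro i j
    rw [hBneg j, dotProduct_neg]
    rw [symdot B hB (v i) (v (j+1)), hBneg i, dotProduct_neg]
    rw [symdot A hA (v (i+1)) (v (j+1))]
  have b0 : ∀ n, v 0 ⬝ᵥ (B *ᵥ v n) = 0 := by
    intro n
    rw [hBneg n, dotProduct_neg, symdot A hA (v 0) (v (n+1)), h0, dotProduct_zero, neg_zero]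
  have ball : ∀ i j, v i ⬝ᵥ (B *ᵥ v j) = 0 := by
    intro i
    induction i with
    | zero => exact b0
    | succ i ih => intro j; rw [bshift i j]; exact ih (j+1)
  refine ⟨?_, ball⟩
  intro i k
  cases k with
  | zero => rw [h0, dotProduct_zero]
  | succ k =>
    have : A *ᵥ v (k+1) = -(B *ᵥ v k) := by rw [hBneg k, neg_neg]
    rw [this, dotProduct_neg, ball i k, neg_zero]

lemma twsdb_of_good_basis {m : ℕ} (A B Q : Matrix (Fin m) (Fin m) ℝ) (e : Fin m → ℝ)
    (hQ : Q.det = 1) (hsum : ∑ i, e i = 0)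
    (hz : ∀ i j, 0 ≤ e i + e j → (Qᵀ * A * Q) i j = 0 ∧ (Qᵀ * B * Q) i j = 0) :
    TWSDB ![A, B] := by
  classical
  set t : ℕ → ℝ := fun k => (k : ℝ) + 1 with ht
  have htpos : ∀ k, 0 < t k := fun k => by positivity
  have htop : Tendsto t atTop atTop :=
    tendsto_atTop_add_const_right _ 1 tendsto_natCast_atTop_atTop
  set D : ℕ → Matrix (Fin m) (Fin m) ℝ :=
    fun k => Matrix.diagonal (fun i => t k ^ (e i)) with hD
  have hDdet : ∀ k, (D k).det = 1 := by
    intro k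
    rw [hD, Matrix.det_diagonal]
    have : ∀ i, t k ^ (e i) = Real.exp (Real.log (t k) * e i) := fun i => by
      rw [Real.rpow_def_of_pos (htpos k), mul_comm]
    simp_rw [this]
    rw [← Real.exp_sum, ← Finset.mul_sum, hsum, mul_zero, Real.exp_zero]
  have main : ∀ M : Matrix (Fin m) (Fin m) ℝ,
      (∀ i j, 0 ≤ e i + e j → (Qᵀ * M * Q) i j = 0) →
      Tendsto (fun k => (Q * D k)ᵀ * M * (Q * D k)) atTop (𝓝 0) := by
    intro M hM
    refine tendsto_pi_nhds.mpr ?_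
    intro i
    rw [tendsto_pi_nhds]
    intro j
    have hentry : ∀ k, ((Q * D k)ᵀ * M * (Q * D k)) i j
        = t k ^ (e i) * (Qᵀ * M * Q) i j * t k ^ (e j) := by
      intro k
      have h1 : (Q * D k)ᵀ * M * (Q * D k) = D k * (Qᵀ * M * Q) * D k := by
        rw [Matrix.transpose_mul, hD, Matrix.diagonal_transpose]
        simp only [Matrix.mul_assoc]
      rw [h1, hD]
      rw [Matrix.mul_diagonal, Matrix.diagonal_mul]
    simp only [hentry]
    rcases le_or_gt 0 (e i + e j) with hle | hlt
    · simp only [hM i j hle, mul_zero, zero_mul]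
      exact tendsto_const_nhds
    · have h2 : Tendsto (fun k => t k ^ (e i + e j)) atTop (𝓝 0) := by
        have h3 := (tendsto_rpow_neg_atTop (by linarith : (0:ℝ) < -(e i + e j))).comp htop
        simpa [neg_neg, Function.comp_def] using h3
      have h4 : Tendsto (fun k => (Qᵀ * M * Q) i j * t k ^ (e i + e j)) atTop (𝓝 0) := by
        simpa using h2.const_mul ((Qᵀ * M * Q) i j)
      have h5 : (fun k => t k ^ (e i) * (Qᵀ * M * Q) i j * t k ^ (e j))
          = fun k => (Qᵀ * M * Q) i j * t k ^ (e i + e j) := by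
        funext k
        rw [Real.rpow_add (htpos k)]
        ring
      rw [h5]
      exact h4
  refine ⟨fun k => Q * D k, ?_, fun _ => 0, fun i => Matrix.isDiag_zero, ?_⟩
  · intro k
    rw [Matrix.det_mul, hQ, one_mul, hDdet k]
  · intro i
    fin_cases i
    · exact main A (fun i j h => (hz i j h).1)
    · exact main B (fun i j h => (hz i j h).2)

noncomputable def matLin {m : ℕ} (M : Matrix (Fin m) (Fin m) ℝ) :
    EuclideanSpace ℝ (Fin m) →ₗ[ℝ] EuclideanSpace ℝ (Fin m) where
  toFun x := WithLp.toLp 2 (M *ᵥ x)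
  map_add' x y := by simp [Matrix.mulVec_add]
  map_smul' c x := by simp [Matrix.mulVec_smul]

lemma span_iso {m : ℕ} (M : Matrix (Fin m) (Fin m) ℝ) (v : ℕ → EuclideanSpace ℝ (Fin m))
    (hiso : ∀ j k, (v j : Fin m → ℝ) ⬝ᵥ (M *ᵥ v k) = 0) :
    ∀ (x y : EuclideanSpace ℝ (Fin m)), x ∈ Submodule.span ℝ (Set.range v) →
      y ∈ Submodule.span ℝ (Set.range v) → (x : Fin m → ℝ) ⬝ᵥ (M *ᵥ y) = 0 := by
  intro x y hx hy
  induction hx, hy using Submodule.span_induction₂ with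
  | mem_mem a b ha hb =>
    obtain ⟨j, rfl⟩ := ha; obtain ⟨k, rfl⟩ := hb; exact hiso j k
  | zero_left b hb => exact zero_dotProduct _
  | zero_right a ha =>
    show (a : Fin m → ℝ) ⬝ᵥ (M *ᵥ (0 : Fin m → ℝ)) = 0
    rw [Matrix.mulVec_zero, dotProduct_zero]
  | add_left x' y' z hx' hy' hz h1 h2 =>
    rw [WithLp.ofLp_add, add_dotProduct, h1, h2, add_zero]
  | add_right x' y' z hx' hy' hz h1 h2 =>
    have hmv : M *ᵥ (y' + z) = M *ᵥ y' + M *ᵥ z := Matrix.mulVec_add M y' z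
    rw [WithLp.ofLp_add, hmv, dotProduct_add, h1, h2, add_zero]
  | smul_left r x' y' hx' hy' h =>
    rw [WithLp.ofLp_smul, smul_dotProduct, h, smul_zero]
  | smul_right r x' y' hx' hy' h =>
    have hmv : M *ᵥ (r • y') = r • (M *ᵥ y') := M.mulVec_smul r y'
    rw [WithLp.ofLp_smul, hmv, dotProduct_smul, h, smul_zero]

lemma arith_aux {x y z : ℝ} (hx : 0 < x) (hz : 0 ≤ z) (h : y + 1 ≤ x) :
    (y * (z + 1) + z) / x < z + 1 := by
  rw [div_lt_iff₀ hx]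
  nlinarith

set_option maxHeartbeats 1000000 in
lemma exists_good_basis {m : ℕ} (A B : Matrix (Fin m) (Fin m) ℝ)
    (hA : A.IsSymm) (hB : B.IsSymm)
    (v : ℕ → (Fin m → ℝ)) (hv : ∃ j, v j ≠ 0) (h0 : A *ᵥ v 0 = 0)
    (hrec : ∀ j, A *ᵥ v (j + 1) + B *ᵥ v j = 0)
    (hisoA : ∀ j k, v j ⬝ᵥ (A *ᵥ v k) = 0) (hisoB : ∀ j k, v j ⬝ᵥ (B *ᵥ v k) = 0) :
    ∃ (Q : Matrix (Fin m) (Fin m) ℝ) (e : Fin m → ℝ), Q.det ≠ 0 ∧ (∑ i, e i) = 0 ∧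
      ∀ i j, 0 ≤ e i + e j → (Qᵀ * A * Q) i j = 0 ∧ (Qᵀ * B * Q) i j = 0 := by
  classical
  set v' : ℕ → EuclideanSpace ℝ (Fin m) := fun j => WithLp.toLp 2 (v j) with hv'def
  set V : Submodule ℝ (EuclideanSpace ℝ (Fin m)) := Submodule.span ℝ (Set.range v') with hVdef
  set U : Submodule ℝ (EuclideanSpace ℝ (Fin m)) := V.map (matLin A) with hUdef
  have hspanA := span_iso A v' hisoA
  have hspanB := span_iso B v' hisoB
  have hinner : ∀ x y : EuclideanSpace ℝ (Fin m), ⟪x, y⟫ = (x : Fin m → ℝ) ⬝ᵥ y := fun x y => by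
    simp [PiLp.inner_apply, dotProduct]
    exact Finset.sum_congr rfl fun _ _ => mul_comm _ _
  have hAV : ∀ x ∈ V, matLin A x ∈ U := fun x hx => Submodule.mem_map_of_mem hx
  have hBV : ∀ x ∈ V, matLin B x ∈ U := by
    intro x hx
    induction hx using Submodule.span_induction with
    | mem a ha =>
      obtain ⟨j, rfl⟩ := ha
      have hj : matLin B (v' j) = matLin A (-(v' (j+1))) := by
        show WithLp.toLp 2 (B *ᵥ v j) = WithLp.toLp 2 (A *ᵥ (-(v (j+1))))
        rw [Matrix.mulVec_neg]
        exact congrArg _ (eq_neg_of_add_eq_zero_right (hrec j))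
      rw [hj]
      exact Submodule.mem_map_of_mem (Submodule.neg_mem _ (Submodule.subset_span ⟨j+1, rfl⟩))
    | zero => rw [map_zero]; exact U.zero_mem
    | add a b ha hb iha ihb => rw [map_add]; exact U.add_mem iha ihb
    | smul r a ha ih => rw [_root_.map_smul]; exact U.smul_mem r ih
  have hVU : ∀ x ∈ V, ∀ u ∈ U, ⟪u, x⟫ = 0 := by
    intro x hx u hu
    obtain ⟨y, hy, rfl⟩ := hu
    rw [hinner]
    show (A *ᵥ y) ⬝ᵥ (x : Fin m → ℝ) = 0
    rw [dotProduct_comm]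
    exact hspanA x y hx hy
  have hdisj : V ⊓ U = ⊥ := by
    rw [eq_bot_iff]
    intro x hx
    have h1 := hVU x hx.1 x hx.2
    rw [Submodule.mem_bot]
    exact inner_self_eq_zero.mp h1
  obtain ⟨j₀, hj₀, hkerj⟩ : ∃ j₀, v j₀ ≠ 0 ∧ A *ᵥ v j₀ = 0 := by
    refine ⟨Nat.find hv, Nat.find_spec hv, ?_⟩
    rcases hfind : Nat.find hv with _ | j
    · exact h0
    · have hzj : v j = 0 := by
        by_contra hc
        exact (Nat.find_min hv (by omega)) hc
      have := eq_neg_of_add_eq_zero_left (hrec j)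
      rw [this, hzj, Matrix.mulVec_zero, neg_zero]
  set d := Module.finrank ℝ V with hddef
  set d' := Module.finrank ℝ U with hd'def
  have hd'd : d' + 1 ≤ d := by
    have hrn := LinearMap.finrank_range_add_finrank_ker ((matLin A).comp V.subtype)
    have hrange : LinearMap.range ((matLin A).comp V.subtype) = U := by
      rw [LinearMap.range_comp, Submodule.range_subtype, hUdef]
    rw [hrange] at hrn
    have hkermem : (⟨v' j₀, Submodule.subset_span ⟨j₀, rfl⟩⟩ : V) ∈
        LinearMap.ker ((matLin A).comp V.subtype) := by
      rw [LinearMap.mem_ker]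
      show WithLp.toLp 2 (A *ᵥ v j₀) = 0
      rw [hkerj, WithLp.toLp_zero]
    have hne : (⟨v' j₀, Submodule.subset_span ⟨j₀, rfl⟩⟩ : V) ≠ 0 := by
      intro hc
      exact hj₀ (congrArg WithLp.ofLp (congrArg Subtype.val hc))
    have hpos : 0 < Module.finrank ℝ (LinearMap.ker ((matLin A).comp V.subtype)) := by
      rw [Module.finrank_pos_iff]
      refine nontrivial_of_ne ⟨_, hkermem⟩ 0 ?_
      intro hc
      exact hne (congrArg Subtype.val hc)
    omega
  set W : Submodule ℝ (EuclideanSpace ℝ (Fin m)) := (V ⊔ U)ᗮ with hWdef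
  set w := Module.finrank ℝ W with hwdef
  have hdims : d + d' + w = m := by
    have h1 : Module.finrank ℝ ↥(V ⊔ U) + Module.finrank ℝ ↥(V ⊓ U) = d + d' :=
      Submodule.finrank_sup_add_finrank_inf_eq V U
    rw [hdisj, finrank_bot] at h1
    have h2 : Module.finrank ℝ ↥(V ⊔ U) + Module.finrank ℝ ↥W = m := by
      have h3 := Submodule.finrank_add_finrank_orthogonal (K := V ⊔ U)
      rwa [finrank_euclideanSpace_fin] at h3
    omega
  -- bases of V, U, W as families in the ambient space
  set bV := Module.finBasis ℝ ↥V with hbVdef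
  set bU := Module.finBasis ℝ ↥U with hbUdef
  set bW := Module.finBasis ℝ ↥W with hbWdef
  set cV : Fin d → EuclideanSpace ℝ (Fin m) := fun i => V.subtype (bV i) with hcVdef
  set cU : Fin d' → EuclideanSpace ℝ (Fin m) := fun i => U.subtype (bU i) with hcUdef
  set cW : Fin w → EuclideanSpace ℝ (Fin m) := fun i => W.subtype (bW i) with hcWdef
  have hcVmem : ∀ i, cV i ∈ V := fun i => (bV i).2
  have hcWmem : ∀ i, cW i ∈ W := fun i => (bW i).2
  have hspan3 : ∀ (K : Submodule ℝ (EuclideanSpace ℝ (Fin m))) (n : ℕ)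
      (bK : Module.Basis (Fin n) ℝ ↥K), K = Submodule.span ℝ (Set.range fun i => K.subtype (bK i)) := by
    intro K n bK
    have h1 : Set.range (fun i => K.subtype (bK i)) = K.subtype '' (Set.range bK) := by
      rw [← Set.range_comp]; rfl
    rw [h1, Submodule.span_image, Module.Basis.span_eq, Submodule.map_top, Submodule.range_subtype]
  set c : (Fin d ⊕ Fin d') ⊕ Fin w → EuclideanSpace ℝ (Fin m) :=
    Sum.elim (Sum.elim cV cU) cW with hcdef
  have hcard : Fintype.card ((Fin d ⊕ Fin d') ⊕ Fin w)
      = Module.finrank ℝ (EuclideanSpace ℝ (Fin m)) := by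
    rw [finrank_euclideanSpace_fin]
    simp only [Fintype.card_sum, Fintype.card_fin]
    omega
  have htople : ⊤ ≤ Submodule.span ℝ (Set.range c) := by
    have hsup : (V ⊔ U) ⊔ W = ⊤ := Submodule.sup_orthogonal_of_hasOrthogonalProjection
    rw [← hsup]
    refine sup_le (sup_le ?_ ?_) ?_
    · rw [hspan3 V d bV]
      exact Submodule.span_mono (by rintro x ⟨i, rfl⟩; exact ⟨Sum.inl (Sum.inl i), rfl⟩)
    · rw [hspan3 U d' bU]
      exact Submodule.span_mono (by rintro x ⟨i, rfl⟩; exact ⟨Sum.inl (Sum.inr i), rfl⟩)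
    · rw [hspan3 W w bW]
      exact Submodule.span_mono (by rintro x ⟨i, rfl⟩; exact ⟨Sum.inr i, rfl⟩)
  set b := basisOfTopLeSpanOfCardEqFinrank c htople hcard with hbdef
  have hb : ⇑b = c := coe_basisOfTopLeSpanOfCardEqFinrank c htople hcard
  set σ : ((Fin d ⊕ Fin d') ⊕ Fin w) ≃ Fin m :=
    Fintype.equivFinOfCardEq (by rw [hcard, finrank_euclideanSpace_fin]) with hσdef
  set bFm := b.reindex σ with hbFmdef
  set e0 := (EuclideanSpace.basisFun (Fin m) ℝ).toBasis with he0def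
  set Q : Matrix (Fin m) (Fin m) ℝ := e0.toMatrix ⇑bFm with hQdef
  -- exponents
  set aex : ℝ := ((d' : ℝ) * ((w : ℝ) + 1) + (w : ℝ)) / (d : ℝ) with haexdef
  set eι : (Fin d ⊕ Fin d') ⊕ Fin w → ℝ :=
    Sum.elim (Sum.elim (fun _ => aex) (fun _ => -((w : ℝ) + 1))) (fun _ => -1) with heιdef
  have hd0 : (0 : ℝ) < (d : ℝ) := by
    have : 1 ≤ d := by omega
    exact_mod_cast Nat.lt_of_lt_of_le Nat.zero_lt_one this
  have haex_nonneg : 0 ≤ aex := by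
    apply div_nonneg _ (le_of_lt hd0)
    positivity
  have haex_lt : aex < (w : ℝ) + 1 := by
    have hcast : (d' : ℝ) + 1 ≤ (d : ℝ) := by exact_mod_cast hd'd
    exact arith_aux hd0 (Nat.cast_nonneg w) hcast
  refine ⟨Q, fun i => eι (σ.symm i), ?_, ?_, ?_⟩
  · -- determinant nonzero
    intro hc
    have hmul := Module.Basis.toMatrix_mul_toMatrix_flip e0 bFm
    have hd2 := congrArg Matrix.det hmul
    rw [Matrix.det_mul, ← hQdef, hc, zero_mul, Matrix.det_one] at hd2
    exact zero_ne_one hd2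
  · -- sum of exponents is zero
    have h1 : ∑ i, eι (σ.symm i) = ∑ x, eι x :=
      Fintype.sum_equiv σ.symm _ _ (fun i => rfl)
    rw [h1, Fintype.sum_sum_type, Fintype.sum_sum_type]
    simp only [heιdef, Sum.elim_inl, Sum.elim_inr, Finset.sum_const, Finset.card_univ,
      Fintype.card_fin, nsmul_eq_mul]
    rw [haexdef]
    field_simp
    ring
  · -- vanishing of dangerous blocks
    have hw0 : (0 : ℝ) ≤ (w : ℝ) := Nat.cast_nonneg w
    have hQcol : ∀ (x : Fin m), (fun i' => Q i' x) = (c (σ.symm x) : Fin m → ℝ) := by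
      intro x
      funext i'
      rw [hQdef, Module.Basis.toMatrix_apply]
      have h1 : (e0.repr (bFm x)) i' = (bFm x) i' := by
        rw [he0def, OrthonormalBasis.coe_toBasis_repr_apply, EuclideanSpace.basisFun_repr]
      rw [h1, hbFmdef, Module.Basis.reindex_apply, hb]
    have hentry : ∀ (M : Matrix (Fin m) (Fin m) ℝ) (x y : Fin m),
        (Qᵀ * M * Q) x y = ((c (σ.symm x) : Fin m → ℝ)) ⬝ᵥ (M *ᵥ (c (σ.symm y) : Fin m → ℝ)) := by
      intro M x y
      rw [← hQcol x, ← hQcol y]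
      simp only [Matrix.mul_apply, Matrix.transpose_apply, Matrix.mulVec, dotProduct]
      simp_rw [Finset.sum_mul, Finset.mul_sum, mul_assoc]
      exact Finset.sum_comm
    have hWorth : ∀ x ∈ W, ∀ u ∈ U, (u : Fin m → ℝ) ⬝ᵥ (x : Fin m → ℝ) = 0 := by
      intro x hx u hu
      rw [← hinner u x]
      exact (Submodule.mem_orthogonal _ x).mp hx u (Submodule.mem_sup_right hu)
    have hvan : ∀ (M : Matrix (Fin m) (Fin m) ℝ), M.IsSymm → (∀ x ∈ V, matLin M x ∈ U) →
        (∀ x y : EuclideanSpace ℝ (Fin m), x ∈ Submodule.span ℝ (Set.range v') →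
          y ∈ Submodule.span ℝ (Set.range v') → (x : Fin m → ℝ) ⬝ᵥ (M *ᵥ y) = 0) →
        ∀ x y : EuclideanSpace ℝ (Fin m),
          (x ∈ V ∧ y ∈ V) ∨ (x ∈ V ∧ y ∈ W) ∨ (x ∈ W ∧ y ∈ V) →
          (x : Fin m → ℝ) ⬝ᵥ (M *ᵥ y) = 0 := by
      rintro M hM hMU hMiso x y (⟨hx, hy⟩ | ⟨hx, hy⟩ | ⟨hx, hy⟩)
      · exact hMiso x y hx hy
      · rw [symdot M hM, dotProduct_comm]
        exact hWorth y hy _ (hMU x hx)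
      · rw [dotProduct_comm]
        exact hWorth x hx _ (hMU y hy)
    intro i j hij
    rw [hentry A i j, hentry B i j]
    simp only at hij
    obtain ⟨p, hp⟩ : ∃ p, σ.symm i = p := ⟨_, rfl⟩
    obtain ⟨q, hq⟩ : ∃ q, σ.symm j = q := ⟨_, rfl⟩
    rw [hp, hq] at hij ⊢
    rcases p with (pi | pi) | pi <;> rcases q with (qi | qi) | qi <;>
        simp only [heιdef, hcdef, Sum.elim_inl, Sum.elim_inr] at hij ⊢
    · exact ⟨hvan A hA hAV hspanA _ _ (Or.inl ⟨hcVmem pi, hcVmem qi⟩),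
        hvan B hB hBV hspanB _ _ (Or.inl ⟨hcVmem pi, hcVmem qi⟩)⟩
    · exfalso; linarith
    · exact ⟨hvan A hA hAV hspanA _ _ (Or.inr (Or.inl ⟨hcVmem pi, hcWmem qi⟩)),
        hvan B hB hBV hspanB _ _ (Or.inr (Or.inl ⟨hcVmem pi, hcWmem qi⟩))⟩
    · exfalso; linarith
    · exfalso; linarith
    · exfalso; linarith
    · exact ⟨hvan A hA hAV hspanA _ _ (Or.inr (Or.inr ⟨hcWmem pi, hcVmem qi⟩)),
        hvan B hB hBV hspanB _ _ (Or.inr (Or.inr ⟨hcWmem pi, hcVmem qi⟩))⟩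
    · exfalso; linarith
    · exfalso; linarith

theorem stmt_3 (m : ℕ) (A B : Matrix (Fin m) (Fin m) ℝ)
    (hA : A.IsSymm) (hB : B.IsSymm)
    (hsing : ∀ α β : ℝ, (α • A + β • B).det = 0) :
    TWSDB ![A, B] := by
  rcases Nat.eq_zero_or_pos m with hm | hm
  · refine ⟨fun _ => 1, fun k => Matrix.det_one, ![A, B], fun i => ?_, fun i => ?_⟩
    · intro a b hab
      exact absurd a.2 (by omega)
    · simpa using tendsto_const_nhds
  · obtain ⟨v, hv, h0, hrec⟩ := exists_kernel_family A B hsing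
    obtain ⟨hisoA, hisoB⟩ := isotropy A B hA hB v h0 hrec
    obtain ⟨Q, e, hdet, hsum, hz⟩ := exists_good_basis A B hA hB v hv h0 hrec hisoA hisoB
    set i0 : Fin m := ⟨0, hm⟩ with hi0def
    set cc : Fin m → ℝ := fun j => if j = i0 then (Q.det)⁻¹ else 1 with hccdef
    set Q' := Q * Matrix.diagonal cc with hQ'def
    have hdet' : Q'.det = 1 := by
      rw [hQ'def, Matrix.det_mul, Matrix.det_diagonal, hccdef,
        Finset.prod_ite_eq' Finset.univ i0 (fun _ => (Q.det)⁻¹)]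
      simp [mul_inv_cancel₀ hdet]
    apply twsdb_of_good_basis A B Q' e hdet' hsum
    intro i j hij
    have key : ∀ M : Matrix (Fin m) (Fin m) ℝ,
        (Qᵀ * M * Q) i j = 0 → (Q'ᵀ * M * Q') i j = 0 := by
      intro M hM
      have h1 : Q'ᵀ * M * Q' = Matrix.diagonal cc * (Qᵀ * M * Q) * Matrix.diagonal cc := by
        rw [hQ'def, Matrix.transpose_mul, Matrix.diagonal_transpose]
        simp only [Matrix.mul_assoc]
      rw [h1, Matrix.mul_diagonal, Matrix.diagonal_mul, hM]
      ring
    exact ⟨key A (hz i j hij).1, key B (hz i j hij).2⟩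
end

section
/- Let A_1, …, A_L be real symmetric m×m matrices and suppose there exist real numbers α_1, …, α_L such that α_1 A_1 + ⋯ + α_L A_L is positive definite. Then the family {A_1,…,A_L} is TWSD-B if and only if it is SD. -/
open Matrix Filter Topology

attribute [local instance] Matrix.normedAddCommGroup Matrix.normedSpace

/-- Simultaneously diagonalizable on `SL_m(ℝ)`. -/
def IsSD {ι : Type*} {m : ℕ} (A : ι → Matrix (Fin m) (Fin m) ℝ) : Prop :=
  ∃ P : Matrix (Fin m) (Fin m) ℝ, P.det = 1 ∧ ∀ i, (Pᵀ * A i * P).IsDiag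

theorem stmt_4 (m L : ℕ) (A : Fin L → Matrix (Fin m) (Fin m) ℝ)
    (hA : ∀ i, (A i).IsSymm)
    (hpd : ∃ α : Fin L → ℝ, (∑ i, α i • A i).PosDef) :
    TWSDB A ↔ IsSD A := by
  constructor
  · rintro ⟨P, hdet, D, hDdiag, htend⟩
    obtain ⟨α, hS⟩ := hpd
    set S : Matrix (Fin m) (Fin m) ℝ := ∑ i, α i • A i with hSdef
    obtain ⟨B, hBsa, -, hBB⟩ := open scoped MatrixOrder in
      CFC.exists_sqrt_of_isSelfAdjoint_of_quasispectrumRestricts hS.posSemidef.isHermitian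
        (QuasispectrumRestricts.nnreal_of_nonneg hS.posSemidef.nonneg)
    replace hBB : B * B = S := hBB
    have hBsym : Bᵀ = B := by
      have := hBsa.star_eq
      rw [Matrix.star_eq_conjTranspose, Matrix.conjTranspose_eq_transpose_of_trivial] at this
      exact this
    have hBdet : B.det ≠ 0 := by
      intro h
      have : S.det = 0 := by rw [← hBB, Matrix.det_mul, h, mul_zero]
      exact hS.det_pos.ne' this
    set x : ℕ → Matrix (Fin m) (Fin m) ℝ := fun k => B * P k with hx
    set Dsum : Matrix (Fin m) (Fin m) ℝ := ∑ i, α i • D i with hDsum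
    have hcomb : Tendsto (fun k => (P k)ᵀ * S * P k) atTop (𝓝 Dsum) := by
      have heq : ∀ k, (P k)ᵀ * S * P k = ∑ i, α i • ((P k)ᵀ * A i * P k) := by
        intro k
        simp [hSdef, Finset.mul_sum, Finset.sum_mul, Matrix.mul_smul, Matrix.smul_mul]
      simp only [heq]
      exact tendsto_finset_sum _ fun i _ => (htend i).const_smul (α i)
    have hxx : ∀ k, (x k)ᵀ * x k = (P k)ᵀ * S * P k := by
      intro k
      rw [hx]
      simp only [Matrix.transpose_mul, hBsym]
      rw [Matrix.mul_assoc ((P k)ᵀ) B, ← Matrix.mul_assoc B B, hBB, ← Matrix.mul_assoc]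
    have htendxx : Tendsto (fun k => (x k)ᵀ * x k) atTop (𝓝 Dsum) := by
      simp only [hxx]; exact hcomb
    have hentry : ∀ j : Fin m,
        Tendsto (fun k => ((x k)ᵀ * x k) j j) atTop (𝓝 (Dsum j j)) := by
      intro j
      have hcont : Continuous fun M : Matrix (Fin m) (Fin m) ℝ => M j j :=
        (continuous_apply j).comp (continuous_apply j)
      exact (hcont.continuousAt.tendsto).comp htendxx
    have hbdd : ∀ j : Fin m, ∃ c : ℝ, ∀ k, ((x k)ᵀ * x k) j j ≤ c := by
      intro j
      obtain ⟨c, hc⟩ := (hentry j).bddAbove_range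
      exact ⟨c, fun k => hc ⟨k, rfl⟩⟩
    choose c hc using hbdd
    set r := Real.sqrt (∑ j, |c j|) with hr
    have hmem : ∀ k, x k ∈ Metric.closedBall (0 : Matrix (Fin m) (Fin m) ℝ) r := by
      intro k
      rw [Metric.mem_closedBall, dist_zero_right,
        Matrix.norm_le_iff (Real.sqrt_nonneg _)]
      intro i j
      have h1 : x k i j * x k i j ≤ ((x k)ᵀ * x k) j j := by
        rw [Matrix.mul_apply]
        have := Finset.single_le_sum
          (f := fun i' => (x k)ᵀ j i' * x k i' j)
          (fun i' _ => by simpa [Matrix.transpose_apply] using mul_self_nonneg (x k i' j))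
          (Finset.mem_univ i)
        simpa [Matrix.transpose_apply] using this
      have h2 : |c j| ≤ ∑ j', |c j'| :=
        Finset.single_le_sum (f := fun j' => |c j'|) (fun j' _ => abs_nonneg _) (Finset.mem_univ j)
      have h3 : x k i j * x k i j ≤ ∑ j', |c j'| :=
        le_trans (le_trans h1 (le_trans (hc j k) (le_abs_self _))) h2
      have : ‖x k i j‖ = Real.sqrt (x k i j * x k i j) := by
        rw [Real.norm_eq_abs, ← Real.sqrt_mul_self_eq_abs]
      rw [this]
      exact Real.sqrt_le_sqrt h3
    obtain ⟨Q, _, φ, hφmono, hQtend⟩ :=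
      (isCompact_closedBall (0 : Matrix (Fin m) (Fin m) ℝ) r).tendsto_subseq hmem
    have hPk : ∀ k, P k = B⁻¹ * x k := by
      intro k
      rw [hx, ← Matrix.mul_assoc, Matrix.nonsing_inv_mul B (Ne.isUnit hBdet), Matrix.one_mul]
    have hPtend : Tendsto (fun k => P (φ k)) atTop (𝓝 (B⁻¹ * Q)) := by
      simp only [hPk]
      exact ((continuous_const.matrix_mul continuous_id).tendsto Q).comp hQtend
    refine ⟨B⁻¹ * Q, ?_, fun i => ?_⟩
    · have h1 : Tendsto (fun k => (P (φ k)).det) atTop (𝓝 (B⁻¹ * Q).det) :=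
        ((continuous_id.matrix_det).continuousAt.tendsto).comp hPtend
      have h2 : Tendsto (fun k => (P (φ k)).det) atTop (𝓝 1) := by
        simp only [hdet]; exact tendsto_const_nhds
      exact tendsto_nhds_unique h1 h2
    · have hcont : Continuous fun M : Matrix (Fin m) (Fin m) ℝ => Mᵀ * A i * M :=
        (continuous_id.matrix_transpose.matrix_mul continuous_const).matrix_mul continuous_id
      have h1 : Tendsto (fun k => (P (φ k))ᵀ * A i * P (φ k)) atTop
          (𝓝 ((B⁻¹ * Q)ᵀ * A i * (B⁻¹ * Q))) :=
        (hcont.continuousAt.tendsto).comp hPtend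
      have h2 : Tendsto (fun k => (P (φ k))ᵀ * A i * P (φ k)) atTop (𝓝 (D i)) :=
        (htend i).comp hφmono.tendsto_atTop
      rw [tendsto_nhds_unique h1 h2]
      exact hDdiag i
  · rintro ⟨P, hPdet, hPdiag⟩
    exact ⟨fun _ => P, fun _ => hPdet, fun i => Pᵀ * A i * P, hPdiag,
      fun i => tendsto_const_nhds⟩
end

section
/- Let A_1, …, A_L be real symmetric m×m matrices and let S = α_1 A_1 + ⋯ + α_L A_L be an invertible real linear combination of them. If the family {A_1,…,A_L} is TWSD-B, then for every 1 ≤ i ≤ L every complex eigenvalue of S⁻¹A_i is real, and for all 1 ≤ i ≠ j ≤ L the S-commutator [A_i, A_j]_S = S⁻¹A_i S⁻¹A_j − S⁻¹A_j S⁻¹A_i is nilpotent. -/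
open Matrix Filter Topology Polynomial

def HasOnlyRealEigenvalues {m : ℕ} (M : Matrix (Fin m) (Fin m) ℝ) : Prop :=
  ∀ z : ℂ, (M.charpoly.map (algebraMap ℝ ℂ)).IsRoot z → z.im = 0

lemma my_eval_charpoly {n R : Type*} [Fintype n] [DecidableEq n] [CommRing R]
    (M : Matrix n n R) (t : R) :
    M.charpoly.eval t = (t • (1 : Matrix n n R) - M).det := by
  rw [Matrix.charpoly, ← Polynomial.coe_evalRingHom, RingHom.map_det]
  congr 1
  ext i j
  by_cases h : i = j
  · subst h
    simp [Matrix.charmatrix_apply_eq, Matrix.one_apply]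
  · simp [Matrix.charmatrix_apply_ne _ _ _ h, Matrix.one_apply_ne h]

lemma my_det_conj {n : ℕ} (Q M : Matrix (Fin n) (Fin n) ℝ) (hQ : IsUnit Q.det) (t : ℝ) :
    (t • (1 : Matrix (Fin n) (Fin n) ℝ) - Q⁻¹ * M * Q).det
      = (t • (1 : Matrix (Fin n) (Fin n) ℝ) - M).det := by
  have h1 : t • (1 : Matrix (Fin n) (Fin n) ℝ) - Q⁻¹ * M * Q
      = Q⁻¹ * (t • (1 : Matrix (Fin n) (Fin n) ℝ) - M) * Q := by
    rw [Matrix.mul_sub, Matrix.sub_mul]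
    congr 1
    rw [Matrix.mul_smul, Matrix.mul_one, Matrix.smul_mul, Matrix.nonsing_inv_mul _ hQ]
  rw [h1, Matrix.det_conj' ((Matrix.isUnit_iff_isUnit_det Q).2 hQ)]

theorem stmt_5 (m L : ℕ) (A : Fin L → Matrix (Fin m) (Fin m) ℝ)
    (hA : ∀ i, (A i).IsSymm) (α : Fin L → ℝ)
    (S : Matrix (Fin m) (Fin m) ℝ) (hS : S = ∑ i, α i • A i)
    (hSdet : IsUnit S.det) (h : TWSDB A) :
    (∀ i, HasOnlyRealEigenvalues (S⁻¹ * A i)) ∧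
    (∀ i j, i ≠ j →
      IsNilpotent (S⁻¹ * A i * (S⁻¹ * A j) - S⁻¹ * A j * (S⁻¹ * A i))) := by
  obtain ⟨P, hPdet, D, hDdiag, htend⟩ := h
  have hPunit : ∀ k, IsUnit (P k).det := fun k => by rw [hPdet k]; exact isUnit_one
  have hPTunit : ∀ k, IsUnit (P k)ᵀ.det := fun k => by
    rw [Matrix.det_transpose]; exact hPunit k
  set Dl : Matrix (Fin m) (Fin m) ℝ := ∑ i, α i • D i with hDl
  -- Pₖᵀ S Pₖ tends to Dl
  have hSk : ∀ k, (P k)ᵀ * S * P k = ∑ i, α i • ((P k)ᵀ * A i * P k) := by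
    intro k
    rw [hS, Finset.mul_sum, Finset.sum_mul]
    refine Finset.sum_congr rfl fun i _ => ?_
    rw [Matrix.mul_smul, Matrix.smul_mul]
  have hStend : Tendsto (fun k => (P k)ᵀ * S * P k) atTop (𝓝 Dl) := by
    simp only [hSk]
    exact tendsto_finset_sum _ fun i _ => (htend i).const_smul (α i)
  -- determinant facts
  have hdetSk : ∀ k, ((P k)ᵀ * S * P k).det = S.det := by
    intro k
    rw [Matrix.det_mul, Matrix.det_mul, Matrix.det_transpose, hPdet k, one_mul, mul_one]
  have hdetcont : Continuous fun M : Matrix (Fin m) (Fin m) ℝ => M.det :=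
    continuous_id.matrix_det
  have hdetDl : Dl.det = S.det := by
    have h1 : Tendsto (fun k => ((P k)ᵀ * S * P k).det) atTop (𝓝 Dl.det) :=
      (hdetcont.tendsto Dl).comp hStend
    simp only [hdetSk] at h1
    exact (tendsto_const_nhds_iff.mp h1).symm
  have hDlunit : IsUnit Dl.det := hdetDl ▸ hSdet
  -- inverse tendsto
  have hinvtend : Tendsto (fun k => ((P k)ᵀ * S * P k)⁻¹) atTop (𝓝 Dl⁻¹) := by
    refine (continuousAt_matrix_inv Dl ?_).tendsto.comp hStend
    have : Dl.det ≠ 0 := hDlunit.ne_zero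
    rw [show (Ring.inverse : ℝ → ℝ) = fun x => x⁻¹ from funext fun x => Ring.inverse_eq_inv x]
    exact continuousAt_inv₀ this
  have hSkunit : ∀ k, IsUnit ((P k)ᵀ * S * P k).det := fun k => (hdetSk k) ▸ hSdet
  -- key conjugation identity
  have hconj : ∀ (i : Fin L) (k : ℕ),
      ((P k)ᵀ * S * P k)⁻¹ * ((P k)ᵀ * A i * P k) = (P k)⁻¹ * (S⁻¹ * A i) * P k := by
    intro i k
    rw [Matrix.mul_inv_rev, Matrix.mul_inv_rev]
    calc (P k)⁻¹ * (S⁻¹ * ((P k)ᵀ)⁻¹) * ((P k)ᵀ * A i * P k)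
        = (P k)⁻¹ * (S⁻¹ * (((P k)ᵀ)⁻¹ * ((P k)ᵀ * (A i * P k)))) := by
          simp only [Matrix.mul_assoc]
      _ = (P k)⁻¹ * (S⁻¹ * (A i * P k)) := by
          rw [Matrix.nonsing_inv_mul_cancel_left _ _ (hPTunit k)]
      _ = (P k)⁻¹ * (S⁻¹ * A i) * P k := by simp only [Matrix.mul_assoc]
  -- Dl and D i as diagonal matrices
  have hDldiag : Dl.IsDiag := by
    rw [hDl]
    refine Finset.sum_induction _ _ (fun a b ha hb => ha.add hb) Matrix.isDiag_zero
      fun i _ => (hDdiag i).smul (α i)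
  obtain ⟨w, hw⟩ : ∃ w : Fin m → ℝ, Dl⁻¹ = Matrix.diagonal w := by
    refine ⟨Ring.inverse Dl.diag, ?_⟩
    rw [← hDldiag.diagonal_diag, Matrix.inv_diagonal, Matrix.diag_diagonal]
  have hDieq : ∀ i, D i = Matrix.diagonal (D i).diag := fun i => ((hDdiag i).diagonal_diag).symm
  constructor
  · -- real eigenvalues
    intro i z hz
    -- charpoly of S⁻¹ * A i equals charpoly of Dl⁻¹ * D i
    have hchar : (S⁻¹ * A i).charpoly = (Dl⁻¹ * D i).charpoly := by
      apply Polynomial.funext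
      intro t
      rw [my_eval_charpoly, my_eval_charpoly]
      have hT : Tendsto (fun k => ((P k)ᵀ * S * P k)⁻¹ * ((P k)ᵀ * A i * P k)) atTop
          (𝓝 (Dl⁻¹ * D i)) := hinvtend.mul (htend i)
      have h2 : Tendsto
          (fun k => (t • (1 : Matrix (Fin m) (Fin m) ℝ)
            - ((P k)ᵀ * S * P k)⁻¹ * ((P k)ᵀ * A i * P k)).det) atTop
          (𝓝 ((t • (1 : Matrix (Fin m) (Fin m) ℝ) - Dl⁻¹ * D i).det)) :=
        (hdetcont.tendsto _).comp (tendsto_const_nhds.sub hT)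
      have h3 : ∀ k, (t • (1 : Matrix (Fin m) (Fin m) ℝ)
          - ((P k)ᵀ * S * P k)⁻¹ * ((P k)ᵀ * A i * P k)).det
          = (t • (1 : Matrix (Fin m) (Fin m) ℝ) - S⁻¹ * A i).det := by
        intro k
        rw [hconj, my_det_conj _ _ (hPunit k)]
      simp only [h3] at h2
      exact tendsto_const_nhds_iff.mp h2
    rw [hchar] at hz
    have hdiagprod : Dl⁻¹ * D i = Matrix.diagonal (fun l => w l * (D i).diag l) := by
      rw [hw, hDieq i, Matrix.diagonal_mul_diagonal, Matrix.diag_diagonal]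
    rw [hdiagprod] at hz
    rw [Matrix.charpoly_of_upperTriangular _ (Matrix.blockTriangular_diagonal _)] at hz
    simp only [Polynomial.IsRoot, Polynomial.eval_map, Polynomial.eval₂_finset_prod,
      Polynomial.eval₂_sub, Polynomial.eval₂_X, Polynomial.eval₂_C,
      Finset.prod_eq_zero_iff, sub_eq_zero] at hz
    obtain ⟨l, _, hl⟩ := hz
    rw [hl]
    simp [Matrix.diagonal_apply_eq]
  · -- nilpotency
    intro i j hij
    set M : Matrix (Fin m) (Fin m) ℝ :=
      S⁻¹ * A i * (S⁻¹ * A j) - S⁻¹ * A j * (S⁻¹ * A i) with hM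
    have hconj2 : ∀ k,
        ((P k)ᵀ * S * P k)⁻¹ * ((P k)ᵀ * A i * P k)
          * (((P k)ᵀ * S * P k)⁻¹ * ((P k)ᵀ * A j * P k))
        - ((P k)ᵀ * S * P k)⁻¹ * ((P k)ᵀ * A j * P k)
          * (((P k)ᵀ * S * P k)⁻¹ * ((P k)ᵀ * A i * P k))
        = (P k)⁻¹ * M * P k := by
      intro k
      rw [hconj i k, hconj j k, hM]
      have hmul : ∀ X Y : Matrix (Fin m) (Fin m) ℝ,
          (P k)⁻¹ * X * P k * ((P k)⁻¹ * Y * P k) = (P k)⁻¹ * (X * Y) * P k := by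
        intro X Y
        calc (P k)⁻¹ * X * P k * ((P k)⁻¹ * Y * P k)
            = (P k)⁻¹ * (X * (P k * ((P k)⁻¹ * (Y * P k)))) := by
              simp only [Matrix.mul_assoc]
          _ = (P k)⁻¹ * (X * (Y * P k)) := by
              rw [Matrix.mul_nonsing_inv_cancel_left _ _ (hPunit k)]
          _ = (P k)⁻¹ * (X * Y) * P k := by simp only [Matrix.mul_assoc]
      rw [hmul, hmul, ← Matrix.sub_mul, ← Matrix.mul_sub]
    -- limit of the conjugated commutator is 0
    have hlim0 : Dl⁻¹ * D i * (Dl⁻¹ * D j) - Dl⁻¹ * D j * (Dl⁻¹ * D i) = 0 := by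
      rw [hw, hDieq i, hDieq j]
      simp only [Matrix.diagonal_mul_diagonal]
      rw [sub_eq_zero]
      apply congrArg
      funext l
      ring
    have hcharM : M.charpoly = Polynomial.X ^ m := by
      apply Polynomial.funext
      intro t
      rw [my_eval_charpoly]
      have hTi : Tendsto (fun k => ((P k)ᵀ * S * P k)⁻¹ * ((P k)ᵀ * A i * P k)) atTop
          (𝓝 (Dl⁻¹ * D i)) := hinvtend.mul (htend i)
      have hTj : Tendsto (fun k => ((P k)ᵀ * S * P k)⁻¹ * ((P k)ᵀ * A j * P k)) atTop
          (𝓝 (Dl⁻¹ * D j)) := hinvtend.mul (htend j)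
      have hT : Tendsto (fun k => (P k)⁻¹ * M * P k) atTop
          (𝓝 (0 : Matrix (Fin m) (Fin m) ℝ)) := by
        rw [← hlim0]
        have := (hTi.mul hTj).sub (hTj.mul hTi)
        simpa only [hconj2] using this
      have h2 : Tendsto
          (fun k => (t • (1 : Matrix (Fin m) (Fin m) ℝ) - (P k)⁻¹ * M * P k).det) atTop
          (𝓝 ((t • (1 : Matrix (Fin m) (Fin m) ℝ) - 0).det)) :=
        (hdetcont.tendsto _).comp (tendsto_const_nhds.sub hT)
      have h3 : ∀ k, (t • (1 : Matrix (Fin m) (Fin m) ℝ) - (P k)⁻¹ * M * P k).det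
          = (t • (1 : Matrix (Fin m) (Fin m) ℝ) - M).det := fun k =>
        my_det_conj _ _ (hPunit k) t
      simp only [h3] at h2
      have h4 := tendsto_const_nhds_iff.mp h2
      rw [h4]
      simp [Matrix.det_smul]
    refine ⟨m, ?_⟩
    have := Matrix.aeval_self_charpoly M
    rw [hcharM] at this
    simpa using this
end

section
/- Let A and B be real symmetric m×m matrices. If there exist real numbers α, β, not both zero, such that αA + βB is positive semidefinite, then the pair {A, B} is TWSD. -/
open Matrix Filter Topology

/-- A finite family of real `m × m` matrices is TWSD: there are `P k ∈ SL_m(ℝ)` such that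
all off-diagonal entries of `(P k)ᵀ * A i * P k` tend to `0`. -/
def TWSD {ι : Type*} {m : ℕ} (A : ι → Matrix (Fin m) (Fin m) ℝ) : Prop :=
  ∃ P : ℕ → Matrix (Fin m) (Fin m) ℝ,
    (∀ k, (P k).det = 1) ∧
    ∀ i, ∀ p q : Fin m, p ≠ q →
      Tendsto (fun k => ((P k)ᵀ * A i * P k) p q) atTop (𝓝 (0 : ℝ))

section TWSDAux
variable {m : ℕ}

variable {m : ℕ}

open scoped MatrixOrder in
lemma exists_sqrt_psd' {C : Matrix (Fin m) (Fin m) ℝ} (hC : C.PosSemidef) :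
    ∃ T : Matrix (Fin m) (Fin m) ℝ, T * T = C ∧ T.PosSemidef :=
  ⟨CFC.sqrt C, CFC.sqrt_mul_sqrt_self C hC.nonneg, (CFC.sqrt_nonneg C).posSemidef⟩

lemma entry_eq' (C R : Matrix (Fin m) (Fin m) ℝ) (p q : Fin m) :
    (Rᵀ * C * R) p q = (fun j => R j p) ⬝ᵥ (C *ᵥ (fun j => R j q)) := by
  simp only [mul_apply, transpose_apply, dotProduct, mulVec, Finset.sum_mul, Finset.mul_sum]
  rw [Finset.sum_comm]
  exact Finset.sum_congr rfl fun i _ => Finset.sum_congr rfl fun j _ => by ring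

lemma smul_one_posDef' {ε : ℝ} (hε : 0 < ε) : (ε • (1 : Matrix (Fin m) (Fin m) ℝ)).PosDef := by
  rw [posDef_iff_dotProduct_mulVec]
  constructor
  · unfold Matrix.IsHermitian
    simp [conjTranspose_eq_transpose_of_trivial]
  · intro x hx
    simp only [smul_mulVec, one_mulVec, dotProduct_smul, star_trivial]
    have h1 : 0 < x ⬝ᵥ x := by
      have := dotProduct_self_star_pos_iff (v := x)
      simpa using this.mpr hx
    exact smul_pos hε h1

lemma coercive' {C : Matrix (Fin m) (Fin m) ℝ} (hC : C.PosDef) :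
    ∃ K : ℝ, 0 ≤ K ∧ ∀ v : Fin m → ℝ, v ⬝ᵥ v ≤ K * (v ⬝ᵥ (C *ᵥ v)) := by
  obtain ⟨T, hTT, hTsd⟩ : ∃ T : Matrix (Fin m) (Fin m) ℝ, T * T = C ∧ T.PosSemidef :=
    exists_sqrt_psd' hC.posSemidef
  have hTsymm : Tᵀ = T := by
    have := hTsd.isHermitian
    rwa [Matrix.IsHermitian, conjTranspose_eq_transpose_of_trivial] at this
  have hTdet : T.det ≠ 0 := by
    intro h0
    have : C.det = 0 := by rw [← hTT, det_mul, h0, mul_zero]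
    exact (ne_of_gt hC.det_pos) this
  have hTu : IsUnit T.det := isUnit_iff_ne_zero.mpr hTdet
  refine ⟨∑ i : Fin m, ∑ j : Fin m, (T⁻¹ i j)^2, by positivity, fun v => ?_⟩
  set w := T *ᵥ v with hw
  have hvw : v = T⁻¹ *ᵥ w := by
    rw [hw, mulVec_mulVec, nonsing_inv_mul T hTu, one_mulVec]
  have hww : w ⬝ᵥ w = v ⬝ᵥ (C *ᵥ v) := by
    calc w ⬝ᵥ w = w ⬝ᵥ (T *ᵥ v) := by rw [hw]
      _ = (w ᵥ* T) ⬝ᵥ v := dotProduct_mulVec w T v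
      _ = (Tᵀ *ᵥ w) ⬝ᵥ v := by rw [mulVec_transpose]
      _ = (T *ᵥ (T *ᵥ v)) ⬝ᵥ v := by rw [hTsymm, hw]
      _ = ((T * T) *ᵥ v) ⬝ᵥ v := by rw [mulVec_mulVec]
      _ = (C *ᵥ v) ⬝ᵥ v := by rw [hTT]
      _ = v ⬝ᵥ (C *ᵥ v) := dotProduct_comm _ _
  rw [← hww, hvw]
  have hrow : ∀ i : Fin m, ((T⁻¹ *ᵥ w) i)^2 ≤ (∑ j : Fin m, (T⁻¹ i j)^2) * (∑ j : Fin m, (w j)^2) := by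
    intro i
    have := Finset.sum_mul_sq_le_sq_mul_sq Finset.univ (fun j => T⁻¹ i j) (fun j => w j)
    simpa [mulVec, dotProduct] using this
  calc (T⁻¹ *ᵥ w) ⬝ᵥ (T⁻¹ *ᵥ w) = ∑ i : Fin m, ((T⁻¹ *ᵥ w) i)^2 := by
        simp [dotProduct, sq]
    _ ≤ ∑ i : Fin m, (∑ j : Fin m, (T⁻¹ i j)^2) * (∑ j : Fin m, (w j)^2) :=
        Finset.sum_le_sum fun i _ => hrow i
    _ = (∑ i : Fin m, ∑ j : Fin m, (T⁻¹ i j)^2) * (w ⬝ᵥ w) := by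
        rw [← Finset.sum_mul]
        congr 1
        simp [dotProduct, sq]

lemma construct' (hm : 0 < m) (C B : Matrix (Fin m) (Fin m) ℝ) (hC : C.PosSemidef) (hB : B.IsSymm)
    {ε : ℝ} (hε : 0 < ε) :
    ∃ R : Matrix (Fin m) (Fin m) ℝ,
      Rᵀ * (C + ε • 1) * R = 1 ∧
      (∀ p q : Fin m, p ≠ q → (Rᵀ * B * R) p q = 0) ∧
      0 < R.det := by
  have hCε : (C + ε • 1).PosDef := Matrix.PosDef.posSemidef_add hC (smul_one_posDef' hε)
  obtain ⟨R, h1, h2⟩ : ∃ R : Matrix (Fin m) (Fin m) ℝ,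
      Rᵀ * (C + ε • 1) * R = 1 ∧
      (∀ p q : Fin m, p ≠ q → (Rᵀ * B * R) p q = 0) := by
    obtain ⟨S, hSS, hSsd⟩ := exists_sqrt_psd' hCε.posSemidef
    have hSdet : S.det ≠ 0 := by
      intro h0
      have : (C + ε • 1).det = 0 := by rw [← hSS, det_mul, h0, mul_zero]
      exact (ne_of_gt hCε.det_pos) this
    have hSsymm : Sᵀ = S := by
      have := hSsd.isHermitian
      rwa [Matrix.IsHermitian, conjTranspose_eq_transpose_of_trivial] at this
    have hSu : IsUnit S.det := isUnit_iff_ne_zero.mpr hSdet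
    have hSinv : S⁻¹ * S = 1 := nonsing_inv_mul S hSu
    have hSinv' : S * S⁻¹ = 1 := mul_nonsing_inv S hSu
    set M := S⁻¹ * B * S⁻¹ with hM
    have hMH : M.IsHermitian := by
      rw [Matrix.IsHermitian, conjTranspose_eq_transpose_of_trivial, hM]
      rw [transpose_mul, transpose_mul, transpose_nonsing_inv, hSsymm, hB]
      rw [mul_assoc]
    set U : Matrix (Fin m) (Fin m) ℝ := (hMH.eigenvectorUnitary : Matrix (Fin m) (Fin m) ℝ)
    have hUdiag : star U * M * U = diagonal (RCLike.ofReal ∘ hMH.eigenvalues) :=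
      by
        have := hMH.conjStarAlgAut_star_eigenvectorUnitary
        simp only [Unitary.conjStarAlgAut_star_apply, Unitary.coe_star] at this
        exact this
    have hUU : star U * U = 1 := by
      have := hMH.eigenvectorUnitary.2
      rw [Unitary.mem_iff] at this
      exact this.1
    have hUstar : star U = Uᵀ := by
      rw [← conjTranspose_eq_transpose_of_trivial]
      rfl
    refine ⟨S⁻¹ * U, ?_, ?_⟩
    · rw [transpose_mul, transpose_nonsing_inv, hSsymm, ← hUstar]
      calc star U * S⁻¹ * (C + ε • 1) * (S⁻¹ * U)
          = star U * (S⁻¹ * (S * S) * S⁻¹) * U := by rw [hSS]; simp only [mul_assoc]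
        _ = 1 := by
            rw [← mul_assoc S⁻¹ S S, hSinv, one_mul, hSinv', mul_one]
            exact hUU
    · intro p q hpq
      have : (S⁻¹ * U)ᵀ * B * (S⁻¹ * U) = diagonal (RCLike.ofReal ∘ hMH.eigenvalues) := by
        rw [transpose_mul, transpose_nonsing_inv, hSsymm, ← hUstar]
        calc star U * S⁻¹ * B * (S⁻¹ * U) = star U * M * U := by rw [hM]; simp only [mul_assoc]
          _ = _ := hUdiag
      rw [this, diagonal_apply_ne _ hpq]
  have hRdet : R.det ≠ 0 := by
    intro h0
    have := congrArg Matrix.det h1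
    rw [det_mul, det_mul, det_transpose, h0, mul_zero, det_one] at this
    exact zero_ne_one this
  rcases lt_or_gt_of_ne hRdet with hneg | hpos
  · -- flip sign of first column
    set f : Fin m → ℝ := fun i => if i = ⟨0, hm⟩ then (-1:ℝ) else 1 with hf
    have hff : ∀ i, f i * f i = 1 := by
      intro i
      by_cases h : i = ⟨0, hm⟩ <;> simp [hf, h]
    have hfdet : (diagonal f).det = -1 := by
      rw [det_diagonal, hf, Finset.prod_ite_eq' Finset.univ (⟨0, hm⟩ : Fin m) (fun _ => (-1:ℝ))]
      simp
    refine ⟨R * diagonal f, ?_, ?_, ?_⟩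
    · have key : (R * diagonal f)ᵀ * (C + ε • 1) * (R * diagonal f)
          = diagonal f * (Rᵀ * (C + ε • 1) * R) * diagonal f := by
        rw [transpose_mul, diagonal_transpose]
        simp only [mul_assoc]
      rw [key, h1, mul_one, diagonal_mul_diagonal]
      have : (fun i => f i * f i) = fun _ => (1:ℝ) := funext hff
      rw [this, diagonal_one]
    · intro p q hpq
      have : (R * diagonal f)ᵀ * B * (R * diagonal f)
          = diagonal f * (Rᵀ * B * R) * diagonal f := by
        rw [transpose_mul, diagonal_transpose]
        simp only [mul_assoc]
      rw [this, mul_diagonal, diagonal_mul, h2 p q hpq]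
      ring
    · rw [det_mul, hfdet]
      nlinarith
  · exact ⟨R, h1, h2, hpos⟩
lemma abs_le_of_sq_le' {a b : ℝ} (h : a^2 ≤ b^2) (hb : 0 ≤ b) : |a| ≤ b := by
  nlinarith [sq_abs a, abs_nonneg a]

lemma key' (hm : 0 < m) (C B : Matrix (Fin m) (Fin m) ℝ) (hC : C.PosSemidef) (hB : B.IsSymm) :
    ∃ P : ℕ → Matrix (Fin m) (Fin m) ℝ,
      (∀ k, (P k).det = 1) ∧
      (∀ p q : Fin m, p ≠ q →
        Tendsto (fun k => ((P k)ᵀ * C * (P k)) p q) atTop (𝓝 (0:ℝ))) ∧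
      (∀ k, ∀ p q : Fin m, p ≠ q → ((P k)ᵀ * B * (P k)) p q = 0) := by
  set ε : ℕ → ℝ := fun k => 1 / (k + 1) with hε
  have hεpos : ∀ k, 0 < ε k := fun k => by positivity
  have hεlim : Tendsto ε atTop (𝓝 0) := tendsto_one_div_add_atTop_nhds_zero_nat
  choose R hR1 hR2 hR3 using fun k => construct' hm C B hC hB (hεpos k)
  set d : ℕ → ℝ := fun k => (C + ε k • 1).det with hd
  have hdpos : ∀ k, 0 < d k := fun k =>
    (Matrix.PosDef.posSemidef_add hC (smul_one_posDef' (hεpos k))).det_pos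
  set lam : ℕ → ℝ := fun k => d k ^ ((1:ℝ) / (2 * m)) with hlam
  have hlampos : ∀ k, 0 < lam k := fun k => Real.rpow_pos_of_pos (hdpos k) _
  have hlampow : ∀ k, lam k ^ (2 * m) = d k := by
    intro k
    rw [hlam]
    rw [← Real.rpow_natCast (d k ^ ((1:ℝ) / (2 * m))) (2 * m),
      ← Real.rpow_mul (le_of_lt (hdpos k))]
    have hc : ((2 * m : ℕ) : ℝ) = 2 * (m:ℝ) := by push_cast; ring
    have hm' : (0:ℝ) < (m:ℝ) := by exact_mod_cast hm
    rw [one_div, hc, inv_mul_cancel₀ (by linarith), Real.rpow_one]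
  refine ⟨fun k => lam k • R k, ?_, ?_, ?_⟩
  · intro k
    have hdet2 : (R k).det ^ 2 * d k = 1 := by
      have := congrArg Matrix.det (hR1 k)
      rw [det_mul, det_mul, det_transpose, det_one] at this
      rw [← this, hd]
      ring
    have hdetsm : (lam k • R k).det = lam k ^ m * (R k).det := by
      rw [det_smul, Fintype.card_fin]
    rw [hdetsm]
    have hx : 0 < lam k ^ m * (R k).det := mul_pos (pow_pos (hlampos k) m) (hR3 k)
    have hsq : (lam k ^ m * (R k).det) ^ 2 = 1 := by
      have h2 : (lam k ^ m) ^ 2 = d k := by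
        rw [← pow_mul, mul_comm m 2]
        exact hlampow k
      calc (lam k ^ m * (R k).det) ^ 2 = (lam k ^ m) ^ 2 * ((R k).det ^ 2) := by ring
        _ = d k * (R k).det ^ 2 := by rw [h2]
        _ = 1 := by rw [← hdet2]; ring
    nlinarith
  · -- off-diagonal entries of C
    intro p q hpq
    -- basic entry computations
    have hentry : ∀ (X : Matrix (Fin m) (Fin m) ℝ) k,
        ((lam k • R k)ᵀ * X * (lam k • R k)) p q
          = lam k ^ 2 * (((R k)ᵀ * X * R k) p q) := by
      intro X k
      rw [transpose_smul, smul_mul_assoc, smul_mul_assoc, mul_smul_comm, smul_smul]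
      simp [Matrix.smul_apply, sq]
    set N : ℕ → Matrix (Fin m) (Fin m) ℝ := fun k => (R k)ᵀ * R k with hN
    have hsplit : ∀ k, (R k)ᵀ * C * R k + ε k • N k = 1 := by
      intro k
      rw [← hR1 k, hN]
      rw [mul_add, add_mul]
      congr 1
      rw [mul_smul_comm, smul_mul_assoc, mul_one]
    have hNapp : ∀ k p' q', N k p' q' = ∑ j, R k j p' * R k j q' := by
      intro k p' q'
      simp [hN, mul_apply, transpose_apply]
    have hNdnn : ∀ k p', 0 ≤ N k p' p' := by
      intro k p'
      rw [hNapp]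
      exact Finset.sum_nonneg fun j _ => mul_self_nonneg _
    have hcnn : ∀ k p', 0 ≤ ((R k)ᵀ * C * R k) p' p' := by
      intro k p'
      rw [entry_eq']
      have := hC.dotProduct_mulVec_nonneg (fun j => R k j p')
      simpa using this
    have hdiag : ∀ k p', ((R k)ᵀ * C * R k) p' p' + ε k * N k p' p' = 1 := by
      intro k p'
      have := congrFun (congrFun (hsplit k) p') p'
      simpa [Matrix.add_apply, Matrix.smul_apply, one_apply_eq, smul_eq_mul] using this
    have hεNle : ∀ k p', ε k * N k p' p' ≤ 1 := by
      intro k p'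
      have := hdiag k p'
      have := hcnn k p'
      linarith [hdiag k p', hcnn k p']
    have hCS : ∀ k, (N k p q) ^ 2 ≤ N k p p * N k q q := by
      intro k
      rw [hNapp, hNapp, hNapp]
      have := Finset.sum_mul_sq_le_sq_mul_sq Finset.univ (fun j => R k j p) (fun j => R k j q)
      simpa [sq] using this
    have hoffC : ∀ k, ((R k)ᵀ * C * R k) p q = -(ε k * N k p q) := by
      intro k
      have := congrFun (congrFun (hsplit k) p) q
      have h1 : ((R k)ᵀ * C * R k) p q + ε k * N k p q = 0 := by
        simpa [Matrix.add_apply, Matrix.smul_apply, smul_eq_mul, one_apply_ne hpq] using this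
      linarith
    have habs : ∀ k, |((lam k • R k)ᵀ * C * (lam k • R k)) p q|
        = lam k ^ 2 * |ε k * N k p q| := by
      intro k
      rw [hentry C k, hoffC k, abs_mul, abs_neg]
      congr 1
      exact abs_of_pos (pow_pos (hlampos k) 2)
    -- limit of d
    have hdlim : Tendsto d atTop (𝓝 C.det) := by
      have hcont : Continuous fun x : ℝ => (C + x • (1 : Matrix (Fin m) (Fin m) ℝ)).det := by
        apply Continuous.matrix_det
        exact continuous_const.add (continuous_id.smul continuous_const)
      have := (hcont.tendsto 0).comp hεlim
      simp only [zero_smul, add_zero] at this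
      exact this
    by_cases hsing : C.det = 0
    · -- singular case : lam → 0 and |ε N| ≤ 1
      have hlamlim : Tendsto lam atTop (𝓝 0) := by
        have h2m : (0:ℝ) < 1 / (2 * m) := by positivity
        have := hdlim.rpow_const (p := (1:ℝ) / (2 * m)) (Or.inr (le_of_lt h2m))
        rw [hsing, Real.zero_rpow (ne_of_gt h2m)] at this
        exact this
      have hglim : Tendsto (fun k => lam k ^ 2) atTop (𝓝 0) := by
        have := hlamlim.mul hlamlim
        simpa [sq] using this
      apply squeeze_zero_norm _ hglim
      intro k
      rw [Real.norm_eq_abs, habs k]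
      have hb : |ε k * N k p q| ≤ 1 := by
        have hsq : (ε k * N k p q) ^ 2 ≤ 1 := by
          have h1 : (ε k * N k p q) ^ 2 = ε k ^ 2 * (N k p q) ^ 2 := by ring
          have h2 : ε k ^ 2 * (N k p q) ^ 2 ≤ (ε k * N k p p) * (ε k * N k q q) := by
            have := hCS k
            nlinarith [sq_nonneg (ε k), (hεpos k).le]
          have h3 : (ε k * N k p p) * (ε k * N k q q) ≤ 1 :=
            mul_le_one₀ (hεNle k p) (mul_nonneg (hεpos k).le (hNdnn k q)) (hεNle k q)
          linarith
        have h1 : (ε k * N k p q) ^ 2 ≤ (1:ℝ)^2 := by rw [one_pow]; exact hsq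
        exact abs_le_of_sq_le' h1 zero_le_one
      calc lam k ^ 2 * |ε k * N k p q| ≤ lam k ^ 2 * 1 :=
            mul_le_mul_of_nonneg_left hb (pow_pos (hlampos k) 2).le
        _ = lam k ^ 2 := mul_one _
    · -- positive definite case
      have hCpd : C.PosDef := by
        rw [posDef_iff_dotProduct_mulVec]
        refine ⟨hC.1, fun x hx => lt_of_le_of_ne (hC.dotProduct_mulVec_nonneg x) fun heq => hx ?_⟩
        have hmv : C *ᵥ x = 0 := (hC.dotProduct_mulVec_zero_iff x).mp heq.symm
        have hu : IsUnit C.det := isUnit_iff_ne_zero.mpr hsing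
        calc x = (C⁻¹ * C) *ᵥ x := by rw [nonsing_inv_mul C hu, one_mulVec]
          _ = C⁻¹ *ᵥ (C *ᵥ x) := (mulVec_mulVec _ _ _).symm
          _ = 0 := by rw [hmv, mulVec_zero]
      obtain ⟨K, hK0, hK⟩ := coercive' hCpd
      have hNle : ∀ k p', N k p' p' ≤ K := by
        intro k p'
        have h1 : N k p' p' ≤ K * (((R k)ᵀ * C * R k) p' p') := by
          have := hK (fun j => R k j p')
          rw [entry_eq']
          calc N k p' p' = (fun j => R k j p') ⬝ᵥ (fun j => R k j p') := by
                rw [hNapp]; simp [dotProduct]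
            _ ≤ _ := this
        have h2 : ((R k)ᵀ * C * R k) p' p' ≤ 1 := by
          have := hdiag k p'
          nlinarith [mul_nonneg (hεpos k).le (hNdnn k p')]
        nlinarith [hcnn k p']
      have hL : Tendsto lam atTop (𝓝 (C.det ^ ((1:ℝ)/(2*m)))) :=
        hdlim.rpow_const (Or.inl hsing)
      have hglim : Tendsto (fun k => lam k ^ 2 * (ε k * K)) atTop (𝓝 0) := by
        have h1 := (hL.mul hL).mul (hεlim.mul_const K)
        simpa [sq] using h1.congr fun k => by ring
      apply squeeze_zero_norm _ hglim
      intro k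
      rw [Real.norm_eq_abs, habs k]
      have hb : |ε k * N k p q| ≤ ε k * K := by
        have hsq : (ε k * N k p q) ^ 2 ≤ (ε k * K) ^ 2 := by
          have h2 : (ε k * N k p q) ^ 2 ≤ (ε k * N k p p) * (ε k * N k q q) := by
            nlinarith [hCS k, sq_nonneg (ε k), (hεpos k).le]
          have h3 : ε k * N k p p ≤ ε k * K := by nlinarith [(hεpos k).le, hNle k p]
          have h4 : ε k * N k q q ≤ ε k * K := by nlinarith [(hεpos k).le, hNle k q]
          nlinarith [mul_nonneg (hεpos k).le (hNdnn k p), mul_nonneg (hεpos k).le (hNdnn k q)]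
        exact abs_le_of_sq_le' hsq (mul_nonneg (hεpos k).le hK0)
      exact mul_le_mul_of_nonneg_left hb (pow_pos (hlampos k) 2).le
  · -- B entries are exactly zero
    intro k p q hpq
    have hentry : ((lam k • R k)ᵀ * B * (lam k • R k)) p q
        = lam k ^ 2 * (((R k)ᵀ * B * R k) p q) := by
      rw [transpose_smul, smul_mul_assoc, smul_mul_assoc, mul_smul_comm, smul_smul]
      simp [Matrix.smul_apply, sq]
    rw [hentry, hR2 k p q hpq, mul_zero]
end TWSDAux

theorem stmt_7 (m : ℕ) (A B : Matrix (Fin m) (Fin m) ℝ)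
    (hA : A.IsSymm) (hB : B.IsSymm)
    (h : ∃ α β : ℝ, ¬(α = 0 ∧ β = 0) ∧ (α • A + β • B).PosSemidef) :
    TWSD ![A, B] := by
  obtain ⟨α, β, hαβ, hC⟩ := h
  rcases Nat.eq_zero_or_pos m with hm0 | hm
  · refine ⟨fun _ => 1, fun _ => det_one, fun i p q hpq => ?_⟩
    have : IsEmpty (Fin m) := by rw [hm0]; infer_instance
    exact (this.false p).elim
  set C : Matrix (Fin m) (Fin m) ℝ := α • A + β • B with hCdef
  have hdist : ∀ (P : Matrix (Fin m) (Fin m) ℝ) p q,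
      (Pᵀ * C * P) p q = α * ((Pᵀ * A * P) p q) + β * ((Pᵀ * B * P) p q) := by
    intro P p q
    have : Pᵀ * C * P = α • (Pᵀ * A * P) + β • (Pᵀ * B * P) := by
      rw [hCdef]
      simp only [mul_add, add_mul, mul_smul_comm, smul_mul_assoc]
    rw [this]
    simp [Matrix.add_apply, Matrix.smul_apply, smul_eq_mul]
  by_cases hα : α = 0
  · have hβ : β ≠ 0 := fun h' => hαβ ⟨hα, h'⟩
    obtain ⟨P, hPdet, hPC, hPA⟩ := key' hm C A hC hA
    refine ⟨P, hPdet, fun i p q hpq => ?_⟩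
    fin_cases i
    · -- A
      simp only [Matrix.cons_val_zero]
      have : ∀ k, ((P k)ᵀ * A * P k) p q = 0 := fun k => hPA k p q hpq
      exact tendsto_const_nhds.congr fun k => (this k).symm
    · -- B
      simp only [Matrix.cons_val_one, Matrix.head_cons]
      have heq : ∀ k, ((P k)ᵀ * B * P k) p q = β⁻¹ * (((P k)ᵀ * C * P k) p q) := by
        intro k
        have := hdist (P k) p q
        rw [hα, hPA k p q hpq] at this
        field_simp at this ⊢
        linarith
      have := (hPC p q hpq).const_mul β⁻¹
      rw [mul_zero] at this
      exact this.congr fun k => (heq k).symm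
  · obtain ⟨P, hPdet, hPC, hPB⟩ := key' hm C B hC hB
    refine ⟨P, hPdet, fun i p q hpq => ?_⟩
    fin_cases i
    · -- A
      simp only [Matrix.cons_val_zero]
      have heq : ∀ k, ((P k)ᵀ * A * P k) p q = α⁻¹ * (((P k)ᵀ * C * P k) p q) := by
        intro k
        have := hdist (P k) p q
        rw [hPB k p q hpq] at this
        field_simp at this ⊢
        linarith
      have := (hPC p q hpq).const_mul α⁻¹
      rw [mul_zero] at this
      exact this.congr fun k => (heq k).symm
    · -- B
      simp only [Matrix.cons_val_one, Matrix.head_cons]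
      have : ∀ k, ((P k)ᵀ * B * P k) p q = 0 := fun k => hPB k p q hpq
      exact tendsto_const_nhds.congr fun k => (this k).symm
end

section
/- Let A and B be real symmetric m×m matrices with A invertible. If A⁻¹B has at least one real eigenvalue (i.e., there exists λ ∈ ℝ which is a root of the characteristic polynomial of A⁻¹B), then the pair {A, B} is TWSD. -/
open Matrix Filter Topology

namespace TWSDProof

variable {m : ℕ} {ι : Type*}

/-- entry of a congruence as dot product of columns -/
lemma conj_apply (R M : Matrix (Fin m) (Fin m) ℝ) (p q : Fin m) :
    (Rᵀ * M * R) p q = (fun i => R i p) ⬝ᵥ (M *ᵥ (fun i => R i q)) := by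
  simp only [Matrix.mul_apply, Matrix.transpose_apply, Matrix.mulVec, dotProduct,
    Finset.sum_mul, Finset.mul_sum]
  rw [Finset.sum_comm]
  apply Finset.sum_congr rfl
  intro i _
  apply Finset.sum_congr rfl
  intro j _
  ring

/-- symmetric matrix moves across dot products -/
lemma symdot {A : Matrix (Fin m) (Fin m) ℝ} (hA : A.IsSymm) (x y : Fin m → ℝ) :
    x ⬝ᵥ (A *ᵥ y) = (A *ᵥ x) ⬝ᵥ y := by
  rw [Matrix.dotProduct_mulVec, ← Matrix.mulVec_transpose, hA]

lemma twsd_of_le_one (hm : m ≤ 1) (A : ι → Matrix (Fin m) (Fin m) ℝ) : TWSD A := by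
  refine ⟨fun _ => 1, fun _ => Matrix.det_one, fun i p q hpq => absurd ?_ hpq⟩
  exact Fin.ext (by omega)

/-- if all off-diagonal entries of row/column i₀ of every matrix vanish,
the family is TWSD via diagonal scalings -/
lemma pivot (M : ι → Matrix (Fin m) (Fin m) ℝ) (i₀ : Fin m)
    (h : ∀ i p q, p ≠ q → (p = i₀ ∨ q = i₀) → M i p q = 0) : TWSD M := by
  classical
  set d : ℕ → Fin m → ℝ :=
    fun k p => if p = i₀ then ((k : ℝ) + 1) ^ (m - 1) else ((k : ℝ) + 1)⁻¹ with hd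
  have hk0 : ∀ k : ℕ, ((k : ℝ) + 1) ≠ 0 := fun k => by positivity
  refine ⟨fun k => Matrix.diagonal (d k), ?_, ?_⟩
  · intro k
    rw [Matrix.det_diagonal, ← Finset.mul_prod_erase Finset.univ _ (Finset.mem_univ i₀)]
    have h1 : d k i₀ = ((k : ℝ) + 1) ^ (m - 1) := if_pos rfl
    have h2 : ∏ p ∈ Finset.univ.erase i₀, d k p = (((k : ℝ) + 1)⁻¹) ^ (m - 1) := by
      rw [Finset.prod_congr rfl (fun p hp => if_neg (Finset.mem_erase.1 hp).1),
        Finset.prod_const, Finset.card_erase_of_mem (Finset.mem_univ i₀), Finset.card_univ,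
        Fintype.card_fin]
    rw [h1, h2, inv_pow, mul_inv_cancel₀ (pow_ne_zero _ (hk0 k))]
  · intro i p q hpq
    have hent : ∀ k, ((Matrix.diagonal (d k))ᵀ * M i * Matrix.diagonal (d k)) p q
        = d k p * M i p q * d k q := by
      intro k
      rw [Matrix.diagonal_transpose, Matrix.mul_diagonal, Matrix.diagonal_mul]
    rcases em (p = i₀ ∨ q = i₀) with hc | hc
    · have hz := h i p q hpq hc
      have : ∀ k, ((Matrix.diagonal (d k))ᵀ * M i * Matrix.diagonal (d k)) p q = 0 := by
        intro k; rw [hent k, hz, mul_zero, zero_mul]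
      exact Tendsto.congr (fun k => (this k).symm) (tendsto_const_nhds (x := (0:ℝ)))
    · push_neg at hc
      have hdp : ∀ k, d k p = ((k : ℝ) + 1)⁻¹ := fun k => if_neg hc.1
      have hdq : ∀ k, d k q = ((k : ℝ) + 1)⁻¹ := fun k => if_neg hc.2
      have hinv : Tendsto (fun k : ℕ => ((k : ℝ) + 1)⁻¹) atTop (𝓝 0) := by
        simpa [one_div] using tendsto_one_div_add_atTop_nhds_zero_nat (𝕜 := ℝ)
      have : Tendsto (fun k : ℕ => ((k : ℝ) + 1)⁻¹ * M i p q * ((k : ℝ) + 1)⁻¹) atTop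
          (𝓝 (0 * M i p q * 0)) := (hinv.mul_const _).mul hinv
      rw [zero_mul, mul_zero] at this
      refine this.congr fun k => ?_
      rw [hent k, hdp k, hdq k]

/-- congruence transfer with unit determinant -/
lemma congr_transfer (A : ι → Matrix (Fin m) (Fin m) ℝ) (R : Matrix (Fin m) (Fin m) ℝ)
    (hR : IsUnit R.det) (h : TWSD (fun i => Rᵀ * A i * R)) : TWSD A := by
  classical
  rcases Nat.eq_zero_or_pos m with hm | hm
  · exact twsd_of_le_one (by omega) A
  obtain ⟨Q, hQdet, hQ⟩ := h
  have hd : R.det ≠ 0 := by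
    intro h0; rw [h0] at hR; exact (by simp : ¬ IsUnit (0:ℝ)) hR
  set i₀ : Fin m := ⟨0, hm⟩ with hi₀
  set lam : Fin m → ℝ := fun p => if p = i₀ then R.det⁻¹ else 1 with hlam
  set S := Matrix.diagonal lam with hS
  refine ⟨fun k => R * Q k * S, ?_, ?_⟩
  · intro k
    rw [Matrix.det_mul, Matrix.det_mul, hQdet, mul_one, hS, Matrix.det_diagonal, hlam]
    rw [Finset.prod_ite_eq' Finset.univ i₀ (fun _ => R.det⁻¹)]
    simp [mul_inv_cancel₀ hd]
  · intro i p q hpq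
    have hmat : ∀ k, (R * Q k * S)ᵀ * A i * (R * Q k * S)
        = S * ((Q k)ᵀ * ((fun i => Rᵀ * A i * R) i) * Q k) * S := by
      intro k
      simp only [Matrix.transpose_mul, hS, Matrix.diagonal_transpose, Matrix.mul_assoc]
    have hent : ∀ k, ((R * Q k * S)ᵀ * A i * (R * Q k * S)) p q
        = lam p * ((Q k)ᵀ * ((fun i => Rᵀ * A i * R) i) * Q k) p q * lam q := by
      intro k
      rw [hmat k, hS, Matrix.mul_diagonal, Matrix.diagonal_mul]
    have := ((hQ i p q hpq).const_mul (lam p)).mul_const (lam q)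
    simp only [mul_zero, zero_mul] at this
    exact this.congr fun k => (hent k).symm

/-- limit trick : if D t are det-one congruences fixing A and driving C to Cinf -/
lemma entry_conj_tendsto (Q : Matrix (Fin m) (Fin m) ℝ) (X : ℕ → Matrix (Fin m) (Fin m) ℝ)
    (Y : Matrix (Fin m) (Fin m) ℝ) (hX : ∀ i j, Tendsto (fun t => X t i j) atTop (𝓝 (Y i j)))
    (p q : Fin m) :
    Tendsto (fun t => (Qᵀ * X t * Q) p q) atTop (𝓝 ((Qᵀ * Y * Q) p q)) := by
  have hrw : ∀ Z : Matrix (Fin m) (Fin m) ℝ, (Qᵀ * Z * Q) p q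
      = ∑ j : Fin m, ∑ i : Fin m, Q i p * Z i j * Q j q := by
    intro Z
    simp only [Matrix.mul_apply, Matrix.transpose_apply, Finset.sum_mul]
  have : Tendsto (fun t => ∑ j : Fin m, ∑ i : Fin m, Q i p * X t i j * Q j q) atTop
      (𝓝 (∑ j : Fin m, ∑ i : Fin m, Q i p * Y i j * Q j q)) :=
    tendsto_finset_sum _ fun j _ => tendsto_finset_sum _ fun i _ =>
      ((hX i j).const_mul _).mul_const _
  rw [← hrw] at this
  exact this.congr fun t => (hrw (X t)).symm

lemma limit_trick (A C Cinf : Matrix (Fin m) (Fin m) ℝ) (D : ℕ → Matrix (Fin m) (Fin m) ℝ)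
    (hdet : ∀ t, (D t).det = 1) (hDA : ∀ t, (D t)ᵀ * A * D t = A)
    (hDC : ∀ p q, Tendsto (fun t => ((D t)ᵀ * C * D t) p q) atTop (𝓝 (Cinf p q)))
    (h : TWSD ![A, Cinf]) : TWSD ![A, C] := by
  classical
  obtain ⟨Q, hQdet, hQ⟩ := h
  have hbig : ∀ k : ℕ, ∃ t : ℕ, ∀ p q : Fin m,
      dist (((Q k)ᵀ * ((D t)ᵀ * C * D t) * Q k) p q) (((Q k)ᵀ * Cinf * Q k) p q)
        < ((k : ℝ) + 1)⁻¹ := by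
    intro k
    have hconv : ∀ p q : Fin m,
        Tendsto (fun t => ((Q k)ᵀ * ((D t)ᵀ * C * D t) * Q k) p q) atTop
          (𝓝 (((Q k)ᵀ * Cinf * Q k) p q)) :=
      fun p q => entry_conj_tendsto (Q k) (fun t => (D t)ᵀ * C * D t) Cinf hDC p q
    have hev : ∀ᶠ t in atTop, ∀ p q : Fin m,
        dist (((Q k)ᵀ * ((D t)ᵀ * C * D t) * Q k) p q) (((Q k)ᵀ * Cinf * Q k) p q)
          < ((k : ℝ) + 1)⁻¹ := by
      refine Filter.eventually_all.2 fun p => Filter.eventually_all.2 fun q => ?_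
      exact Metric.tendsto_nhds.1 (hconv p q) _ (by positivity)
    exact hev.exists
  choose t ht using hbig
  refine ⟨fun k => D (t k) * Q k, ?_, ?_⟩
  · intro k; rw [Matrix.det_mul, hdet, hQdet, one_mul]
  · intro i p q hpq
    have hassoc : ∀ (Z : Matrix (Fin m) (Fin m) ℝ) (k : ℕ),
        (D (t k) * Q k)ᵀ * Z * (D (t k) * Q k) = (Q k)ᵀ * ((D (t k))ᵀ * Z * D (t k)) * Q k := by
      intro Z k
      simp only [Matrix.transpose_mul, Matrix.mul_assoc]
    fin_cases i
    · have := hQ 0 p q hpq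
      simp only [Matrix.cons_val_zero] at this ⊢
      refine this.congr fun k => ?_
      show ((Q k)ᵀ * A * Q k) p q = ((D (t k) * Q k)ᵀ * A * (D (t k) * Q k)) p q
      rw [hassoc A k, hDA (t k)]
    · have hg := hQ 1 p q hpq
      simp only [Matrix.cons_val_one, Matrix.head_cons, Matrix.cons_val_zero] at hg ⊢
      have hfg : Tendsto (fun k => ((Q k)ᵀ * ((D (t k))ᵀ * C * D (t k)) * Q k) p q
          - ((Q k)ᵀ * Cinf * Q k) p q) atTop (𝓝 0) := by
        refine squeeze_zero_norm (fun k => ?_)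
          (by simpa [one_div] using tendsto_one_div_add_atTop_nhds_zero_nat (𝕜 := ℝ))
        rw [Real.norm_eq_abs, ← Real.dist_eq]
        exact (ht k p q).le
      have := hfg.add hg
      rw [zero_add] at this
      refine this.congr fun k => ?_
      show _ = ((D (t k) * Q k)ᵀ * C * (D (t k) * Q k)) p q
      rw [hassoc C k]; ring

/-- Case 1: kernel vector of C which is not A-isotropic -/
lemma case1 (A C : Matrix (Fin m) (Fin m) ℝ) (hA : A.IsSymm) (hC : C.IsSymm)
    (w : Fin m → ℝ) (hw : C *ᵥ w = 0) (hα : w ⬝ᵥ (A *ᵥ w) ≠ 0) : TWSD ![A, C] := by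
  classical
  set α := w ⬝ᵥ (A *ᵥ w) with hαdef
  have hw0 : w ≠ 0 := by
    rintro rfl
    apply hα
    simp [hαdef]
  obtain ⟨i₀, hi₀⟩ : ∃ i, w i ≠ 0 := by
    by_contra hcon
    push_neg at hcon
    exact hw0 (funext hcon)
  set r : Fin m → ℝ := fun q => if q = i₀ then 1 else -((A *ᵥ w) q) / α with hr
  set X : Matrix (Fin m) (Fin m) ℝ := (1 : Matrix (Fin m) (Fin m) ℝ).updateCol i₀ w with hX
  set Y : Matrix (Fin m) (Fin m) ℝ := (1 : Matrix (Fin m) (Fin m) ℝ).updateRow i₀ r with hY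
  set R : Matrix (Fin m) (Fin m) ℝ := X * Y with hR
  have hdetX : X.det = w i₀ := by
    rw [hX, ← Matrix.cramer_apply]
    rw [Matrix.cramer_one]
    rfl
  have hdetY : Y.det = 1 := by
    rw [← Matrix.det_transpose, hY, ← Matrix.updateCol_transpose, Matrix.transpose_one,
      ← Matrix.cramer_apply, Matrix.cramer_one]
    simp [hr]
  have hdetR : IsUnit R.det := by
    rw [hR, Matrix.det_mul, hdetX, hdetY, mul_one, isUnit_iff_ne_zero]
    exact hi₀
  -- columns of R
  have hXw : X *ᵥ Pi.single i₀ 1 = w := by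
    rw [Matrix.mulVec_single]
    funext i
    simp [hX, Matrix.updateCol_apply]
  have hXq : ∀ q, q ≠ i₀ → X *ᵥ Pi.single q 1 = Pi.single q 1 := by
    intro q hq
    rw [Matrix.mulVec_single]
    funext i
    simp only [Pi.smul_apply, Matrix.col_apply, op_smul_eq_mul, hX, Matrix.updateCol_apply, if_neg hq, mul_one]
    rw [Matrix.one_apply]
    simp [Pi.single_apply, eq_comm]
  have hcol : ∀ q, (fun i => R i q) = X *ᵥ (fun p => Y p q) := by
    intro q
    funext i
    simp [hR, Matrix.mul_apply, Matrix.mulVec, dotProduct]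
  have hcol0 : (fun i => R i i₀) = w := by
    rw [hcol i₀]
    have : (fun p => Y p i₀) = Pi.single i₀ (1:ℝ) := by
      funext p
      simp only [hY, Matrix.updateRow_apply, hr]
      by_cases hp : p = i₀
      · simp [hp, Pi.single_apply]
      · rw [if_neg hp, Matrix.one_apply, Pi.single_apply]
    rw [this, hXw]
  have hcolq : ∀ q, q ≠ i₀ → (fun i => R i q) = Pi.single q (1:ℝ) + r q • w := by
    intro q hq
    rw [hcol q]
    have : (fun p => Y p q) = (Pi.single q (1:ℝ) : Fin m → ℝ)
        + r q • (Pi.single i₀ (1:ℝ) : Fin m → ℝ) := by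
      funext p
      simp only [hY, Matrix.updateRow_apply, Pi.add_apply, Pi.smul_apply, smul_eq_mul]
      by_cases hp : p = i₀
      · subst hp
        rw [if_pos rfl]
        have h1 : (Pi.single q (1:ℝ) : Fin m → ℝ) p = 0 := by
          rw [Pi.single_apply, if_neg (fun h => hq (by rw [← h]))]
        have h2 : (Pi.single p (1:ℝ) : Fin m → ℝ) p = 1 := by
          rw [Pi.single_apply, if_pos rfl]
        rw [h1, h2]
        ring
      · rw [if_neg hp, Matrix.one_apply, Pi.single_apply, Pi.single_apply, if_neg hp, mul_zero,
          add_zero]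
    rw [this, Matrix.mulVec_add, Matrix.mulVec_smul, hXw, hXq q hq]
  -- key zero entries
  have hAsym := fun x y => symdot hA x y
  have hArow : ∀ q, q ≠ i₀ → ((fun i => R i i₀) ⬝ᵥ (A *ᵥ (fun i => R i q))) = 0 := by
    intro q hq
    rw [hcol0, hcolq q hq, Matrix.mulVec_add, Matrix.mulVec_smul, dotProduct_add,
      dotProduct_smul, hAsym w (Pi.single q 1), dotProduct_single, smul_eq_mul]
    simp only [mul_one, ← hαdef]
    rw [hr]
    simp only [if_neg hq]
    field_simp; ring
  have hAcol : ∀ q, q ≠ i₀ → ((fun i => R i q) ⬝ᵥ (A *ᵥ (fun i => R i i₀))) = 0 := by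
    intro q hq
    rw [dotProduct_comm, ← hAsym]
    exact hArow q hq
  have hCrow : ∀ x, w ⬝ᵥ (C *ᵥ x) = 0 := by
    intro x
    rw [symdot hC, hw, zero_dotProduct]
  -- conclude
  apply congr_transfer ![A, C] R hdetR
  have hfam : (fun i => Rᵀ * ![A, C] i * R) = ![Rᵀ * A * R, Rᵀ * C * R] := by
    funext i
    fin_cases i <;> simp
  rw [hfam]
  apply pivot _ i₀
  intro i p q hpq hor
  fin_cases i
  · -- A
    show (Rᵀ * A * R) p q = 0
    rw [conj_apply]
    rcases hor with h1 | h1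
    · subst h1
      exact hArow q (Ne.symm hpq)
    · subst h1
      exact hAcol p hpq
  · -- C
    show (Rᵀ * C * R) p q = 0
    rw [conj_apply]
    rcases hor with h1 | h1
    · subst h1
      rw [hcol0]
      exact hCrow _
    · subst h1
      rw [hcol0, hw, dotProduct_zero]

/-- Case 2: A-isotropic kernel vector of C -/
lemma col_mul (X Y : Matrix (Fin m) (Fin m) ℝ) (q : Fin m) :
    (fun i => (X * Y) i q) = X *ᵥ (fun p => Y p q) := by
  funext i
  simp [Matrix.mul_apply, Matrix.mulVec, dotProduct]

lemma conj_isSymm {R M : Matrix (Fin m) (Fin m) ℝ} (hM : M.IsSymm) : (Rᵀ * M * R).IsSymm := by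
  rw [Matrix.IsSymm] at *
  rw [Matrix.transpose_mul, Matrix.transpose_mul, Matrix.transpose_transpose, hM,
    Matrix.mul_assoc]

set_option maxHeartbeats 1000000 in
lemma case2 (A C : Matrix (Fin m) (Fin m) ℝ) (hA : A.IsSymm) (hC : C.IsSymm)
    (hAdet : IsUnit A.det) (v : Fin m → ℝ) (hv : v ≠ 0) (hCv : C *ᵥ v = 0)
    (hiso : v ⬝ᵥ (A *ᵥ v) = 0) : TWSD ![A, C] := by
  classical
  have hAsym := fun x y => symdot hA x y
  have hvv : v ⬝ᵥ v ≠ 0 := fun h => hv ((dotProduct_self_eq_zero).1 h)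
  -- construct u with uᵀAv = 1, uᵀAu = 0
  obtain ⟨u₀, hu₀Av⟩ : ∃ u₀ : Fin m → ℝ, u₀ ⬝ᵥ (A *ᵥ v) = 1 := by
    refine ⟨(v ⬝ᵥ v)⁻¹ • (A⁻¹ *ᵥ v), ?_⟩
    have hAAinv : A *ᵥ (A⁻¹ *ᵥ v) = v := by
      rw [Matrix.mulVec_mulVec, Matrix.mul_nonsing_inv A hAdet, Matrix.one_mulVec]
    rw [smul_dotProduct, hAsym (A⁻¹ *ᵥ v) v, hAAinv, smul_eq_mul, inv_mul_cancel₀ hvv]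
  have hvAu₀ : v ⬝ᵥ (A *ᵥ u₀) = 1 := by
    rw [hAsym v u₀, dotProduct_comm]
    exact hu₀Av
  set β : ℝ := u₀ ⬝ᵥ (A *ᵥ u₀) / 2 with hβ
  set u : Fin m → ℝ := u₀ - β • v with hu
  have huAv : u ⬝ᵥ (A *ᵥ v) = 1 := by
    rw [hu, sub_dotProduct, hu₀Av, smul_dotProduct, hiso, smul_eq_mul, mul_zero, sub_zero]
  have hvAu : v ⬝ᵥ (A *ᵥ u) = 1 := by
    rw [hAsym v u, dotProduct_comm]
    exact huAv
  have huAu : u ⬝ᵥ (A *ᵥ u) = 0 := by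
    rw [hu, Matrix.mulVec_sub, Matrix.mulVec_smul, dotProduct_sub, sub_dotProduct,
      sub_dotProduct]
    rw [dotProduct_smul, smul_dotProduct, smul_dotProduct, dotProduct_smul]
    simp only [smul_eq_mul, hu₀Av, hvAu₀, hiso, mul_zero, mul_one, hβ]
    ring
  -- first completion : column i₀ ↦ v
  obtain ⟨i₀, hi₀⟩ : ∃ i, v i ≠ 0 := by
    by_contra hcon
    push_neg at hcon
    exact hv (funext hcon)
  set R₁ : Matrix (Fin m) (Fin m) ℝ := (1 : Matrix (Fin m) (Fin m) ℝ).updateCol i₀ v with hR₁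
  have hdetR₁ : R₁.det = v i₀ := by
    rw [hR₁, ← Matrix.cramer_apply, Matrix.cramer_one]
    rfl
  have hR₁unit : IsUnit R₁.det := by rw [hdetR₁, isUnit_iff_ne_zero]; exact hi₀
  set u' : Fin m → ℝ := R₁⁻¹ *ᵥ u with hu'
  have hR₁u' : R₁ *ᵥ u' = u := by
    rw [hu', Matrix.mulVec_mulVec, Matrix.mul_nonsing_inv R₁ hR₁unit, Matrix.one_mulVec]
  have hR₁single : R₁ *ᵥ Pi.single i₀ 1 = v := by
    rw [Matrix.mulVec_single]
    funext i
    simp [hR₁, Matrix.updateCol_apply]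
  obtain ⟨i₁, hi₁ne, hi₁⟩ : ∃ i₁, i₁ ≠ i₀ ∧ u' i₁ ≠ 0 := by
    by_contra hcon
    push_neg at hcon
    have hsingle : u' = u' i₀ • (Pi.single i₀ 1 : Fin m → ℝ) := by
      funext i
      by_cases hii : i = i₀
      · subst hii; simp
      · rw [hcon i hii, Pi.smul_apply, Pi.single_apply, if_neg hii, smul_eq_mul, mul_zero]
    have hueq : u = u' i₀ • v := by
      conv_lhs => rw [← hR₁u', hsingle]
      rw [Matrix.mulVec_smul, hR₁single]
    rw [hueq, smul_dotProduct, hiso, smul_eq_mul, mul_zero] at huAv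
    exact one_ne_zero huAv.symm
  -- second completion : column i₁ ↦ u
  set R₂ : Matrix (Fin m) (Fin m) ℝ := R₁.updateCol i₁ u with hR₂
  have hdetR₂ : R₂.det = R₁.det * u' i₁ := by
    rw [hR₂, ← Matrix.cramer_apply, Matrix.cramer_eq_adjugate_mulVec]
    have hadj : R₁.adjugate = R₁.det • R₁⁻¹ := by
      rw [Matrix.inv_def, smul_smul, Ring.inverse_eq_inv]
      rw [mul_inv_cancel₀ (by rw [hdetR₁]; exact hi₀), one_smul]
    rw [hadj, Matrix.smul_mulVec, Pi.smul_apply, smul_eq_mul, ← hu']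
  have hR₂unit : IsUnit R₂.det := by
    rw [hdetR₂, hdetR₁, isUnit_iff_ne_zero]
    exact mul_ne_zero hi₀ hi₁
  have hR₂vcol : R₂ *ᵥ Pi.single i₀ 1 = v := by
    rw [Matrix.mulVec_single]
    funext i
    simp only [Pi.smul_apply, Matrix.col_apply, op_smul_eq_mul]
    rw [mul_one, hR₂, Matrix.updateCol_apply, if_neg (fun h => hi₁ne h.symm), hR₁,
      Matrix.updateCol_apply, if_pos rfl]
  have hR₂ucol : R₂ *ᵥ Pi.single i₁ 1 = u := by
    rw [Matrix.mulVec_single]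
    funext i
    simp only [Pi.smul_apply, Matrix.col_apply, op_smul_eq_mul]
    rw [mul_one, hR₂, Matrix.updateCol_apply, if_pos rfl]
  have hR₂qcol : ∀ q, q ≠ i₀ → q ≠ i₁ → R₂ *ᵥ Pi.single q 1 = Pi.single q 1 := by
    intro q hq0 hq1
    rw [Matrix.mulVec_single]
    funext i
    simp only [Pi.smul_apply, Matrix.col_apply, op_smul_eq_mul]
    rw [mul_one, hR₂, Matrix.updateCol_apply, if_neg hq1, hR₁,
      Matrix.updateCol_apply, if_neg hq0, Matrix.one_apply, Pi.single_apply, eq_comm]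
  -- elimination matrix
  set a : Fin m → ℝ := fun q => if q = i₀ ∨ q = i₁ then 0 else -((A *ᵥ u) q) with ha
  set b : Fin m → ℝ := fun q => if q = i₀ ∨ q = i₁ then 0 else -((A *ᵥ v) q) with hb
  have ha0 : a i₀ = 0 := by rw [ha]; simp
  have ha1 : a i₁ = 0 := by rw [ha]; simp
  have hb0 : b i₀ = 0 := by rw [hb]; simp
  have hb1 : b i₁ = 0 := by rw [hb]; simp
  set E : Matrix (Fin m) (Fin m) ℝ :=
    Matrix.of (fun p q => (if p = i₀ then a q else 0) + (if p = i₁ then b q else 0)) with hE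
  have hE2 : E * E = 0 := by
    ext i j
    rw [Matrix.mul_apply, Matrix.zero_apply]
    apply Finset.sum_eq_zero
    intro p _
    show (E i p) * (E p j) = 0
    by_cases hp0 : p = i₀
    · subst hp0
      have : E i p = 0 := by
        rw [hE, Matrix.of_apply, ha0, hb0]
        simp
      rw [this, zero_mul]
    · by_cases hp1 : p = i₁
      · subst hp1
        have : E i p = 0 := by
          rw [hE, Matrix.of_apply, ha1, hb1]
          simp
        rw [this, zero_mul]
      · have : E p j = 0 := by
          rw [hE, Matrix.of_apply, if_neg hp0, if_neg hp1, add_zero]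
        rw [this, mul_zero]
  set N : Matrix (Fin m) (Fin m) ℝ := 1 + E with hN
  have hNdetunit : IsUnit N.det := by
    apply Matrix.isUnit_det_of_right_inverse (B := 1 - E)
    have hexp : (1 + E) * (1 - E) = 1 - E * E := by noncomm_ring
    rw [hN, hexp, hE2, sub_zero]
  set R : Matrix (Fin m) (Fin m) ℝ := R₂ * N with hRdef
  have hRunit : IsUnit R.det := by
    rw [hRdef, Matrix.det_mul]
    exact hR₂unit.mul hNdetunit
  -- columns of R
  have hNcol0 : (fun p => N p i₀) = (Pi.single i₀ 1 : Fin m → ℝ) := by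
    funext p
    rw [hN, Matrix.add_apply, hE, Matrix.of_apply]
    by_cases hp : p = i₀
    · subst hp; simp [Matrix.one_apply, ha0, hb0, Pi.single_apply]
    · by_cases hp1 : p = i₁ <;> simp [Matrix.one_apply, Pi.single_apply, hp, hp1, ha0, hb0]
  have hNcol1 : (fun p => N p i₁) = (Pi.single i₁ 1 : Fin m → ℝ) := by
    funext p
    rw [hN, Matrix.add_apply, hE, Matrix.of_apply]
    by_cases hp : p = i₁
    · subst hp
      simp [Matrix.one_apply, Pi.single_apply, ha1, hb1, hi₁ne]
    · by_cases hp0 : p = i₀ <;> simp [Matrix.one_apply, Pi.single_apply, hp, hp0, ha1, hb1]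
  have hNcolq : ∀ q, q ≠ i₀ → q ≠ i₁ → (fun p => N p q)
      = (Pi.single q 1 : Fin m → ℝ) + a q • (Pi.single i₀ 1 : Fin m → ℝ)
        + b q • (Pi.single i₁ 1 : Fin m → ℝ) := by
    intro q hq0 hq1
    funext p
    rw [hN, Matrix.add_apply, hE, Matrix.of_apply]
    simp only [Pi.add_apply, Pi.smul_apply, smul_eq_mul, Matrix.one_apply, Pi.single_apply]
    by_cases hp0 : p = i₀
    · subst hp0
      rw [if_pos rfl, if_neg (fun h : p = i₁ => hi₁ne h.symm), if_neg (fun h : p = q => hq0 h.symm),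
        if_pos rfl, if_neg (fun h : p = i₁ => hi₁ne h.symm)]
      ring
    · by_cases hp1 : p = i₁
      · subst hp1
        rw [if_neg hp0, if_pos rfl, if_neg (fun h : p = q => hq1 h.symm), if_neg hp0, if_pos rfl]
        ring
      · rw [if_neg hp0, if_neg hp1, if_neg hp0, if_neg hp1]
        ring
  have hcolRv : (fun i => R i i₀) = v := by
    rw [hRdef, col_mul, hNcol0, hR₂vcol]
  have hcolRu : (fun i => R i i₁) = u := by
    rw [hRdef, col_mul, hNcol1, hR₂ucol]
  have hcolRq : ∀ q, q ≠ i₀ → q ≠ i₁ → (fun i => R i q)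
      = (Pi.single q 1 : Fin m → ℝ) + a q • v + b q • u := by
    intro q hq0 hq1
    rw [hRdef, col_mul, hNcolq q hq0 hq1, Matrix.mulVec_add, Matrix.mulVec_add,
      Matrix.mulVec_smul, Matrix.mulVec_smul, hR₂vcol, hR₂ucol, hR₂qcol q hq0 hq1]
  -- entries of M' = Rᵀ A R and C' = Rᵀ C R
  have hM00 : (Rᵀ * A * R) i₀ i₀ = 0 := by rw [conj_apply, hcolRv]; exact hiso
  have hM01 : (Rᵀ * A * R) i₀ i₁ = 1 := by rw [conj_apply, hcolRv, hcolRu]; exact hvAu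
  have hM10 : (Rᵀ * A * R) i₁ i₀ = 1 := by rw [conj_apply, hcolRv, hcolRu]; exact huAv
  have hM11 : (Rᵀ * A * R) i₁ i₁ = 0 := by rw [conj_apply, hcolRu]; exact huAu
  have hdotsingle : ∀ (x : Fin m → ℝ) q, x ⬝ᵥ (A *ᵥ (Pi.single q 1 : Fin m → ℝ)) = (A *ᵥ x) q := by
    intro x q
    rw [hAsym x (Pi.single q 1), dotProduct_single, mul_one]
  have haq : ∀ q, q ≠ i₀ → q ≠ i₁ → a q = -((A *ᵥ u) q) := by
    intro q hq0 hq1; rw [ha]; simp [hq0, hq1]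
  have hbq : ∀ q, q ≠ i₀ → q ≠ i₁ → b q = -((A *ᵥ v) q) := by
    intro q hq0 hq1; rw [hb]; simp [hq0, hq1]
  have hM0q : ∀ q, q ≠ i₀ → q ≠ i₁ → (Rᵀ * A * R) i₀ q = 0 := by
    intro q hq0 hq1
    rw [conj_apply, hcolRv, hcolRq q hq0 hq1, Matrix.mulVec_add, Matrix.mulVec_add,
      Matrix.mulVec_smul, Matrix.mulVec_smul, dotProduct_add, dotProduct_add,
      dotProduct_smul, dotProduct_smul, hdotsingle, smul_eq_mul, smul_eq_mul, hiso, hvAu,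
      hbq q hq0 hq1]
    ring
  have hM1q : ∀ q, q ≠ i₀ → q ≠ i₁ → (Rᵀ * A * R) i₁ q = 0 := by
    intro q hq0 hq1
    rw [conj_apply, hcolRu, hcolRq q hq0 hq1, Matrix.mulVec_add, Matrix.mulVec_add,
      Matrix.mulVec_smul, Matrix.mulVec_smul, dotProduct_add, dotProduct_add,
      dotProduct_smul, dotProduct_smul, hdotsingle, smul_eq_mul, smul_eq_mul, huAv, huAu,
      haq q hq0 hq1]
    ring
  have hMsymm : (Rᵀ * A * R).IsSymm := conj_isSymm hA
  have hCsymm' : (Rᵀ * C * R).IsSymm := conj_isSymm hC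
  have hMq0 : ∀ q, q ≠ i₀ → q ≠ i₁ → (Rᵀ * A * R) q i₀ = 0 := by
    intro q hq0 hq1
    rw [← hMsymm.apply, hM0q q hq0 hq1]
  have hMq1 : ∀ q, q ≠ i₀ → q ≠ i₁ → (Rᵀ * A * R) q i₁ = 0 := by
    intro q hq0 hq1
    rw [← hMsymm.apply, hM1q q hq0 hq1]
  have hC0q : ∀ q, (Rᵀ * C * R) i₀ q = 0 := by
    intro q
    rw [conj_apply, hcolRv, symdot hC, hCv, zero_dotProduct]
  have hCq0 : ∀ p, (Rᵀ * C * R) p i₀ = 0 := by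
    intro p
    rw [conj_apply, hcolRv, hCv, dotProduct_zero]
  -- the scaling matrices
  set lamt : ℕ → Fin m → ℝ :=
    fun t p => if p = i₀ then ((t : ℝ) + 1) else if p = i₁ then ((t : ℝ) + 1)⁻¹ else 1 with hlamt
  set D : ℕ → Matrix (Fin m) (Fin m) ℝ := fun t => Matrix.diagonal (lamt t) with hD
  have ht0 : ∀ t : ℕ, ((t : ℝ) + 1) ≠ 0 := fun t => by positivity
  have hdetD : ∀ t, (D t).det = 1 := by
    intro t
    rw [hD, Matrix.det_diagonal]
    rw [← Finset.mul_prod_erase Finset.univ _ (Finset.mem_univ i₀)]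
    rw [← Finset.mul_prod_erase _ _ (Finset.mem_erase.2 ⟨hi₁ne, Finset.mem_univ i₁⟩)]
    have e1 : lamt t i₀ = ((t : ℝ) + 1) := if_pos rfl
    have e2 : lamt t i₁ = ((t : ℝ) + 1)⁻¹ := by
      rw [hlamt]
      simp [hi₁ne]
    have e3 : ∏ p ∈ (Finset.univ.erase i₀).erase i₁, lamt t p = 1 := by
      apply Finset.prod_eq_one
      intro p hp
      have hp1 := (Finset.mem_erase.1 hp).1
      have hp0 := (Finset.mem_erase.1 (Finset.mem_erase.1 hp).2).1
      rw [hlamt]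
      simp only [if_neg hp0, if_neg hp1]
    rw [e1, e2, e3, mul_one, mul_inv_cancel₀ (ht0 t)]
  have hDentry : ∀ (t : ℕ) (Z : Matrix (Fin m) (Fin m) ℝ) (p q : Fin m),
      ((D t)ᵀ * Z * D t) p q = lamt t p * Z p q * lamt t q := by
    intro t Z p q
    rw [hD, Matrix.diagonal_transpose, Matrix.mul_diagonal, Matrix.diagonal_mul]
  have hDA : ∀ t, (D t)ᵀ * (Rᵀ * A * R) * D t = Rᵀ * A * R := by
    intro t
    ext p q
    rw [hDentry]
    by_cases hp0 : p = i₀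
    · subst hp0
      by_cases hq0 : q = p
      · subst hq0; rw [hM00]; ring
      · by_cases hq1 : q = i₁
        · subst hq1
          rw [hM01, hlamt]
          simp only [if_pos rfl, if_neg hi₁ne, ite_true]
          field_simp
        · rw [hM0q q (fun h => hq0 h) hq1]; ring
    · by_cases hp1 : p = i₁
      · subst hp1
        by_cases hq0 : q = i₀
        · subst hq0
          rw [hM10, hlamt]
          simp only [if_pos rfl, if_neg hi₁ne, ite_true]
          field_simp
        · by_cases hq1 : q = p
          · subst hq1; rw [hM11]; ring
          · rw [hM1q q hq0 (fun h => hq1 h)]; ring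
      · have hlp : lamt t p = 1 := by rw [hlamt]; simp only [if_neg hp0, if_neg hp1]
        by_cases hq0 : q = i₀
        · subst hq0; rw [hMq0 p hp0 hp1]; ring
        · by_cases hq1 : q = i₁
          · subst hq1; rw [hMq1 p hp0 hp1]; ring
          · have hlq : lamt t q = 1 := by rw [hlamt]; simp only [if_neg hq0, if_neg hq1]
            rw [hlp, hlq]; ring
  set Cinf : Matrix (Fin m) (Fin m) ℝ := Matrix.of
    (fun p q => if p = i₀ ∨ q = i₀ ∨ p = i₁ ∨ q = i₁ then 0 else (Rᵀ * C * R) p q) with hCinf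
  have hinv : Tendsto (fun t : ℕ => ((t : ℝ) + 1)⁻¹) atTop (𝓝 0) := by
    simpa [one_div] using tendsto_one_div_add_atTop_nhds_zero_nat (𝕜 := ℝ)
  have hDC : ∀ p q, Tendsto (fun t => ((D t)ᵀ * (Rᵀ * C * R) * D t) p q) atTop
      (𝓝 (Cinf p q)) := by
    intro p q
    have hrw : ∀ t, ((D t)ᵀ * (Rᵀ * C * R) * D t) p q
        = lamt t p * (Rᵀ * C * R) p q * lamt t q := fun t => hDentry t _ p q
    by_cases hp0 : p = i₀
    · have hz : (Rᵀ * C * R) p q = 0 := by rw [hp0]; exact hC0q q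
      have hz2 : Cinf p q = 0 := by rw [hCinf, Matrix.of_apply, if_pos (Or.inl hp0)]
      rw [hz2]
      refine Tendsto.congr (fun t => ?_) tendsto_const_nhds
      rw [hrw t, hz]; ring
    · by_cases hq0 : q = i₀
      · have hz : (Rᵀ * C * R) p q = 0 := by rw [hq0]; exact hCq0 p
        have hz2 : Cinf p q = 0 := by rw [hCinf, Matrix.of_apply, if_pos (Or.inr (Or.inl hq0))]
        rw [hz2]
        refine Tendsto.congr (fun t => ?_) tendsto_const_nhds
        rw [hrw t, hz]; ring
      · by_cases hp1 : p = i₁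
        · have hlp : ∀ t : ℕ, lamt t p = ((t : ℝ) + 1)⁻¹ := by
            intro t; rw [hlamt]; simp [hp1, hi₁ne]
          have hz2 : Cinf p q = 0 := by
            rw [hCinf, Matrix.of_apply, if_pos (Or.inr (Or.inr (Or.inl hp1)))]
          rw [hz2]
          by_cases hq1 : q = i₁
          · have hlq : ∀ t : ℕ, lamt t q = ((t : ℝ) + 1)⁻¹ := by
              intro t; rw [hlamt]; simp [hq1, hi₁ne]
            have := (hinv.mul_const ((Rᵀ * C * R) p q)).mul hinv
            rw [zero_mul, mul_zero] at this
            refine this.congr fun t => ?_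
            rw [hrw t, hlp t, hlq t]
          · have hlq : ∀ t : ℕ, lamt t q = 1 := by
              intro t; rw [hlamt]; simp only [if_neg hq0, if_neg hq1]
            have := hinv.mul_const ((Rᵀ * C * R) p q)
            rw [zero_mul] at this
            refine this.congr fun t => ?_
            rw [hrw t, hlp t, hlq t, mul_one]
        · have hlp : ∀ t : ℕ, lamt t p = 1 := by
            intro t; rw [hlamt]; simp only [if_neg hp0, if_neg hp1]
          by_cases hq1 : q = i₁
          · have hlq : ∀ t : ℕ, lamt t q = ((t : ℝ) + 1)⁻¹ := by
              intro t; rw [hlamt]; simp [hq1, hi₁ne]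
            have hz2 : Cinf p q = 0 := by
              rw [hCinf, Matrix.of_apply, if_pos (Or.inr (Or.inr (Or.inr hq1)))]
            rw [hz2]
            have := hinv.const_mul ((Rᵀ * C * R) p q)
            rw [mul_zero] at this
            refine this.congr fun t => ?_
            rw [hrw t, hlp t, hlq t]; ring
          · have hlq : ∀ t : ℕ, lamt t q = 1 := by
              intro t; rw [hlamt]; simp only [if_neg hq0, if_neg hq1]
            have hz2 : Cinf p q = (Rᵀ * C * R) p q := by
              rw [hCinf, Matrix.of_apply, if_neg (by tauto)]
            rw [hz2]
            refine Tendsto.congr (fun t => ?_) tendsto_const_nhds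
            rw [hrw t, hlp t, hlq t, one_mul, mul_one]
  -- Cinf is symmetric with kernel vector e_{i₀} + e_{i₁} non-isotropic for M'
  have hCinfsymm : Cinf.IsSymm := by
    rw [Matrix.IsSymm]
    ext p q
    rw [Matrix.transpose_apply, hCinf, Matrix.of_apply, Matrix.of_apply]
    by_cases hcond : p = i₀ ∨ q = i₀ ∨ p = i₁ ∨ q = i₁
    · rw [if_pos (by tauto), if_pos hcond]
    · rw [if_neg (by tauto), if_neg hcond, ← hCsymm'.apply]
  set wvec : Fin m → ℝ := (Pi.single i₀ 1 : Fin m → ℝ) + (Pi.single i₁ 1 : Fin m → ℝ) with hwvec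
  have hCinfw : Cinf *ᵥ wvec = 0 := by
    funext i
    rw [hwvec, Matrix.mulVec_add, Matrix.mulVec_single, Matrix.mulVec_single]
    have z1 : Cinf i i₀ = 0 := by rw [hCinf, Matrix.of_apply, if_pos (by tauto)]
    have z2 : Cinf i i₁ = 0 := by rw [hCinf, Matrix.of_apply, if_pos (by tauto)]
    simp [z1, z2]
  have hwMw : wvec ⬝ᵥ ((Rᵀ * A * R) *ᵥ wvec) ≠ 0 := by
    have : wvec ⬝ᵥ ((Rᵀ * A * R) *ᵥ wvec) = 2 := by
      rw [hwvec, Matrix.mulVec_add, Matrix.mulVec_single, Matrix.mulVec_single]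
      rw [add_dotProduct, single_dotProduct, single_dotProduct]
      simp only [Pi.add_apply, Pi.smul_apply, Matrix.col_apply, op_smul_eq_mul, hM00, hM01, hM10, hM11]
      norm_num
    rw [this]
    norm_num
  have h1 : TWSD ![Rᵀ * A * R, Cinf] := case1 _ _ hMsymm hCinfsymm wvec hCinfw hwMw
  have h2 : TWSD ![Rᵀ * A * R, Rᵀ * C * R] :=
    limit_trick (Rᵀ * A * R) (Rᵀ * C * R) Cinf D hdetD hDA hDC h1
  apply congr_transfer ![A, C] R hRunit
  have hfam : (fun i => Rᵀ * ![A, C] i * R) = ![Rᵀ * A * R, Rᵀ * C * R] := by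
    funext i
    fin_cases i <;> simp
  rw [hfam]
  exact h2

end TWSDProof

open TWSDProof in
theorem stmt_9 (m : ℕ) (A B : Matrix (Fin m) (Fin m) ℝ)
    (hA : A.IsSymm) (hB : B.IsSymm) (hAdet : IsUnit A.det)
    (h : ∃ lam : ℝ, (A⁻¹ * B).charpoly.IsRoot lam) :
    TWSD ![A, B] := by
  obtain ⟨lam, hlam⟩ := h
  -- the matrix C = B - lam • A is singular and symmetric
  set C : Matrix (Fin m) (Fin m) ℝ := B - lam • A with hCdef
  have hCsymm : C.IsSymm := by
    rw [Matrix.IsSymm] at *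
    rw [hCdef, Matrix.transpose_sub, Matrix.transpose_smul, hA, hB]
  have hCdet : C.det = 0 := by
    have h1 : ((A⁻¹ * B).charpoly).eval lam = 0 := hlam
    have h2 : (lam • (1 : Matrix (Fin m) (Fin m) ℝ) - A⁻¹ * B).det = 0 := by
      rw [Matrix.charpoly] at h1
      have heq : lam • (1 : Matrix (Fin m) (Fin m) ℝ) - A⁻¹ * B
          = (Polynomial.evalRingHom lam).mapMatrix (Matrix.charmatrix (A⁻¹ * B)) := by
        ext i j
        rw [RingHom.mapMatrix_apply, Matrix.map_apply]
        by_cases hij : i = j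
        · subst hij
          simp [Matrix.charmatrix_apply_eq, Matrix.smul_apply, Matrix.one_apply]
        · simp [Matrix.charmatrix_apply_ne _ _ _ hij, Matrix.smul_apply, Matrix.one_apply,
            hij, Matrix.sub_apply]
      rw [heq, ← RingHom.map_det]
      exact h1
    have h3 : (A * (lam • (1 : Matrix (Fin m) (Fin m) ℝ) - A⁻¹ * B)).det = 0 := by
      rw [Matrix.det_mul, h2, mul_zero]
    have h4 : A * (lam • (1 : Matrix (Fin m) (Fin m) ℝ) - A⁻¹ * B) = lam • A - B := by
      rw [Matrix.mul_sub, Matrix.mul_smul, mul_one, ← Matrix.mul_assoc,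
        Matrix.mul_nonsing_inv A hAdet, one_mul]
    rw [h4] at h3
    have : C = -(lam • A - B) := by rw [hCdef]; abel
    rw [this, Matrix.det_neg, h3, mul_zero]
  -- get a kernel vector
  rcases le_or_gt m 1 with hm | hm
  · exact twsd_of_le_one hm _
  obtain ⟨v, hv0, hCv⟩ := (Matrix.exists_mulVec_eq_zero_iff (M := C)).2 hCdet
  have hAC : TWSD ![A, C] := by
    by_cases hiso : v ⬝ᵥ (A *ᵥ v) = 0
    · exact case2 A C hA hCsymm hAdet v hv0 hCv hiso
    · exact case1 A C hA hCsymm v hCv hiso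
  -- transfer from ![A, C] to ![A, B]
  obtain ⟨P, hPdet, hP⟩ := hAC
  refine ⟨P, hPdet, fun i p q hpq => ?_⟩
  fin_cases i
  · simpa using hP 0 p q hpq
  · have hB' : B = C + lam • A := by rw [hCdef]; abel
    have key : ∀ k, ((P k)ᵀ * B * P k) p q
        = ((P k)ᵀ * C * P k) p q + lam * (((P k)ᵀ * A * P k) p q) := by
      intro k
      rw [hB', Matrix.mul_add, Matrix.add_mul, Matrix.add_apply]
      congr 1
      rw [Matrix.mul_smul, Matrix.smul_mul, Matrix.smul_apply, smul_eq_mul]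
    simp only [Matrix.cons_val_one, Matrix.head_cons]
    rw [show (0:ℝ) = 0 + lam * 0 by ring]
    exact Tendsto.congr (fun k => (key k).symm)
      ((hP 1 p q hpq).add (((hP 0 p q hpq).const_mul lam)))
end

section
/- Let A_1, …, A_L be real symmetric m×m matrices with A_1 invertible. Suppose there is a sequence (P_k) of matrices in ℝ^{m×m} with det P_k = 1 for all k such that every off-diagonal entry of P_kᵀ A_i P_k tends to 0 as k → ∞ for each 1 ≤ i ≤ L, and such that P_kᵀ A_1 P_k is diagonal for every k and uniformly bounded in k (in Frobenius norm). Then the family {A_1,…,A_L} is TWSD-B. -/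
open Matrix Filter Topology Polynomial
set_option maxHeartbeats 1000000

-- Aux 1: entrywise tendsto implies matrix tendsto
lemma aux_tendsto_matrix {m : ℕ} {F : ℕ → Matrix (Fin m) (Fin m) ℝ}
    {G : Matrix (Fin m) (Fin m) ℝ}
    (h : ∀ p q, Tendsto (fun k => F k p q) atTop (𝓝 (G p q))) :
    Tendsto F atTop (𝓝 G) := by
  apply tendsto_pi_nhds.2
  intro p
  rw [tendsto_pi_nhds]
  exact h p

-- Aux 2: eval of charpoly
lemma aux_charpoly_eval {m : ℕ} (M : Matrix (Fin m) (Fin m) ℝ) (t : ℝ) :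
    M.charpoly.eval t = (t • (1 : Matrix (Fin m) (Fin m) ℝ) - M).det := by
  rw [Matrix.charpoly, eval_det, Matrix.matPolyEquiv_charmatrix]
  congr 1
  rw [Polynomial.eval_sub, Polynomial.eval_X, Polynomial.eval_C]
  congr 1
  rw [Matrix.scalar_apply]
  ext p q
  by_cases h : p = q <;> simp [h, Matrix.one_apply, Matrix.diagonal]

lemma aux_det_sub_smul {m : ℕ} (M : Matrix (Fin m) (Fin m) ℝ) (t : ℝ) :
    (M - t • (1 : Matrix (Fin m) (Fin m) ℝ)).det = (-1) ^ m * M.charpoly.eval t := by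
  rw [aux_charpoly_eval, show M - t • (1 : Matrix (Fin m) (Fin m) ℝ)
      = -(t • (1 : Matrix (Fin m) (Fin m) ℝ) - M) by rw [neg_sub], Matrix.det_neg, Fintype.card_fin]

-- Aux 3: lower bound for monic polynomial
lemma aux_monic_lower {p : Polynomial ℝ} (hp : p.Monic) {m : ℕ} (hdeg : p.natDegree = m)
    (hm : 0 < m) :
    ∃ T : ℝ, 1 ≤ T ∧ ∀ t : ℝ, T ≤ |t| → |t| ^ m / 2 ≤ |p.eval t| := by
  set S := ∑ i ∈ Finset.range m, |p.coeff i| with hS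
  have hS0 : 0 ≤ S := Finset.sum_nonneg fun _ _ => abs_nonneg _
  refine ⟨max 1 (2 * S), le_max_left _ _, fun t ht => ?_⟩
  have h1t : (1 : ℝ) ≤ |t| := le_trans (le_max_left _ _) ht
  have h2S : 2 * S ≤ |t| := le_trans (le_max_right _ _) ht
  have heval : p.eval t = (∑ i ∈ Finset.range m, p.coeff i * t ^ i) + t ^ m := by
    have h := Polynomial.eval_eq_sum_range (p := p) t
    rw [hdeg, Finset.sum_range_succ] at h
    rw [h, show p.coeff m = 1 by rw [← hdeg]; exact hp.coeff_natDegree, one_mul]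
  have hbound : |∑ i ∈ Finset.range m, p.coeff i * t ^ i| ≤ S * |t| ^ (m - 1) := by
    calc |∑ i ∈ Finset.range m, p.coeff i * t ^ i|
        ≤ ∑ i ∈ Finset.range m, |p.coeff i * t ^ i| := Finset.abs_sum_le_sum_abs _ _
      _ ≤ ∑ i ∈ Finset.range m, |p.coeff i| * |t| ^ (m - 1) := by
          refine Finset.sum_le_sum fun i hi => ?_
          rw [abs_mul, abs_pow]
          refine mul_le_mul_of_nonneg_left ?_ (abs_nonneg _)
          exact pow_le_pow_right₀ h1t (by have := Finset.mem_range.1 hi; omega)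
      _ = S * |t| ^ (m - 1) := by rw [← Finset.sum_mul]
  have habs : |t| ^ m = |t| * |t| ^ (m - 1) := by
    conv_lhs => rw [show m = (m - 1) + 1 by omega]
    rw [pow_succ]
    ring
  have h3 : |t| ^ m - S * |t| ^ (m - 1) ≤ |p.eval t| := by
    have h4 : |t ^ m| ≤ |p.eval t| + |∑ i ∈ Finset.range m, p.coeff i * t ^ i| := by
      calc |t ^ m| = |p.eval t - ∑ i ∈ Finset.range m, p.coeff i * t ^ i| := by
            rw [heval, add_sub_cancel_left]
        _ ≤ |p.eval t| + |∑ i ∈ Finset.range m, p.coeff i * t ^ i| := abs_sub _ _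
    rw [abs_pow] at h4
    linarith
  have hpow : (0:ℝ) ≤ |t| ^ (m - 1) := pow_nonneg (abs_nonneg _) _
  nlinarith [mul_le_mul_of_nonneg_right h2S hpow]

theorem stmt_10 (m L : ℕ) (hL : 0 < L)
    (A : Fin L → Matrix (Fin m) (Fin m) ℝ) (hA : ∀ i, (A i).IsSymm)
    (hA1 : IsUnit (A ⟨0, hL⟩).det)
    (P : ℕ → Matrix (Fin m) (Fin m) ℝ) (hdet : ∀ k, (P k).det = 1)
    (hoff : ∀ i, ∀ p q : Fin m, p ≠ q →
      Tendsto (fun k => ((P k)ᵀ * A i * P k) p q) atTop (𝓝 (0 : ℝ)))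
    (hdiag : ∀ k, ((P k)ᵀ * A ⟨0, hL⟩ * P k).IsDiag)
    (hbdd : ∃ M : ℝ, ∀ k, ∀ p q : Fin m, |((P k)ᵀ * A ⟨0, hL⟩ * P k) p q| ≤ M) :
    TWSDB A := by
  classical
  rcases Nat.eq_zero_or_pos m with hm | hm
  · subst hm
    refine ⟨P, hdet, fun _ => 0, fun i => Matrix.isDiag_zero, fun i => ?_⟩
    have h0 : (fun k => (P k)ᵀ * A i * P k) = fun _ => (0 : Matrix (Fin 0) (Fin 0) ℝ) := by
      funext k; ext p q; exact p.elim0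
    rw [h0]; exact tendsto_const_nhds
  haveI : Nonempty (Fin m) := ⟨⟨0, hm⟩⟩
  set A1 := A ⟨0, hL⟩ with hA1def
  obtain ⟨M0, hM0⟩ := hbdd
  set M1 := max M0 1 with hM1def
  have hM1pos : (0:ℝ) < M1 := lt_of_lt_of_le one_pos (le_max_right _ _)
  set d : ℕ → Fin m → ℝ := fun k => Matrix.diag ((P k)ᵀ * A1 * P k) with hd
  have hdk : ∀ k, (P k)ᵀ * A1 * P k = Matrix.diagonal (d k) :=
    fun k => ((hdiag k).diagonal_diag).symm
  have hdetd : ∀ k, ∏ p, d k p = A1.det := by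
    intro k
    have h1 : ((P k)ᵀ * A1 * P k).det = A1.det := by
      rw [Matrix.det_mul, Matrix.det_mul, Matrix.det_transpose, hdet k]; ring
    rw [hdk k, Matrix.det_diagonal] at h1
    exact h1
  have hdetA1 : (0:ℝ) < |A1.det| := abs_pos.2 hA1.ne_zero
  set δ := |A1.det| / M1 ^ (m - 1) with hδdef
  have hδpos : 0 < δ := div_pos hdetA1 (pow_pos hM1pos _)
  have hdle : ∀ k p, |d k p| ≤ M1 := fun k p => le_trans (hM0 k p p) (le_max_left _ _)
  have hdge : ∀ k p, δ ≤ |d k p| := by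
    intro k p
    have h1 : |A1.det| = |d k p| * ∏ q ∈ Finset.univ.erase p, |d k q| := by
      rw [← hdetd k, Finset.abs_prod, ← Finset.mul_prod_erase _ _ (Finset.mem_univ p)]
    have h2 : ∏ q ∈ Finset.univ.erase p, |d k q| ≤ M1 ^ (m - 1) := by
      have h3 : ∏ q ∈ Finset.univ.erase p, |d k q| ≤ ∏ _q ∈ Finset.univ.erase p, M1 :=
        Finset.prod_le_prod (fun q _ => abs_nonneg _) (fun q _ => hdle k q)
      rwa [Finset.prod_const, Finset.card_erase_of_mem (Finset.mem_univ p), Finset.card_univ,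
        Fintype.card_fin] at h3
    rw [hδdef, div_le_iff₀ (pow_pos hM1pos _)]
    calc |A1.det| = |d k p| * ∏ q ∈ Finset.univ.erase p, |d k q| := h1
      _ ≤ |d k p| * M1 ^ (m - 1) := mul_le_mul_of_nonneg_left h2 (abs_nonneg _)
  have hdne : ∀ k p, d k p ≠ 0 := by
    intro k p h
    have := hdge k p
    rw [h, abs_zero] at this
    linarith
  have hPunit : ∀ k, IsUnit (P k).det := fun k => by rw [hdet k]; exact isUnit_one
  set C : Fin L → Matrix (Fin m) (Fin m) ℝ := fun i => A1⁻¹ * A i with hC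
  set G : Fin L → ℕ → Matrix (Fin m) (Fin m) ℝ := fun i k => (P k)⁻¹ * C i * P k with hG
  have hBG : ∀ i k, (P k)ᵀ * A i * P k = Matrix.diagonal (d k) * G i k := by
    intro i k
    rw [← hdk k, hG, hC]
    simp only [Matrix.mul_assoc]
    rw [← Matrix.mul_assoc (P k) ((P k)⁻¹), Matrix.mul_nonsing_inv _ (hPunit k), Matrix.one_mul,
      ← Matrix.mul_assoc A1 A1⁻¹, Matrix.mul_nonsing_inv _ hA1, Matrix.one_mul]
  have hBGentry : ∀ i k p q, ((P k)ᵀ * A i * P k) p q = d k p * G i k p q := by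
    intro i k p q; rw [hBG i k, Matrix.diagonal_mul]
  have hGentry : ∀ i k p q, G i k p q = ((P k)ᵀ * A i * P k) p q / d k p := by
    intro i k p q
    rw [hBGentry i k p q]
    field_simp [hdne k p]
  have hGoff : ∀ i p q, p ≠ q → Tendsto (fun k => G i k p q) atTop (𝓝 0) := by
    intro i p q hpq
    rw [tendsto_zero_iff_abs_tendsto_zero]
    refine squeeze_zero (fun k => abs_nonneg _)
      (g := fun k => |((P k)ᵀ * A i * P k) p q| / δ) (fun k => ?_) ?_
    · show |G i k p q| ≤ _
      rw [hGentry i k p q, abs_div]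
      exact div_le_div_of_nonneg_left (abs_nonneg _) hδpos (hdge k p)
    · have h1 := (hoff i p q hpq).abs
      rw [abs_zero] at h1
      simpa using h1.div_const δ
  have hGdet : ∀ i k (t : ℝ), (G i k - t • 1).det = (C i - t • 1).det := by
    intro i k t
    have h1 : G i k - t • (1 : Matrix (Fin m) (Fin m) ℝ)
        = (P k)⁻¹ * (C i - t • 1) * P k := by
      rw [Matrix.mul_sub, Matrix.sub_mul]
      congr 1
      rw [Matrix.mul_smul, Matrix.smul_mul, Matrix.mul_one,
        Matrix.nonsing_inv_mul _ (hPunit k)]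
    rw [h1, Matrix.det_mul, Matrix.det_mul, Matrix.det_nonsing_inv, hdet k]
    simp
  -- core claim: diagonal entries of G are bounded
  have hGdiagbdd : ∀ i, ∃ N : ℝ, ∀ k p, |G i k p p| ≤ N := by
    intro i
    by_contra hcon
    push_neg at hcon
    set R : ℕ → ℝ := fun k => Finset.univ.sup' Finset.univ_nonempty
      (fun p => |G i k p p|) with hR
    have hRge : ∀ k p, |G i k p p| ≤ R k := by
      intro k p
      rw [hR]
      exact Finset.le_sup' (fun p => |G i k p p|) (Finset.mem_univ p)
    have hRmem : ∀ k, ∃ p, R k = |G i k p p| := by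
      intro k
      obtain ⟨p, _, hp⟩ := Finset.exists_mem_eq_sup' Finset.univ_nonempty
        (fun p => |G i k p p|)
      exact ⟨p, hp⟩
    have hfreq : ∀ n : ℕ, ∃ᶠ k in atTop, (n : ℝ) < R k := by
      intro n
      rw [Filter.frequently_atTop]
      intro K
      by_contra hcon2
      push_neg at hcon2
      obtain ⟨k, p, hk⟩ := hcon ((n : ℝ) + ∑ j ∈ Finset.range K, |R j|)
      have hSnn : (0:ℝ) ≤ ∑ j ∈ Finset.range K, |R j| :=
        Finset.sum_nonneg fun _ _ => abs_nonneg _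
      have hle : R k ≤ (n : ℝ) + ∑ j ∈ Finset.range K, |R j| := by
        rcases le_or_gt K k with h | h
        · have := hcon2 k h
          linarith
        · have h5 : |R k| ≤ ∑ j ∈ Finset.range K, |R j| :=
            Finset.single_le_sum (f := fun j => |R j|) (fun _ _ => abs_nonneg _) (Finset.mem_range.2 h)
          have := le_abs_self (R k)
          linarith
      exact absurd (lt_of_lt_of_le hk (hRge k p)) (not_lt.2 hle)
    obtain ⟨φ, hφ, hφR⟩ := Filter.extraction_forall_of_frequently hfreq
    have hRpos : ∀ n, 0 < R (φ (n + 1)) := fun n =>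
      lt_of_le_of_lt (by positivity) (hφR (n + 1))
    have hR1 : ∀ n, 1 ≤ R (φ (n + 1)) := by
      intro n
      have h6 : (1 : ℝ) ≤ ((n + 1 : ℕ) : ℝ) := by exact_mod_cast Nat.succ_le_succ (Nat.zero_le n)
      exact le_trans h6 (le_of_lt (hφR (n + 1)))
    have hcoff : ∀ p q, ∃ c, ∀ k, p ≠ q → |G i k p q| ≤ c := by
      intro p q
      by_cases hpq : p = q
      · exact ⟨0, fun k h => absurd hpq h⟩
      · have h7 := (hGoff i p q hpq).abs
        obtain ⟨c, hc⟩ := h7.bddAbove_range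
        exact ⟨c, fun k _ => hc (Set.mem_range_self k)⟩
    choose c hc using hcoff
    set c1 := Finset.univ.sup' Finset.univ_nonempty
      (fun p => Finset.univ.sup' Finset.univ_nonempty (fun q => c p q)) with hc1
    have hc1le : ∀ p q, c p q ≤ c1 := by
      intro p q
      rw [hc1]
      exact le_trans (Finset.le_sup' (fun q => c p q) (Finset.mem_univ q))
        (Finset.le_sup' (fun p => Finset.univ.sup' Finset.univ_nonempty (fun q => c p q))
          (Finset.mem_univ p))
    set CB := max 1 (max c1 0) with hCB
    set u : ℕ → (Fin m → Fin m → ℝ) := fun j p q => G i (φ (j + 1)) p q / R (φ (j + 1)) with hu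
    have hud : ∀ j p, |u j p p| ≤ 1 := by
      intro j p
      show |G i (φ (j + 1)) p p / R (φ (j + 1))| ≤ 1
      rw [abs_div, abs_of_pos (hRpos j)]
      exact div_le_one_of_le₀ (hRge _ p) (le_of_lt (hRpos j))
    have huoff : ∀ j p q, p ≠ q → |u j p q| ≤ |G i (φ (j + 1)) p q| := by
      intro j p q hpq
      show |G i (φ (j + 1)) p q / R (φ (j + 1))| ≤ _
      rw [abs_div, abs_of_pos (hRpos j)]
      exact div_le_self (abs_nonneg _) (hR1 j)
    have hubdd : ∀ j p q, |u j p q| ≤ CB := by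
      intro j p q
      by_cases hpq : p = q
      · subst hpq; exact le_trans (hud j p) (le_max_left _ _)
      · refine le_trans (le_trans (huoff j p q hpq) (hc p q _ hpq)) ?_
        exact le_trans (le_trans (hc1le p q) (le_max_left _ _)) (le_max_right _ _)
    have hcomp : IsCompact (Set.univ.pi fun _ : Fin m =>
        Set.univ.pi fun _ : Fin m => Set.Icc (-CB) CB) :=
      isCompact_univ_pi fun _ => isCompact_univ_pi fun _ => isCompact_Icc
    have humem : ∀ j, u j ∈ (Set.univ.pi fun _ : Fin m =>
        Set.univ.pi fun _ : Fin m => Set.Icc (-CB) CB) := by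
      intro j
      refine Set.mem_univ_pi.2 fun p => Set.mem_univ_pi.2 fun q => Set.mem_Icc.2 ?_
      exact abs_le.1 (hubdd j p q)
    obtain ⟨Δ, hΔmem, ψ, hψ, hψt⟩ := hcomp.tendsto_subseq humem
    have hΔentry : ∀ p q, Tendsto (fun j => u (ψ j) p q) atTop (𝓝 (Δ p q)) := by
      intro p q
      have h1 := (tendsto_pi_nhds.1 hψt) p
      exact (tendsto_pi_nhds.1 h1) q
    have hidx : StrictMono (fun j => φ (ψ j + 1)) :=
      fun a b hab => hφ (Nat.succ_lt_succ (hψ hab))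
    have hΔoff : ∀ p q, p ≠ q → Δ p q = 0 := by
      intro p q hpq
      have h2 : Tendsto (fun j => G i (φ (ψ j + 1)) p q) atTop (𝓝 0) :=
        (hGoff i p q hpq).comp hidx.tendsto_atTop
      have h3 : Tendsto (fun j => u (ψ j) p q) atTop (𝓝 0) := by
        rw [tendsto_zero_iff_abs_tendsto_zero]
        refine squeeze_zero (fun _ => abs_nonneg _) (fun j => huoff (ψ j) p q hpq) ?_
        simpa using h2.abs
      exact tendsto_nhds_unique (hΔentry p q) h3
    have hatt : ∀ j, ∃ p, |u (ψ j) p p| = 1 := by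
      intro j
      obtain ⟨p, hp⟩ := hRmem (φ (ψ j + 1))
      refine ⟨p, ?_⟩
      show |G i (φ (ψ j + 1)) p p / R (φ (ψ j + 1))| = 1
      rw [abs_div, abs_of_pos (hRpos (ψ j)), ← hp, div_self (ne_of_gt (hRpos (ψ j)))]
    have hpstar : ∃ p, ∃ᶠ j in atTop, |u (ψ j) p p| = 1 := by
      by_contra hcon3
      push_neg at hcon3
      obtain ⟨j, hj⟩ := (Filter.eventually_all.2 hcon3).exists
      obtain ⟨p, hp⟩ := hatt j
      exact hj p hp
    obtain ⟨p0, hp0⟩ := hpstar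
    set z := Δ p0 p0 with hz
    have hzabs : |z| = 1 := by
      have h4 : Tendsto (fun j => |u (ψ j) p0 p0|) atTop (𝓝 |z|) := (hΔentry p0 p0).abs
      have h5 : |z| ∈ closure ({1} : Set ℝ) :=
        mem_closure_of_frequently_of_tendsto
          (hp0.mono fun j hj => Set.mem_singleton_iff.2 hj) h4
      rwa [closure_singleton, Set.mem_singleton_iff] at h5
    set Δm : Matrix (Fin m) (Fin m) ℝ := Matrix.of Δ with hΔm
    set F : ℕ → Matrix (Fin m) (Fin m) ℝ := fun j => Matrix.of (u (ψ j)) with hF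
    have hFt : Tendsto F atTop (𝓝 Δm) := aux_tendsto_matrix (fun p q => hΔentry p q)
    have hdett : Tendsto (fun j => (F j - z • 1).det) atTop (𝓝 ((Δm - z • 1).det)) := by
      have hcont : Continuous fun X : Matrix (Fin m) (Fin m) ℝ => (X - z • 1).det :=
        (continuous_id.sub continuous_const).matrix_det
      exact (hcont.tendsto _).comp hFt
    have hΔdet : (Δm - z • 1).det = 0 := by
      have h6 : Δm - z • (1 : Matrix (Fin m) (Fin m) ℝ)
          = Matrix.diagonal (fun p => Δ p p - z) := by
        ext p q
        by_cases hpq : p = q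
        · subst hpq
          simp [hΔm, Matrix.one_apply_eq]
        · simp [hΔm, Matrix.diagonal_apply_ne _ hpq, Matrix.one_apply_ne hpq, hΔoff p q hpq]
      rw [h6, Matrix.det_diagonal]
      exact Finset.prod_eq_zero (Finset.mem_univ p0) (sub_self z)
    obtain ⟨T, hT1, hT⟩ := aux_monic_lower (Matrix.charpoly_monic (C i))
      (by rw [Matrix.charpoly_natDegree_eq_dim, Fintype.card_fin]) hm
    have hRtend : Tendsto (fun j => R (φ (ψ j + 1))) atTop atTop := by
      have h7 : Tendsto (fun j => ψ j + 1) atTop atTop :=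
        tendsto_atTop_mono (fun j => Nat.le_succ (ψ j)) hψ.tendsto_atTop
      have h7' : Tendsto (fun j => ((ψ j + 1 : ℕ) : ℝ)) atTop atTop :=
        tendsto_natCast_atTop_atTop.comp h7
      exact tendsto_atTop_mono (fun j => le_of_lt (hφR (ψ j + 1))) h7'
    have hev : ∀ᶠ j in atTop, T ≤ R (φ (ψ j + 1)) := hRtend.eventually_ge_atTop T
    have hhalf : ∀ᶠ j in atTop, 1 / 2 ≤ |(F j - z • 1).det| := by
      filter_upwards [hev] with j hj
      set Rj := R (φ (ψ j + 1)) with hRj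
      have hRjpos : 0 < Rj := hRpos (ψ j)
      have hFj : F j - z • (1 : Matrix (Fin m) (Fin m) ℝ)
          = Rj⁻¹ • (G i (φ (ψ j + 1)) - (z * Rj) • 1) := by
        ext p q
        simp only [Matrix.sub_apply, Matrix.smul_apply, smul_eq_mul, hF, Matrix.of_apply, hu]
        by_cases hpq : p = q
        · subst hpq
          rw [Matrix.one_apply_eq, ← hRj]
          field_simp
        · rw [Matrix.one_apply_ne hpq, ← hRj]
          field_simp
      have h9 : (F j - z • (1 : Matrix (Fin m) (Fin m) ℝ)).det
          = Rj⁻¹ ^ m * ((-1) ^ m * ((C i).charpoly.eval (z * Rj))) := by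
        rw [hFj, Matrix.det_smul, Fintype.card_fin, hGdet i _ (z * Rj), aux_det_sub_smul]
      rw [h9, abs_mul, abs_mul, abs_pow, abs_pow, abs_inv, abs_of_pos hRjpos,
        abs_neg, abs_one, one_pow, one_mul]
      have harg : T ≤ |z * Rj| := by
        rw [abs_mul, hzabs, one_mul, abs_of_pos hRjpos]; exact hj
      have h8 := hT (z * Rj) harg
      rw [abs_mul, hzabs, one_mul, abs_of_pos hRjpos] at h8
      have h10 : Rj⁻¹ ^ m * (Rj ^ m / 2) ≤ Rj⁻¹ ^ m * |(C i).charpoly.eval (z * Rj)| :=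
        mul_le_mul_of_nonneg_left h8 (by positivity)
      have h11 : Rj⁻¹ ^ m * Rj ^ m = 1 := by
        rw [← mul_pow, inv_mul_cancel₀ (ne_of_gt hRjpos), one_pow]
      have h12 : Rj⁻¹ ^ m * (Rj ^ m / 2) = 1 / 2 := by
        rw [← mul_div_assoc, h11]
      linarith
    have hfin : (1:ℝ) / 2 ≤ |(Δm - z • 1).det| := ge_of_tendsto hdett.abs hhalf
    rw [hΔdet, abs_zero] at hfin
    linarith
  -- assemble
  have hboundall : ∀ (i : Fin L) (p q : Fin m), ∃ c, ∀ k,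
      |((P k)ᵀ * A i * P k) p q| ≤ c := by
    intro i p q
    by_cases hpq : p = q
    · subst hpq
      obtain ⟨Ni, hNi⟩ := hGdiagbdd i
      refine ⟨M1 * Ni, fun k => ?_⟩
      rw [hBGentry i k p p, abs_mul]
      exact mul_le_mul (hdle k p) (hNi k p) (abs_nonneg _) (le_of_lt hM1pos)
    · have h7 := (hoff i p q hpq).abs
      obtain ⟨c, hc⟩ := h7.bddAbove_range
      exact ⟨c, fun k => hc (Set.mem_range_self k)⟩
  choose NB hNB using hboundall
  set Ffam : ℕ → (Fin L → Fin m → Fin m → ℝ) :=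
    fun k i p q => ((P k)ᵀ * A i * P k) p q with hFfam
  have hcomp2 : IsCompact (Set.univ.pi fun i : Fin L => Set.univ.pi fun p : Fin m =>
      Set.univ.pi fun q : Fin m => Set.Icc (-(NB i p q)) (NB i p q)) :=
    isCompact_univ_pi fun _ => isCompact_univ_pi fun _ => isCompact_univ_pi fun _ =>
      isCompact_Icc
  have hmem2 : ∀ k, Ffam k ∈ (Set.univ.pi fun i : Fin L => Set.univ.pi fun p : Fin m =>
      Set.univ.pi fun q : Fin m => Set.Icc (-(NB i p q)) (NB i p q)) := by
    intro k
    refine Set.mem_univ_pi.2 fun i => Set.mem_univ_pi.2 fun p => Set.mem_univ_pi.2 fun q =>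
      Set.mem_Icc.2 ?_
    exact abs_le.1 (hNB i p q k)
  obtain ⟨Λ, _, σ, hσ, hσt⟩ := hcomp2.tendsto_subseq hmem2
  have hΛentry : ∀ i p q, Tendsto (fun k => ((P (σ k))ᵀ * A i * P (σ k)) p q)
      atTop (𝓝 (Λ i p q)) := by
    intro i p q
    have h1 := tendsto_pi_nhds.1 hσt i
    have h2 := tendsto_pi_nhds.1 h1 p
    exact tendsto_pi_nhds.1 h2 q
  refine ⟨fun k => P (σ k), fun k => hdet _, fun i => Matrix.of (Λ i), fun i p q hpq => ?_,
    fun i => ?_⟩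
  · exact tendsto_nhds_unique (hΛentry i p q) ((hoff i p q hpq).comp hσ.tendsto_atTop)
  · exact aux_tendsto_matrix (fun p q => hΛentry i p q)
end

section
/- Let A and B be real symmetric 2×2 matrices. Then the pair {A, B} is TWSD-B if and only if it is TWSD. -/
open Matrix Filter Topology

private lemma tendsto_matrix_of_entries' {f : ℕ → Matrix (Fin 2) (Fin 2) ℝ}
    {D : Matrix (Fin 2) (Fin 2) ℝ}
    (h : ∀ p q, Tendsto (fun k => f k p q) atTop (𝓝 (D p q))) :
    Tendsto f atTop (𝓝 D) :=
  tendsto_pi_nhds.2 fun p => tendsto_pi_nhds.2 fun q => h p q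

private lemma exists_abs_bound' {x : ℕ → ℝ} {L : ℝ} (h : Tendsto x atTop (𝓝 L)) :
    ∃ C : ℝ, ∀ k, |x k| ≤ C := by
  obtain ⟨C, hC⟩ := h.abs.bddAbove_range
  exact ⟨C, fun k => hC (Set.mem_range_self k)⟩

private lemma abs_le_of_mul_add' {x y C0 C1 : ℝ} (h0 : 0 ≤ C0) (h1 : 0 ≤ C1)
    (hxy : |x * y| ≤ C0) (hs : |x + y| ≤ C1) : |x| ≤ C0 + C1 + 1 := by
  rcases le_or_gt |x| 1 with h | h
  · linarith
  · have e1 : x * (x + y) ≤ |x| * C1 := by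
      calc x * (x + y) ≤ |x * (x + y)| := le_abs_self _
        _ = |x| * |x + y| := abs_mul _ _
        _ ≤ |x| * C1 := mul_le_mul_of_nonneg_left hs (abs_nonneg x)
    have e2 : -(x * y) ≤ C0 := (neg_le_abs _).trans hxy
    have e4 : |x| * |x| = x * x := abs_mul_abs_self x
    nlinarith

private lemma key_ineq' {x y p q C : ℝ} (hC : 1 ≤ C)
    (h1 : |p * x| ≤ C) (h2 : |q * x| ≤ C) :
    (max 1 (max |p| |q|) / max 1 (max |x| |y|)) * |x| ≤ C := by
  have hρ1 : (1:ℝ) ≤ max 1 (max |x| |y|) := le_max_left _ _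
  have hρ0 : (0:ℝ) < max 1 (max |x| |y|) := by linarith
  rw [div_mul_eq_mul_div, div_le_iff₀ hρ0]
  rw [max_mul_of_nonneg _ _ (abs_nonneg x), max_mul_of_nonneg _ _ (abs_nonneg x)]
  have hx : |x| ≤ max 1 (max |x| |y|) := le_trans (le_max_left _ _) (le_max_right _ _)
  refine max_le ?_ (max_le ?_ ?_)
  · nlinarith
  · calc |p| * |x| = |p * x| := (abs_mul p x).symm
      _ ≤ C := h1
      _ ≤ C * max 1 (max |x| |y|) := by nlinarith
  · calc |q| * |x| = |q * x| := (abs_mul q x).symm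
      _ ≤ C := h2
      _ ≤ C * max 1 (max |x| |y|) := by nlinarith

private lemma key_subseq' (MA MB : ℕ → Matrix (Fin 2) (Fin 2) ℝ) (α β γ : ℝ)
    (hoa : ∀ p q : Fin 2, p ≠ q → Tendsto (fun k => MA k p q) atTop (𝓝 0))
    (hob : ∀ p q : Fin 2, p ≠ q → Tendsto (fun k => MB k p q) atTop (𝓝 0))
    (had : Tendsto (fun k => MA k 0 0 * MA k 1 1) atTop (𝓝 α))
    (hef : Tendsto (fun k => MB k 0 0 * MB k 1 1) atTop (𝓝 β))
    (hfd : Tendsto (fun k => MA k 0 0 * MB k 1 1 + MA k 1 1 * MB k 0 0) atTop (𝓝 γ)) :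
    ∃ (φ : ℕ → ℕ) (t : ℕ → ℝ) (LA LB : Matrix (Fin 2) (Fin 2) ℝ),
      StrictMono φ ∧ (∀ k, 0 < t k) ∧ LA.IsDiag ∧ LB.IsDiag ∧
      Tendsto (fun k => Matrix.diagonal ![t k, (t k)⁻¹] * MA (φ k)
        * Matrix.diagonal ![t k, (t k)⁻¹]) atTop (𝓝 LA) ∧
      Tendsto (fun k => Matrix.diagonal ![t k, (t k)⁻¹] * MB (φ k)
        * Matrix.diagonal ![t k, (t k)⁻¹]) atTop (𝓝 LB) := by
  set a : ℕ → ℝ := fun k => MA k 0 0 with hadef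
  set d : ℕ → ℝ := fun k => MA k 1 1 with hddef
  set e : ℕ → ℝ := fun k => MB k 0 0 with hedef
  set f : ℕ → ℝ := fun k => MB k 1 1 with hfdef
  obtain ⟨C1, hC1⟩ := exists_abs_bound' had
  obtain ⟨C2, hC2⟩ := exists_abs_bound' hef
  obtain ⟨C3, hC3⟩ := exists_abs_bound' hfd
  have hC10 : 0 ≤ C1 := le_trans (abs_nonneg _) (hC1 0)
  have hC20 : 0 ≤ C2 := le_trans (abs_nonneg _) (hC2 0)
  have hC30 : 0 ≤ C3 := le_trans (abs_nonneg _) (hC3 0)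
  have haf : ∀ k, |a k * f k| ≤ C1 * C2 + C3 + 1 := by
    intro k
    refine abs_le_of_mul_add' (by positivity) hC30 ?_ (hC3 k)
    calc |a k * f k * (d k * e k)| = |a k * d k| * |e k * f k| := by
          rw [← abs_mul]; ring_nf
      _ ≤ C1 * C2 := mul_le_mul (hC1 k) (hC2 k) (abs_nonneg _) hC10
  have hde : ∀ k, |d k * e k| ≤ C1 * C2 + C3 + 1 := by
    intro k
    have h1 : |d k * e k * (a k * f k)| ≤ C1 * C2 := by
      have h0 : |d k * e k * (a k * f k)| = |a k * d k| * |e k * f k| := by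
        rw [← abs_mul]; ring_nf
      rw [h0]; exact mul_le_mul (hC1 k) (hC2 k) (abs_nonneg _) hC10
    have h2 : |d k * e k + a k * f k| ≤ C3 := by
      rw [add_comm]; exact hC3 k
    exact abs_le_of_mul_add' (by positivity) hC30 h1 h2
  set C := max 1 (max (max C1 C2) (C1 * C2 + C3 + 1)) with hCdef
  have hC : (1:ℝ) ≤ C := le_max_left _ _
  have hC1C : C1 ≤ C := (le_max_left C1 C2).trans ((le_max_left _ _).trans (le_max_right 1 _))
  have hC2C : C2 ≤ C := (le_max_right C1 C2).trans ((le_max_left _ _).trans (le_max_right 1 _))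
  have hCXC : C1 * C2 + C3 + 1 ≤ C := (le_max_right _ _).trans (le_max_right 1 _)
  have hbad : ∀ k, |a k * d k| ≤ C := fun k => (hC1 k).trans hC1C
  have hbef : ∀ k, |e k * f k| ≤ C := fun k => (hC2 k).trans hC2C
  have hbaf : ∀ k, |a k * f k| ≤ C := fun k => (haf k).trans hCXC
  have hbde : ∀ k, |d k * e k| ≤ C := fun k => (hde k).trans hCXC
  set ρ : ℕ → ℝ := fun k => max 1 (max |a k| |e k|) with hρdef
  set σ : ℕ → ℝ := fun k => max 1 (max |d k| |f k|) with hσdef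
  have hρpos : ∀ k, (0:ℝ) < ρ k := fun k => lt_of_lt_of_le one_pos (le_max_left _ _)
  have hσpos : ∀ k, (0:ℝ) < σ k := fun k => lt_of_lt_of_le one_pos (le_max_left _ _)
  set s : ℕ → ℝ := fun k => σ k / ρ k with hsdef
  have hspos : ∀ k, 0 < s k := fun k => div_pos (hσpos k) (hρpos k)
  have hb1 : ∀ k, |s k * a k| ≤ C := by
    intro k
    rw [abs_mul, abs_of_pos (hspos k)]
    exact key_ineq' hC (by rw [mul_comm]; exact hbad k) (by rw [mul_comm]; exact hbaf k)
  have hb2 : ∀ k, |s k * e k| ≤ C := by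
    intro k
    rw [abs_mul, abs_of_pos (hspos k)]
    have := key_ineq' (x := e k) (y := a k) (p := d k) (q := f k) hC
      (hbde k) (by rw [mul_comm]; exact hbef k)
    rwa [max_comm |e k| |a k|] at this
  have hb3 : ∀ k, |d k / s k| ≤ C := by
    intro k
    rw [abs_div, abs_of_pos (hspos k)]
    have h0 : |d k| / s k = ρ k / σ k * |d k| := by
      rw [hsdef]
      field_simp
    rw [h0]
    exact key_ineq' (x := d k) (y := f k) (p := a k) (q := e k) hC (hbad k)
      (by rw [mul_comm]; exact hbde k)
  have hb4 : ∀ k, |f k / s k| ≤ C := by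
    intro k
    rw [abs_div, abs_of_pos (hspos k)]
    have h0 : |f k| / s k = ρ k / σ k * |f k| := by
      rw [hsdef]
      field_simp
    rw [h0]
    have := key_ineq' (x := f k) (y := d k) (p := a k) (q := e k) hC
      (hbaf k) (hbef k)
    rwa [max_comm |f k| |d k|] at this
  set w : ℕ → (Fin 4 → ℝ) := fun k => ![s k * a k, d k / s k, s k * e k, f k / s k] with hwdef
  have hwmem : ∀ k, w k ∈ Metric.closedBall (0 : Fin 4 → ℝ) C := by
    intro k
    rw [mem_closedBall_zero_iff, pi_norm_le_iff_of_nonneg (by linarith)]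
    intro i
    fin_cases i
    · exact (Real.norm_eq_abs _).le.trans_eq' rfl |>.trans (hb1 k)
    · show ‖d k / s k‖ ≤ C
      rw [Real.norm_eq_abs]; exact hb3 k
    · show ‖s k * e k‖ ≤ C
      rw [Real.norm_eq_abs]; exact hb2 k
    · show ‖f k / s k‖ ≤ C
      rw [Real.norm_eq_abs]; exact hb4 k
  obtain ⟨L, -, φ, hφ, hwφ⟩ := tendsto_subseq_of_bounded Metric.isBounded_closedBall hwmem
  have hLc : ∀ i, Tendsto (fun k => w (φ k) i) atTop (𝓝 (L i)) := fun i => tendsto_pi_nhds.1 hwφ i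
  set t : ℕ → ℝ := fun k => Real.sqrt (s (φ k)) with htdef
  have htpos : ∀ k, 0 < t k := fun k => Real.sqrt_pos.2 (hspos _)
  have htt : ∀ k, t k * t k = s (φ k) := fun k => Real.mul_self_sqrt (hspos _).le
  refine ⟨φ, t, Matrix.diagonal ![L 0, L 1], Matrix.diagonal ![L 2, L 3], hφ, htpos,
    Matrix.isDiag_diagonal _, Matrix.isDiag_diagonal _, ?_, ?_⟩
  · apply tendsto_matrix_of_entries'
    intro p q
    fin_cases p <;> fin_cases q
    · have key : ∀ k, (Matrix.diagonal ![t k, (t k)⁻¹] * MA (φ k)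
          * Matrix.diagonal ![t k, (t k)⁻¹]) 0 0 = w (φ k) 0 := by
        intro k
        rw [Matrix.mul_diagonal, Matrix.diagonal_mul]
        show t k * MA (φ k) 0 0 * t k = s (φ k) * a (φ k)
        rw [← htt k]; ring
      exact Tendsto.congr (fun k => (key k).symm) (hLc 0)
    · have key : ∀ k, (Matrix.diagonal ![t k, (t k)⁻¹] * MA (φ k)
          * Matrix.diagonal ![t k, (t k)⁻¹]) 0 1 = MA (φ k) 0 1 := by
        intro k
        rw [Matrix.mul_diagonal, Matrix.diagonal_mul]
        show t k * MA (φ k) 0 1 * (t k)⁻¹ = MA (φ k) 0 1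
        rw [mul_comm (t k) (MA (φ k) 0 1), mul_assoc, mul_inv_cancel₀ (htpos k).ne', mul_one]
      have h0 : Tendsto (fun k => MA (φ k) 0 1) atTop (𝓝 0) :=
        (hoa 0 1 (by decide)).comp hφ.tendsto_atTop
      exact Tendsto.congr (fun k => (key k).symm) h0
    · have key : ∀ k, (Matrix.diagonal ![t k, (t k)⁻¹] * MA (φ k)
          * Matrix.diagonal ![t k, (t k)⁻¹]) 1 0 = MA (φ k) 1 0 := by
        intro k
        rw [Matrix.mul_diagonal, Matrix.diagonal_mul]
        show (t k)⁻¹ * MA (φ k) 1 0 * t k = MA (φ k) 1 0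
        rw [mul_comm ((t k)⁻¹) (MA (φ k) 1 0), mul_assoc, inv_mul_cancel₀ (htpos k).ne', mul_one]
      have h0 : Tendsto (fun k => MA (φ k) 1 0) atTop (𝓝 0) :=
        (hoa 1 0 (by decide)).comp hφ.tendsto_atTop
      exact Tendsto.congr (fun k => (key k).symm) h0
    · have key : ∀ k, (Matrix.diagonal ![t k, (t k)⁻¹] * MA (φ k)
          * Matrix.diagonal ![t k, (t k)⁻¹]) 1 1 = w (φ k) 1 := by
        intro k
        rw [Matrix.mul_diagonal, Matrix.diagonal_mul]
        show (t k)⁻¹ * MA (φ k) 1 1 * (t k)⁻¹ = d (φ k) / s (φ k)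
        rw [← htt k]
        field_simp [(htpos k).ne']
        rfl
      exact Tendsto.congr (fun k => (key k).symm) (hLc 1)
  · apply tendsto_matrix_of_entries'
    intro p q
    fin_cases p <;> fin_cases q
    · have key : ∀ k, (Matrix.diagonal ![t k, (t k)⁻¹] * MB (φ k)
          * Matrix.diagonal ![t k, (t k)⁻¹]) 0 0 = w (φ k) 2 := by
        intro k
        rw [Matrix.mul_diagonal, Matrix.diagonal_mul]
        show t k * MB (φ k) 0 0 * t k = s (φ k) * e (φ k)
        rw [← htt k]; ring
      exact Tendsto.congr (fun k => (key k).symm) (hLc 2)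
    · have key : ∀ k, (Matrix.diagonal ![t k, (t k)⁻¹] * MB (φ k)
          * Matrix.diagonal ![t k, (t k)⁻¹]) 0 1 = MB (φ k) 0 1 := by
        intro k
        rw [Matrix.mul_diagonal, Matrix.diagonal_mul]
        show t k * MB (φ k) 0 1 * (t k)⁻¹ = MB (φ k) 0 1
        rw [mul_comm (t k) (MB (φ k) 0 1), mul_assoc, mul_inv_cancel₀ (htpos k).ne', mul_one]
      have h0 : Tendsto (fun k => MB (φ k) 0 1) atTop (𝓝 0) :=
        (hob 0 1 (by decide)).comp hφ.tendsto_atTop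
      exact Tendsto.congr (fun k => (key k).symm) h0
    · have key : ∀ k, (Matrix.diagonal ![t k, (t k)⁻¹] * MB (φ k)
          * Matrix.diagonal ![t k, (t k)⁻¹]) 1 0 = MB (φ k) 1 0 := by
        intro k
        rw [Matrix.mul_diagonal, Matrix.diagonal_mul]
        show (t k)⁻¹ * MB (φ k) 1 0 * t k = MB (φ k) 1 0
        rw [mul_comm ((t k)⁻¹) (MB (φ k) 1 0), mul_assoc, inv_mul_cancel₀ (htpos k).ne', mul_one]
      have h0 : Tendsto (fun k => MB (φ k) 1 0) atTop (𝓝 0) :=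
        (hob 1 0 (by decide)).comp hφ.tendsto_atTop
      exact Tendsto.congr (fun k => (key k).symm) h0
    · have key : ∀ k, (Matrix.diagonal ![t k, (t k)⁻¹] * MB (φ k)
          * Matrix.diagonal ![t k, (t k)⁻¹]) 1 1 = w (φ k) 3 := by
        intro k
        rw [Matrix.mul_diagonal, Matrix.diagonal_mul]
        show (t k)⁻¹ * MB (φ k) 1 1 * (t k)⁻¹ = f (φ k) / s (φ k)
        rw [← htt k]
        field_simp [(htpos k).ne']
        rfl
      exact Tendsto.congr (fun k => (key k).symm) (hLc 3)

theorem stmt_11 (A B : Matrix (Fin 2) (Fin 2) ℝ)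
    (hA : A.IsSymm) (hB : B.IsSymm) :
    TWSDB ![A, B] ↔ TWSD ![A, B] := by
  constructor
  · rintro ⟨P, hdet, D, hdiag, hconv⟩
    refine ⟨P, hdet, fun i p q hpq => ?_⟩
    have h := tendsto_pi_nhds.1 (tendsto_pi_nhds.1 (hconv i) p) q
    rwa [(hdiag i) hpq] at h
  · rintro ⟨P, hdet, hoff⟩
    have hoffA : ∀ p q : Fin 2, p ≠ q →
        Tendsto (fun k => ((P k)ᵀ * A * P k) p q) atTop (𝓝 (0:ℝ)) := by
      intro p q h; simpa using hoff 0 p q h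
    have hoffB : ∀ p q : Fin 2, p ≠ q →
        Tendsto (fun k => ((P k)ᵀ * B * P k) p q) atTop (𝓝 (0:ℝ)) := by
      intro p q h; simpa using hoff 1 p q h
    have hdM : ∀ k, ((P k)ᵀ * A * P k).det = A.det := by
      intro k; simp [Matrix.det_mul, Matrix.det_transpose, hdet k]
    have hdN : ∀ k, ((P k)ᵀ * B * P k).det = B.det := by
      intro k; simp [Matrix.det_mul, Matrix.det_transpose, hdet k]
    have hdMN : ∀ k, (((P k)ᵀ * A * P k) + ((P k)ᵀ * B * P k)).det = (A + B).det := by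
      intro k
      have h1 : ((P k)ᵀ * A * P k) + ((P k)ᵀ * B * P k) = (P k)ᵀ * (A + B) * P k := by
        rw [Matrix.mul_add, Matrix.add_mul]
      rw [h1]
      simp [Matrix.det_mul, Matrix.det_transpose, hdet k]
    have d01 : (0 : Fin 2) ≠ 1 := by decide
    have d10 : (1 : Fin 2) ≠ 0 := by decide
    have had : Tendsto (fun k => ((P k)ᵀ * A * P k) 0 0 * ((P k)ᵀ * A * P k) 1 1)
        atTop (𝓝 A.det) := by
      have h1 : ∀ k, ((P k)ᵀ * A * P k) 0 0 * ((P k)ᵀ * A * P k) 1 1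
          = A.det + ((P k)ᵀ * A * P k) 0 1 * ((P k)ᵀ * A * P k) 1 0 := by
        intro k
        have h2 := hdM k
        rw [Matrix.det_fin_two] at h2
        linarith
      simp only [h1]
      have h3 := (tendsto_const_nhds : Tendsto (fun _ : ℕ => A.det) atTop (𝓝 A.det)).add
        ((hoffA 0 1 d01).mul (hoffA 1 0 d10))
      simpa using h3
    have hef : Tendsto (fun k => ((P k)ᵀ * B * P k) 0 0 * ((P k)ᵀ * B * P k) 1 1)
        atTop (𝓝 B.det) := by
      have h1 : ∀ k, ((P k)ᵀ * B * P k) 0 0 * ((P k)ᵀ * B * P k) 1 1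
          = B.det + ((P k)ᵀ * B * P k) 0 1 * ((P k)ᵀ * B * P k) 1 0 := by
        intro k
        have h2 := hdN k
        rw [Matrix.det_fin_two] at h2
        linarith
      simp only [h1]
      have h3 := (tendsto_const_nhds : Tendsto (fun _ : ℕ => B.det) atTop (𝓝 B.det)).add
        ((hoffB 0 1 d01).mul (hoffB 1 0 d10))
      simpa using h3
    have hfd : Tendsto (fun k => ((P k)ᵀ * A * P k) 0 0 * ((P k)ᵀ * B * P k) 1 1
        + ((P k)ᵀ * A * P k) 1 1 * ((P k)ᵀ * B * P k) 0 0) atTop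
        (𝓝 ((A + B).det - A.det - B.det)) := by
      have h1 : ∀ k, ((P k)ᵀ * A * P k) 0 0 * ((P k)ᵀ * B * P k) 1 1
          + ((P k)ᵀ * A * P k) 1 1 * ((P k)ᵀ * B * P k) 0 0
          = (A + B).det - ((P k)ᵀ * A * P k) 0 0 * ((P k)ᵀ * A * P k) 1 1
            - ((P k)ᵀ * B * P k) 0 0 * ((P k)ᵀ * B * P k) 1 1
            + (((P k)ᵀ * A * P k) 0 1 + ((P k)ᵀ * B * P k) 0 1)
              * (((P k)ᵀ * A * P k) 1 0 + ((P k)ᵀ * B * P k) 1 0) := by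
        intro k
        have h2 := hdMN k
        rw [Matrix.det_fin_two] at h2
        simp only [Matrix.add_apply] at h2
        linear_combination h2
      simp only [h1]
      have h3 := (((tendsto_const_nhds :
          Tendsto (fun _ : ℕ => (A + B).det) atTop (𝓝 (A + B).det)).sub had).sub hef).add
        (((hoffA 0 1 d01).add (hoffB 0 1 d01)).mul ((hoffA 1 0 d10).add (hoffB 1 0 d10)))
      simpa using h3
    obtain ⟨φ, t, LA, LB, hφ, htpos, hLAd, hLBd, hTA, hTB⟩ :=
      key_subseq' (fun k => (P k)ᵀ * A * P k) (fun k => (P k)ᵀ * B * P k)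
        A.det B.det ((A + B).det - A.det - B.det) hoffA hoffB had hef hfd
    refine ⟨fun k => P (φ k) * Matrix.diagonal ![t k, (t k)⁻¹], ?_, ![LA, LB], ?_, ?_⟩
    · intro k
      rw [Matrix.det_mul, hdet, one_mul, Matrix.det_diagonal, Fin.prod_univ_two]
      show t k * (t k)⁻¹ = 1
      exact mul_inv_cancel₀ (htpos k).ne'
    · intro i
      fin_cases i
      · exact hLAd
      · exact hLBd
    · intro i
      have heqA : (fun k => (P (φ k) * Matrix.diagonal ![t k, (t k)⁻¹])ᵀ * A
            * (P (φ k) * Matrix.diagonal ![t k, (t k)⁻¹]))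
          = fun k => Matrix.diagonal ![t k, (t k)⁻¹] * ((P (φ k))ᵀ * A * P (φ k))
            * Matrix.diagonal ![t k, (t k)⁻¹] := by
        funext k
        simp only [Matrix.transpose_mul, Matrix.diagonal_transpose, Matrix.mul_assoc]
      have heqB : (fun k => (P (φ k) * Matrix.diagonal ![t k, (t k)⁻¹])ᵀ * B
            * (P (φ k) * Matrix.diagonal ![t k, (t k)⁻¹]))
          = fun k => Matrix.diagonal ![t k, (t k)⁻¹] * ((P (φ k))ᵀ * B * P (φ k))
            * Matrix.diagonal ![t k, (t k)⁻¹] := by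
        funext k
        simp only [Matrix.transpose_mul, Matrix.diagonal_transpose, Matrix.mul_assoc]
      fin_cases i
      · show Tendsto _ atTop (𝓝 LA)
        apply Tendsto.congr _ hTA
        intro k
        show Matrix.diagonal ![t k, (t k)⁻¹] * ((P (φ k))ᵀ * A * P (φ k))
              * Matrix.diagonal ![t k, (t k)⁻¹]
            = (P (φ k) * Matrix.diagonal ![t k, (t k)⁻¹])ᵀ * A
              * (P (φ k) * Matrix.diagonal ![t k, (t k)⁻¹])
        simp only [Matrix.transpose_mul, Matrix.diagonal_transpose, Matrix.mul_assoc]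
      · show Tendsto _ atTop (𝓝 LB)
        apply Tendsto.congr _ hTB
        intro k
        show Matrix.diagonal ![t k, (t k)⁻¹] * ((P (φ k))ᵀ * B * P (φ k))
              * Matrix.diagonal ![t k, (t k)⁻¹]
            = (P (φ k) * Matrix.diagonal ![t k, (t k)⁻¹])ᵀ * B
              * (P (φ k) * Matrix.diagonal ![t k, (t k)⁻¹])
        simp only [Matrix.transpose_mul, Matrix.diagonal_transpose, Matrix.mul_assoc]
end

section
/- Let A_1, …, A_L be real symmetric m×m matrices. Then the family {A_1,…,A_L} is D_{m, m²(m+1)/2}-SDO: there exist P ∈ ℝ^{(m²(m+1)/2)×m} with Pᵀ P = I_m and diagonal matrices D^{(1)},…,D^{(L)} of size m²(m+1)/2 such that A_i = Pᵀ D^{(i)} P for all 1 ≤ i ≤ L. -/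
open Matrix Finset

noncomputable def sdoC (m : ℕ) : ℝ := (Real.sqrt (2 * m - 1))⁻¹

def sdoS {m : ℕ} (i j : Fin m) : ℝ := if i = j then 0 else if i < j then 1 else -1

noncomputable def sdoQ (m : ℕ) : Matrix (Fin m × Fin m) (Fin m) ℝ :=
  fun p k => sdoC m * ((if k = p.1 then 1 else 0) + sdoS p.1 p.2 * (if k = p.2 then 1 else 0))

noncomputable def sdoD {m : ℕ} (B : Matrix (Fin m) (Fin m) ℝ) (p : Fin m × Fin m) : ℝ :=
  if p.1 = p.2 then (2 * m - 1) * B p.1 p.1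
  else sdoS p.1 p.2 * ((2 * m - 1) / 2) * B p.1 p.2

lemma sdoS_self {m : ℕ} (i : Fin m) : sdoS i i = 0 := by simp [sdoS]

lemma sdoS_antisymm {m : ℕ} (i j : Fin m) : sdoS j i = - sdoS i j := by
  rcases lt_trichotomy i j with h | h | h
  · simp [sdoS, h, h.ne, h.ne', not_lt.mpr h.le]
  · simp [sdoS, h]
  · simp [sdoS, h, h.ne, h.ne', not_lt.mpr h.le]

lemma sdoS_sq {m : ℕ} (i j : Fin m) : sdoS i j ^ 2 = if i = j then 0 else 1 := by
  rcases lt_trichotomy i j with h | h | h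
  · simp [sdoS, h, h.ne, h.ne', not_lt.mpr h.le]
  · simp [sdoS, h]
  · simp [sdoS, h, h.ne, h.ne', not_lt.mpr h.le]

lemma sdoC_sq {m : ℕ} (hm : 1 ≤ m) : sdoC m ^ 2 * (2 * m - 1) = 1 := by
  have h : (0:ℝ) < 2 * m - 1 := by
    have : (1:ℝ) ≤ m := by exact_mod_cast hm
    linarith
  rw [sdoC, inv_pow, Real.sq_sqrt h.le]
  field_simp

lemma sdo_offdiag_sum {m : ℕ} (d : Fin m × Fin m → ℝ) {a b : Fin m} (hab : a ≠ b) :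
    ∑ p : Fin m × Fin m, d p * (sdoQ m p a * sdoQ m p b) =
      sdoC m ^ 2 * (d (a,b) * sdoS a b + d (b,a) * sdoS b a) := by
  rw [Fintype.sum_prod_type]
  simp only [sdoQ, mul_add, add_mul, mul_ite, ite_mul, one_mul, mul_one, zero_mul, mul_zero,
    Finset.sum_add_distrib, Finset.sum_ite_eq, Finset.sum_ite_eq', Finset.mem_univ, if_true,
    hab, if_false]
  rw [Finset.sum_comm]
  simp only [Finset.sum_add_distrib, Finset.sum_ite_eq, Finset.sum_ite_eq', Finset.mem_univ,
    if_true, hab, if_false, hab.symm, Finset.sum_const_zero]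
  ring

lemma sdo_diag_sum {m : ℕ} (d : Fin m × Fin m → ℝ) (a : Fin m) :
    ∑ p : Fin m × Fin m, d p * (sdoQ m p a * sdoQ m p a) =
      sdoC m ^ 2 * ((∑ j, d (a,j)) + ∑ i, d (i,a) * sdoS i a ^ 2) := by
  rw [Fintype.sum_prod_type]
  simp only [sdoQ, mul_add, add_mul, mul_ite, ite_mul, one_mul, mul_one, zero_mul, mul_zero,
    Finset.sum_add_distrib, Finset.sum_ite_eq, Finset.sum_ite_eq', Finset.mem_univ, if_true]
  rw [Finset.sum_comm]
  simp only [Finset.sum_add_distrib, Finset.sum_ite_eq, Finset.sum_ite_eq', Finset.mem_univ,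
    if_true, Finset.sum_const_zero, sdoS_self, mul_zero, zero_mul, add_zero, zero_add, mul_add,
    Finset.mul_sum]
  congr 1
  · exact Finset.sum_congr rfl fun x _ => by ring
  · exact Finset.sum_congr rfl fun x _ => by ring

lemma sdo_orth {m : ℕ} (a b : Fin m) :
    ∑ p : Fin m × Fin m, sdoQ m p a * sdoQ m p b = if a = b then 1 else 0 := by
  have hm : 1 ≤ m := a.pos
  rcases eq_or_ne a b with rfl | hab
  · have := sdo_diag_sum (fun _ => (1:ℝ)) a
    simp only [one_mul] at this
    rw [this]
    have h1 : ∑ j : Fin m, (1:ℝ) = m := by simp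
    have h2 : ∑ i : Fin m, sdoS i a ^ 2 = (m:ℝ) - 1 := by
      simp only [sdoS_sq]
      have he : ∀ i : Fin m, (if i = a then (0:ℝ) else 1) = 1 - (if i = a then 1 else 0) := by
        intro i; split <;> ring
      rw [Finset.sum_congr rfl fun i _ => he i, Finset.sum_sub_distrib,
        Finset.sum_const, Finset.sum_ite_eq' Finset.univ a (fun _ => (1:ℝ))]
      simp
    rw [h1, h2, if_pos rfl]
    linear_combination sdoC_sq hm
  · have := sdo_offdiag_sum (fun _ => (1:ℝ)) hab
    simp only [one_mul] at this
    rw [this, if_neg hab, sdoS_antisymm a b]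
    ring

lemma sdo_repr {m : ℕ} (B : Matrix (Fin m) (Fin m) ℝ) (hB : B.IsSymm) (a b : Fin m) :
    ∑ p : Fin m × Fin m, sdoD B p * (sdoQ m p a * sdoQ m p b) = B a b := by
  have hm : 1 ≤ m := a.pos
  have hc := sdoC_sq hm
  have hsym : ∀ i j, B j i = B i j := fun i j => by
    conv_lhs => rw [← hB]
    rfl
  rcases eq_or_ne a b with rfl | hab
  · rw [sdo_diag_sum]
    have key : (∑ j, sdoD B (a,j)) + ∑ i, sdoD B (i,a) * sdoS i a ^ 2
        = (2 * m - 1) * B a a := by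
      rw [← Finset.sum_add_distrib]
      have : ∀ j : Fin m, sdoD B (a,j) + sdoD B (j,a) * sdoS j a ^ 2
          = if a = j then (2 * m - 1) * B a a else 0 := by
        intro j
        rcases eq_or_ne a j with rfl | haj
        · simp [sdoD, sdoS_self]
        · rw [sdoD, sdoD, if_neg haj, if_neg (Ne.symm haj)]
          simp only
          rw [sdoS_sq, if_neg (Ne.symm haj), sdoS_antisymm a j, hsym a j, if_neg haj]
          ring
      rw [Finset.sum_congr rfl fun j _ => this j, Finset.sum_ite_eq]
      simp
    rw [key]
    linear_combination B a a * hc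
  · rw [sdo_offdiag_sum _ hab]
    have h1 : sdoD B (a,b) = sdoS a b * ((2 * m - 1) / 2) * B a b := by
      rw [sdoD, if_neg hab]
    have h2 : sdoD B (b,a) = sdoS b a * ((2 * m - 1) / 2) * B a b := by
      rw [sdoD, if_neg (Ne.symm hab)]
      rw [hsym a b]
    rw [h1, h2, sdoS_antisymm a b]
    have hs : sdoS a b ^ 2 = 1 := by rw [sdoS_sq, if_neg hab]
    linear_combination (sdoC m ^ 2 * (2 * (m:ℝ) - 1) * B a b) * hs + B a b * hc

lemma sdo_embed_sum {m n : ℕ} (hmn : m * m ≤ n) (g : Fin m × Fin m → ℝ) :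
    ∑ k : Fin n, (if h : (k : ℕ) < m * m then g (finProdFinEquiv.symm ⟨k, h⟩) else 0)
      = ∑ p : Fin m × Fin m, g p := by
  have hinj : Function.Injective (Fin.castLE hmn) := Fin.castLE_injective hmn
  calc ∑ k : Fin n, (if h : (k : ℕ) < m * m then g (finProdFinEquiv.symm ⟨k, h⟩) else 0)
      = ∑ k ∈ Finset.univ.map ⟨Fin.castLE hmn, hinj⟩,
          (if h : (k : ℕ) < m * m then g (finProdFinEquiv.symm ⟨k, h⟩) else 0) := by
        symm
        apply Finset.sum_subset (Finset.subset_univ _)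
        intro x _ hx
        rw [dif_neg]
        intro hlt
        exact hx (Finset.mem_map.mpr ⟨⟨x, hlt⟩, Finset.mem_univ _, rfl⟩)
    _ = ∑ k : Fin (m * m),
          (if h : ((Fin.castLE hmn k : Fin n) : ℕ) < m * m then
            g (finProdFinEquiv.symm ⟨((Fin.castLE hmn k : Fin n) : ℕ), h⟩) else 0) :=
        Finset.sum_map _ _ _
    _ = ∑ k : Fin (m * m), g (finProdFinEquiv.symm k) := by
        apply Finset.sum_congr rfl
        intro k _
        simp only [Fin.coe_castLE]
        rw [dif_pos k.isLt]
    _ = ∑ p : Fin m × Fin m, g p := Equiv.sum_comp _ _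

noncomputable def sdoP (m n : ℕ) : Matrix (Fin n) (Fin m) ℝ :=
  fun k a => if h : (k : ℕ) < m * m then sdoQ m (finProdFinEquiv.symm ⟨k, h⟩) a else 0

noncomputable def sdoDiag (n : ℕ) {m : ℕ} (B : Matrix (Fin m) (Fin m) ℝ) :
    Matrix (Fin n) (Fin n) ℝ :=
  Matrix.diagonal (fun k => if h : (k : ℕ) < m * m then sdoD B (finProdFinEquiv.symm ⟨k, h⟩) else 0)

lemma sdoP_orth {m n : ℕ} (hmn : m * m ≤ n) : (sdoP m n)ᵀ * sdoP m n = 1 := by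
  ext a b
  rw [Matrix.mul_apply, Matrix.one_apply, ← sdo_orth a b,
    ← sdo_embed_sum hmn (fun p => sdoQ m p a * sdoQ m p b)]
  apply Finset.sum_congr rfl
  intro k _
  rw [Matrix.transpose_apply]
  by_cases h : (k : ℕ) < m * m
  · simp only [sdoP, dif_pos h]
  · simp only [sdoP, dif_neg h, mul_zero]

lemma sdoP_repr {m n : ℕ} (hmn : m * m ≤ n) (B : Matrix (Fin m) (Fin m) ℝ) (hB : B.IsSymm) :
    B = (sdoP m n)ᵀ * sdoDiag n B * sdoP m n := by
  ext a b
  rw [Matrix.mul_assoc, Matrix.mul_apply, ← sdo_repr B hB a b,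
    ← sdo_embed_sum hmn (fun p => sdoD B p * (sdoQ m p a * sdoQ m p b))]
  apply Finset.sum_congr rfl
  intro k _
  rw [Matrix.transpose_apply, sdoDiag, Matrix.diagonal_mul]
  by_cases h : (k : ℕ) < m * m
  · simp only [sdoP, dif_pos h]; ring
  · simp only [sdoP, dif_neg h, mul_zero, zero_mul]

theorem stmt_13 (m L : ℕ) (A : Fin L → Matrix (Fin m) (Fin m) ℝ)
    (hA : ∀ i, (A i).IsSymm) :
    ∃ P : Matrix (Fin (m ^ 2 * (m + 1) / 2)) (Fin m) ℝ, Pᵀ * P = 1 ∧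
      ∃ D : Fin L → Matrix (Fin (m ^ 2 * (m + 1) / 2)) (Fin (m ^ 2 * (m + 1) / 2)) ℝ,
        (∀ i, (D i).IsDiag) ∧ ∀ i, A i = Pᵀ * D i * P := by
  have hmn : m * m ≤ m ^ 2 * (m + 1) / 2 := by
    rw [Nat.le_div_iff_mul_le (by norm_num)]
    have : m ^ 2 * 2 ≤ m ^ 2 * (m + 1) ∨ m = 0 := by
      rcases Nat.eq_zero_or_pos m with h | h
      · exact Or.inr h
      · exact Or.inl (Nat.mul_le_mul_left _ (by omega))
    rcases this with h | h
    · calc m * m * 2 = m ^ 2 * 2 := by ring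
        _ ≤ _ := h
    · subst h; simp
  exact ⟨sdoP m _, sdoP_orth hmn, fun i => sdoDiag _ (A i),
    fun i => Matrix.isDiag_diagonal _, fun i => sdoP_repr hmn (A i) (hA i)⟩
end
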